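/- arXiv:2012.01712 — 12 statements merged into one kernel-verified Lean document; each statement's English description precedes it below -/
import Mathlib

section
/- For every integer r ≥ 1 and every complex number s with Re(s) > 1, the family ((m_1 m_2 ⋯ m_r)^{-s}) indexed by r-tuples of positive integers with 1 ≤ m_1 < m_2 < ⋯ < m_r is summable, and its sum ζ_r(s) satisfies the identity r·ζ_r(s) = Σ_{j=1}^{r} (−1)^{j−1} ζ_{r−j}(s) ζ(js), where ζ denotes the Riemann zeta function and ζ_0(s) is interpreted as 1. -/
open Complex Finset Filter Topology

/-- The Euler–Zagier multiple zeta-function with identical arguments: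
`ζ_r(s) = Σ_{1 ≤ m_1 < m_2 < ⋯ < m_r} (m_1 m_2 ⋯ m_r)^{−s}`, the sum running over
strictly increasing `r`-tuples of positive integers.  For `r = 0` the index type is a
singleton and the empty product gives `ζ_0(s) = 1`. -/
noncomputable def zetaEZ (r : ℕ) (s : ℂ) : ℂ :=
  ∑' f : {f : Fin r → ℕ+ // StrictMono f}, (∏ i, ((f.1 i : ℕ) : ℂ)) ^ (-s)

namespace EZAux

/-- The basic summand. -/
noncomputable def aa (s : ℂ) (m : ℕ+) : ℂ := ((m : ℕ) : ℂ) ^ (-s)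

/-- The finset of positive integers `≤ n`. -/
def SS (n : ℕ) : Finset ℕ+ :=
  (Finset.range n).map ⟨fun i => ⟨i + 1, i.succ_pos⟩, fun a b h => by
    have := congrArg PNat.val h; simpa using this⟩

lemma mem_SS {n : ℕ} {m : ℕ+} : m ∈ SS n ↔ (m : ℕ) ≤ n := by
  simp only [SS, Finset.mem_map, Finset.mem_range, Function.Embedding.coeFn_mk]
  constructor
  · rintro ⟨i, hi, rfl⟩; show i + 1 ≤ n; omega
  · intro h
    refine ⟨(m : ℕ) - 1, by have := m.pos; omega, ?_⟩
    have := m.pos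
    apply PNat.coe_injective
    show (m : ℕ) - 1 + 1 = (m : ℕ)
    omega

lemma monotone_SS : Monotone SS := fun a b h =>
  fun m hm => mem_SS.mpr (le_trans (mem_SS.mp hm) h)

lemma tendsto_SS : Tendsto SS atTop atTop :=
  tendsto_atTop_finset_of_monotone monotone_SS
    (fun m => ⟨(m : ℕ), mem_SS.mpr le_rfl⟩)

lemma natCast_prod_cpow {ι : Type*} (t : Finset ι) (g : ι → ℕ) (w : ℂ) :
    ((∏ i ∈ t, g i : ℕ) : ℂ) ^ w = ∏ i ∈ t, ((g i : ℕ) : ℂ) ^ w := by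
  classical
  induction t using Finset.induction with
  | empty => simp
  | insert a t h ih =>
      rw [Finset.prod_insert h, Finset.prod_insert h, Nat.cast_mul,
        natCast_mul_natCast_cpow, ih]

end EZAux

namespace EZAux

lemma norm_aa (s : ℂ) (m : ℕ+) : ‖aa s m‖ = ((m : ℕ) : ℝ) ^ (-s.re) := by
  rw [aa, norm_natCast_cpow_of_pos m.pos, neg_re]

lemma summable_bb {s : ℂ} (hs : 1 < s.re) :
    Summable (fun m : ℕ+ => ((m : ℕ) : ℝ) ^ (-s.re)) :=
  (Real.summable_nat_rpow.mpr (by linarith)).comp_injective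
    (fun a b h => PNat.coe_injective h)

lemma summable_pi_bb {s : ℂ} (hs : 1 < s.re) (k : ℕ) :
    Summable (fun f : Fin k → ℕ+ => ∏ i, ((f i : ℕ) : ℝ) ^ (-s.re)) := by
  induction k with
  | zero => exact summable_of_finite_support (Set.toFinite _)
  | succ k ih =>
      have h2 : Summable (fun p : ℕ+ × (Fin k → ℕ+) =>
          ((p.1 : ℕ) : ℝ) ^ (-s.re) * ∏ i, ((p.2 i : ℕ) : ℝ) ^ (-s.re)) := by
        apply Summable.mul_of_nonneg (summable_bb hs) ih
        · intro m; exact Real.rpow_nonneg (Nat.cast_nonneg _) _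
        · intro f; exact Finset.prod_nonneg fun i _ => Real.rpow_nonneg (Nat.cast_nonneg _) _
      have h3 : Summable (fun f : Fin (k+1) → ℕ+ =>
          ((f 0 : ℕ) : ℝ) ^ (-s.re) * ∏ i : Fin k, ((f i.succ : ℕ) : ℝ) ^ (-s.re)) :=
        h2.comp_injective (i := fun f : Fin (k+1) → ℕ+ => (f 0, fun i : Fin k => f i.succ))
          (fun f g h => by
            funext i
            rcases Fin.eq_zero_or_eq_succ i with rfl | ⟨j, rfl⟩
            · exact congrArg Prod.fst h
            · exact congrFun (congrArg Prod.snd h) j)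
      exact h3.congr fun f =>
        (Fin.prod_univ_succ (fun i : Fin (k+1) => ((f i : ℕ) : ℝ) ^ (-s.re))).symm

end EZAux

namespace EZAux

/-- Summability of the product summand over strictly monotone tuples. -/
lemma summable_tuple {s : ℂ} (hs : 1 < s.re) (k : ℕ) :
    Summable (fun f : {f : Fin k → ℕ+ // StrictMono f} => ∏ i, aa s (f.1 i)) := by
  apply Summable.of_norm
  have h1 : Summable (fun f : Fin k → ℕ+ => ∏ i, ((f i : ℕ) : ℝ) ^ (-s.re)) :=
    summable_pi_bb hs k
  have h2 := h1.subtype {f : Fin k → ℕ+ | StrictMono f}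
  refine h2.congr fun f => ?_
  rw [norm_prod]
  exact Finset.prod_congr rfl fun i _ => (norm_aa s (f.1 i)).symm

/-- `zetaEZ` as a tsum of products of `aa`. -/
lemma zetaEZ_eq (k : ℕ) (s : ℂ) :
    zetaEZ k s = ∑' f : {f : Fin k → ℕ+ // StrictMono f}, ∏ i, aa s (f.1 i) := by
  refine tsum_congr fun f => ?_
  have : (∏ i, ((f.1 i : ℕ) : ℂ)) = ((∏ i, (f.1 i : ℕ) : ℕ) : ℂ) := by push_cast; rfl
  rw [this, natCast_prod_cpow]
  rfl

end EZAux

namespace EZAux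

/-- The strictly monotone tuple enumerating a finset of cardinality `k`. -/
noncomputable def tupleOf {k : ℕ} (A : Finset ℕ+) (h : A.card = k) :
    {f : Fin k → ℕ+ // StrictMono f} :=
  ⟨A.orderEmbOfFin h, (A.orderEmbOfFin h).strictMono⟩

lemma image_tupleOf {k : ℕ} (A : Finset ℕ+) (h : A.card = k) :
    Finset.image (tupleOf A h).1 Finset.univ = A := by
  ext x
  simp only [tupleOf, Finset.mem_image, Finset.mem_univ, true_and]
  constructor
  · rintro ⟨i, rfl⟩; exact A.orderEmbOfFin_mem h i
  · intro hx
    have : x ∈ Set.range (A.orderEmbOfFin h) := by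
      rw [Finset.range_orderEmbOfFin]; exact hx
    obtain ⟨i, hi⟩ := this
    exact ⟨i, hi⟩

/-- Finite approximations to the set of strictly monotone tuples. -/
noncomputable def TT (k n : ℕ) : Finset {f : Fin k → ℕ+ // StrictMono f} :=
  ((SS n).powersetCard k).attach.image
    (fun A => tupleOf A.1 (Finset.mem_powersetCard.mp A.2).2)

lemma mem_TT {k n : ℕ} {t : {f : Fin k → ℕ+ // StrictMono f}} :
    t ∈ TT k n ↔ ∀ i, t.1 i ∈ SS n := by
  constructor
  · intro ht i
    obtain ⟨A, -, rfl⟩ := Finset.mem_image.mp ht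
    have hA := (Finset.mem_powersetCard.mp A.2).1
    exact hA (A.1.orderEmbOfFin_mem _ i)
  · intro hval
    set A := Finset.image t.1 Finset.univ with hA
    have hcard : A.card = k := by
      rw [hA, Finset.card_image_of_injective _ t.2.injective, Finset.card_univ,
        Fintype.card_fin]
    have hsub : A ⊆ SS n := by
      intro x hx
      obtain ⟨i, -, rfl⟩ := Finset.mem_image.mp hx
      exact hval i
    have hmem : A ∈ (SS n).powersetCard k := Finset.mem_powersetCard.mpr ⟨hsub, hcard⟩
    have heq : tupleOf A hcard = t := by
      have h1 : (t.1 : Fin k → ℕ+) = A.orderEmbOfFin hcard :=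
        Finset.orderEmbOfFin_unique hcard
          (fun i => Finset.mem_image_of_mem _ (Finset.mem_univ i)) t.2
      exact Subtype.ext h1.symm
    refine Finset.mem_image.mpr ⟨⟨A, hmem⟩, Finset.mem_attach _ _, ?_⟩
    exact heq

lemma tendsto_TT (k : ℕ) : Tendsto (TT k) atTop atTop := by
  apply tendsto_atTop_finset_of_monotone
  · intro n n' hn t ht
    exact mem_TT.mpr fun i => monotone_SS hn (mem_TT.mp ht i)
  · intro t
    refine ⟨Finset.univ.sup (fun i => (t.1 i : ℕ)), mem_TT.mpr fun i => ?_⟩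
    exact mem_SS.mpr (Finset.le_sup (f := fun i => ((t.1 i : ℕ))) (Finset.mem_univ i))

lemma sum_TT (s : ℂ) (k n : ℕ) :
    ∑ t ∈ TT k n, ∏ i, aa s (t.1 i) =
      ∑ A ∈ (SS n).powersetCard k, ∏ m ∈ A, aa s m := by
  have hinj : ∀ A ∈ ((SS n).powersetCard k).attach, ∀ B ∈ ((SS n).powersetCard k).attach,
      tupleOf A.1 (Finset.mem_powersetCard.mp A.2).2 =
        tupleOf B.1 (Finset.mem_powersetCard.mp B.2).2 → A = B := by
    intro A _ B _ hAB
    have h1 := image_tupleOf A.1 (Finset.mem_powersetCard.mp A.2).2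
    have h2 := image_tupleOf B.1 (Finset.mem_powersetCard.mp B.2).2
    apply Subtype.ext
    rw [← h1, ← h2, hAB]
  rw [TT, Finset.sum_image hinj]
  rw [← Finset.sum_attach ((SS n).powersetCard k)
    (fun A => ∏ m ∈ A, aa s m)]
  refine Finset.sum_congr rfl fun A _ => ?_
  conv_rhs => rw [← image_tupleOf A.1 (Finset.mem_powersetCard.mp A.2).2]
  rw [Finset.prod_image (fun i _ j _ h =>
    (tupleOf A.1 (Finset.mem_powersetCard.mp A.2).2).2.injective h)]

end EZAux

namespace EZAux

lemma hasSum_pnat_cpow {w : ℂ} (hw : 1 < w.re) :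
    HasSum (fun m : ℕ+ => ((m : ℕ) : ℂ) ^ (-w)) (riemannZeta w) := by
  have hsum : Summable (fun m : ℕ+ => ((m : ℕ) : ℂ) ^ (-w)) := by
    apply Summable.of_norm
    refine (summable_bb hw).congr fun m => ?_
    rw [norm_natCast_cpow_of_pos m.pos, neg_re]
  have key : ∑' m : ℕ+, ((m : ℕ) : ℂ) ^ (-w) = riemannZeta w := by
    rw [zeta_eq_tsum_one_div_nat_add_one_cpow hw,
      ← Equiv.pnatEquivNat.symm.tsum_eq (fun m : ℕ+ => ((m : ℕ) : ℂ) ^ (-w))]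
    refine tsum_congr fun n => ?_
    have h1 : ((Equiv.pnatEquivNat.symm n : ℕ+) : ℕ) = n + 1 := rfl
    rw [h1, cpow_neg, one_div]
    push_cast
    rfl
  exact key ▸ hsum.hasSum

end EZAux

namespace EZAux

/-- Finite elementary symmetric sums. -/
noncomputable def EE (s : ℂ) (k n : ℕ) : ℂ :=
  ∑ A ∈ (SS n).powersetCard k, ∏ m ∈ A, aa s m

/-- Finite power sums. -/
noncomputable def PP (s : ℂ) (j n : ℕ) : ℂ := ∑ m ∈ SS n, aa s m ^ j

lemma tendsto_EE {s : ℂ} (hs : 1 < s.re) (k : ℕ) :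
    Tendsto (fun n => EE s k n) atTop (𝓝 (zetaEZ k s)) := by
  have hg : HasSum (fun f : {f : Fin k → ℕ+ // StrictMono f} => ∏ i, aa s (f.1 i))
      (zetaEZ k s) := by
    rw [zetaEZ_eq]
    exact (summable_tuple hs k).hasSum
  have := hg.comp (tendsto_TT k)
  refine this.congr fun n => ?_
  exact sum_TT s k n

lemma tendsto_PP {s : ℂ} (hs : 1 < s.re) {j : ℕ} (hj : 1 ≤ j) :
    Tendsto (fun n => PP s j n) atTop (𝓝 (riemannZeta ((j : ℂ) * s))) := by
  have hre : 1 < ((j : ℂ) * s).re := by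
    have : ((j : ℂ) * s).re = (j : ℝ) * s.re := by simp [Complex.mul_re]
    rw [this]
    have h1 : (1 : ℝ) ≤ (j : ℝ) := by exact_mod_cast hj
    nlinarith
  have hfun : (fun m : ℕ+ => ((m : ℕ) : ℂ) ^ (-((j : ℂ) * s))) =
      fun m : ℕ+ => aa s m ^ j := by
    funext m
    rw [aa, ← cpow_mul_nat]
    ring_nf
  have hg : HasSum (fun m : ℕ+ => aa s m ^ j) (riemannZeta ((j : ℂ) * s)) := by
    rw [← hfun]
    exact hasSum_pnat_cpow hre
  exact (hg.comp tendsto_SS).congr fun n => rfl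

end EZAux

namespace EZAux

lemma sum_powersetCard_attach (t : Finset ℕ+) (k : ℕ) (F : ℕ+ → ℂ) :
    ∑ B ∈ Finset.powersetCard k (Finset.univ : Finset {x // x ∈ t}),
        ∏ i ∈ B, F i.1 =
      ∑ A ∈ Finset.powersetCard k t, ∏ m ∈ A, F m := by
  rw [Finset.univ_eq_attach]
  have h1 : Finset.powersetCard k t =
      (Finset.powersetCard k t.attach).map
        (Finset.mapEmbedding (Function.Embedding.subtype _)).toEmbedding := by
    rw [← Finset.powersetCard_map, Finset.attach_map_val]
  rw [h1, Finset.sum_map]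
  refine Finset.sum_congr rfl fun B _ => ?_
  rw [show ((Finset.mapEmbedding (Function.Embedding.subtype fun x => x ∈ t)).toEmbedding B)
      = B.map (Function.Embedding.subtype fun x => x ∈ t) from rfl, Finset.prod_map]
  rfl

lemma newton_EE (s : ℂ) (k n : ℕ) :
    (k : ℂ) * EE s k n =
      (-1) ^ (k + 1) * ∑ p ∈ (Finset.HasAntidiagonal.antidiagonal k).filter (fun p => p.1 < k),
        (-1 : ℂ) ^ p.1 * EE s p.1 n * PP s p.2 n := by
  classical
  have h := congrArg (MvPolynomial.aeval (fun m : {x // x ∈ SS n} => aa s m.1))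
    (MvPolynomial.mul_esymm_eq_sum {x // x ∈ SS n} ℂ k)
  simp only [map_mul, map_sum, map_pow, map_natCast, map_neg, map_one,
    MvPolynomial.aeval_X, MvPolynomial.esymm, MvPolynomial.psum, map_prod] at h
  simp only [EE, PP]
  rw [← sum_powersetCard_attach (SS n) k (aa s)]
  rw [h]
  congr 1
  refine Finset.sum_congr rfl fun p _ => ?_
  rw [← sum_powersetCard_attach (SS n) p.1 (aa s)]
  congr 1
  rw [Finset.univ_eq_attach, ← Finset.sum_attach (SS n) (fun m => aa s m ^ p.2)]

end EZAux

namespace EZAux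

lemma sign_eq {r j : ℕ} (hj1 : 1 ≤ j) (hjr : j ≤ r) :
    (-1 : ℂ) ^ (r + 1) * (-1) ^ (r - j) = (-1) ^ (j - 1) := by
  have h : r + 1 + (r - j) = (j - 1) + 2 * (r - j + 1) := by omega
  rw [← pow_add, h, pow_add, pow_mul, neg_one_sq, one_pow, mul_one]

lemma antidiag_reindex (r : ℕ) (F : ℕ → ℕ → ℂ) :
    ∑ p ∈ (Finset.HasAntidiagonal.antidiagonal r).filter (fun p => p.1 < r), F p.1 p.2 =
      ∑ j ∈ Finset.Icc 1 r, F (r - j) j := by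
  refine Finset.sum_bij' (fun p _ => p.2) (fun j _ => (r - j, j)) ?_ ?_ ?_ ?_ ?_
  · intro p hp
    have h1 := Finset.mem_filter.mp hp
    have h2 := Finset.HasAntidiagonal.mem_antidiagonal.mp h1.1
    have h3 := h1.2
    show p.2 ∈ Finset.Icc 1 r
    exact Finset.mem_Icc.mpr ⟨by omega, by omega⟩
  · intro j hj
    have h := Finset.mem_Icc.mp hj
    show (r - j, j) ∈ (Finset.HasAntidiagonal.antidiagonal r).filter (fun p => p.1 < r)
    refine Finset.mem_filter.mpr ⟨Finset.HasAntidiagonal.mem_antidiagonal.mpr (by omega), by omega⟩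
  · intro p hp
    have h1 := Finset.mem_filter.mp hp
    have h2 := Finset.HasAntidiagonal.mem_antidiagonal.mp h1.1
    show (r - p.2, p.2) = p
    have : r - p.2 = p.1 := by omega
    rw [this]
  · intro j hj
    rfl
  · intro p hp
    have h1 := Finset.mem_filter.mp hp
    have h2 := Finset.HasAntidiagonal.mem_antidiagonal.mp h1.1
    show F p.1 p.2 = F (r - p.2) p.2
    have : r - p.2 = p.1 := by omega
    rw [this]

lemma newton_EE' {r : ℕ} (hr : 1 ≤ r) (s : ℂ) (n : ℕ) :
    (r : ℂ) * EE s r n =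
      ∑ j ∈ Finset.Icc 1 r, (-1 : ℂ) ^ (j - 1) * EE s (r - j) n * PP s j n := by
  rw [newton_EE s r n, Finset.mul_sum]
  rw [antidiag_reindex r (fun i j => (-1 : ℂ) ^ (r + 1) * ((-1 : ℂ) ^ i * EE s i n * PP s j n))]
  refine Finset.sum_congr rfl fun j hj => ?_
  have h := Finset.mem_Icc.mp hj
  rw [show ((-1 : ℂ) ^ (r + 1) * ((-1 : ℂ) ^ (r - j) * EE s (r - j) n * PP s j n))
      = (-1 : ℂ) ^ (r + 1) * (-1 : ℂ) ^ (r - j) * EE s (r - j) n * PP s j n by ring,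
    sign_eq h.1 h.2]

end EZAux

theorem euler_zagier_summable_and_newton_identity (r : ℕ) (hr : 1 ≤ r) (s : ℂ)
    (hs : 1 < s.re) :
    Summable (fun f : {f : Fin r → ℕ+ // StrictMono f} =>
      (∏ i, ((f.1 i : ℕ) : ℂ)) ^ (-s)) ∧
    (r : ℂ) * zetaEZ r s =
      ∑ j ∈ Finset.Icc 1 r,
        (-1 : ℂ) ^ (j - 1) * zetaEZ (r - j) s * riemannZeta ((j : ℂ) * s) := by
  open EZAux in
  constructor
  · refine (summable_tuple hs r).congr fun f => ?_
    simp only [aa]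
    rw [← natCast_prod_cpow]
    congr 1
    push_cast
    rfl
  · have h1 : Tendsto (fun n => (r : ℂ) * EE s r n) atTop (𝓝 ((r : ℂ) * zetaEZ r s)) :=
      (tendsto_EE hs r).const_mul _
    have h2 : Tendsto (fun n => ∑ j ∈ Finset.Icc 1 r,
        (-1 : ℂ) ^ (j - 1) * EE s (r - j) n * PP s j n) atTop
        (𝓝 (∑ j ∈ Finset.Icc 1 r,
          (-1 : ℂ) ^ (j - 1) * zetaEZ (r - j) s * riemannZeta ((j : ℂ) * s))) := by
      refine tendsto_finset_sum _ fun j hj => ?_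
      have hj1 := (Finset.mem_Icc.mp hj).1
      exact (((tendsto_EE hs (r - j)).const_mul ((-1 : ℂ) ^ (j - 1))).mul
        (tendsto_PP hs hj1))
    have h3 : ∀ n, (r : ℂ) * EE s r n = ∑ j ∈ Finset.Icc 1 r,
        (-1 : ℂ) ^ (j - 1) * EE s (r - j) n * PP s j n := fun n => newton_EE' hr s n
    exact tendsto_nhds_unique h1 (h2.congr fun n => (h3 n).symm)
end

section
/- For every complex number s with Re(s) > 1, the quadruple zeta value satisfies ζ_4(s) = (1/24)·(ζ(s)^4 − 6ζ(s)^2 ζ(2s) + 3ζ(2s)^2 + 8ζ(s)ζ(3s) − 6ζ(4s)), where ζ is the Riemann zeta function. -/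
open Complex

open Finset Filter Topology

private lemma esum_insert {ι : Type*} [DecidableEq ι] (b : ι → ℂ) {a : ι} {A : Finset ι}
    (ha : a ∉ A) (k : ℕ) :
    ∑ t ∈ (insert a A).powersetCard (k + 1), ∏ i ∈ t, b i
      = (∑ t ∈ A.powersetCard (k + 1), ∏ i ∈ t, b i)
        + b a * ∑ t ∈ A.powersetCard k, ∏ i ∈ t, b i := by
  rw [Finset.powersetCard_succ_insert ha, Finset.sum_union, Finset.sum_image, Finset.mul_sum]
  · congr 1
    refine Finset.sum_congr rfl fun t ht => ?_
    exact Finset.prod_insert fun hat => ha ((Finset.mem_powersetCard.mp ht).1 hat)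
  · intro t ht u hu hins
    have hat : a ∉ t := fun h => ha ((Finset.mem_powersetCard.mp ht).1 h)
    have hau : a ∉ u := fun h => ha ((Finset.mem_powersetCard.mp hu).1 h)
    rw [← Finset.erase_insert hat, ← Finset.erase_insert hau, hins]
  · rw [Finset.disjoint_left]
    intro t ht htim
    obtain ⟨u, hu, rfl⟩ := Finset.mem_image.mp htim
    exact ha ((Finset.mem_powersetCard.mp ht).1 (Finset.mem_insert_self a u))

private lemma newton4 {ι : Type*} [DecidableEq ι] (b : ι → ℂ) (A : Finset ι) :
    (∑ t ∈ A.powersetCard 1, ∏ i ∈ t, b i) = (∑ i ∈ A, b i)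
    ∧ 2 * (∑ t ∈ A.powersetCard 2, ∏ i ∈ t, b i)
        = (∑ i ∈ A, b i) ^ 2 - (∑ i ∈ A, b i ^ 2)
    ∧ 6 * (∑ t ∈ A.powersetCard 3, ∏ i ∈ t, b i)
        = (∑ i ∈ A, b i) ^ 3 - 3 * (∑ i ∈ A, b i) * (∑ i ∈ A, b i ^ 2)
          + 2 * (∑ i ∈ A, b i ^ 3)
    ∧ 24 * (∑ t ∈ A.powersetCard 4, ∏ i ∈ t, b i)
        = (∑ i ∈ A, b i) ^ 4 - 6 * (∑ i ∈ A, b i) ^ 2 * (∑ i ∈ A, b i ^ 2)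
          + 3 * (∑ i ∈ A, b i ^ 2) ^ 2 + 8 * (∑ i ∈ A, b i) * (∑ i ∈ A, b i ^ 3)
          - 6 * (∑ i ∈ A, b i ^ 4) := by
  induction A using Finset.induction_on with
  | empty =>
    refine ⟨?_, ?_, ?_, ?_⟩ <;>
      rw [Finset.powersetCard_eq_empty.mpr (by simp)] <;> simp
  | @insert a A ha ih =>
    obtain ⟨h1, h2, h3, h4⟩ := ih
    have E1 := esum_insert b ha 0
    have E2 := esum_insert b ha 1
    have E3 := esum_insert b ha 2
    have E4 := esum_insert b ha 3
    norm_num [Finset.powersetCard_zero] at E1 E2 E3 E4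
    rw [E1, E2, E3, E4]
    simp only [Finset.sum_insert ha]
    refine ⟨by linear_combination h1, ?_, ?_, ?_⟩
    · linear_combination h2 + 2 * b a * h1
    · linear_combination h3 + 3 * b a * h2
    · linear_combination h4 + 4 * b a * h3

private lemma prod4_cpow (a b c d : ℕ) (r : ℂ) :
    ((a : ℂ) * b * c * d) ^ r = (a : ℂ) ^ r * (b : ℂ) ^ r * (c : ℂ) ^ r * (d : ℂ) ^ r := by
  have h : ∀ m n : ℕ, ((m * n : ℕ) : ℂ) ^ r = ((m : ℕ) : ℂ) ^ r * ((n : ℕ) : ℂ) ^ r := by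
    intro m n
    rw [Nat.cast_mul, ← Complex.ofReal_natCast m, ← Complex.ofReal_natCast n,
      Complex.mul_cpow_ofReal_nonneg (Nat.cast_nonneg m) (Nat.cast_nonneg n)]
  have e : ((a : ℂ) * b * c * d) = ((a * b * c * d : ℕ) : ℂ) := by push_cast; ring
  rw [e, h (a * b * c) d, h (a * b) c, h a b]

private lemma zeta_pnat (t : ℂ) (ht : 1 < t.re) :
    HasSum (fun n : ℕ+ => ((n : ℕ) : ℂ) ^ (-t)) (riemannZeta t) := by
  have hsum : Summable (fun n : ℕ => ((n : ℕ) : ℂ) ^ (-t)) := by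
    have := Complex.summable_one_div_nat_cpow.mpr ht
    simpa only [one_div, ← cpow_neg] using this
  have hz : riemannZeta t = ∑' n : ℕ, ((n : ℕ) : ℂ) ^ (-t) := by
    rw [zeta_eq_tsum_one_div_nat_cpow ht]
    exact tsum_congr fun n => by rw [cpow_neg, one_div]
  have hS : HasSum (fun n : ℕ => ((n : ℕ) : ℂ) ^ (-t)) (riemannZeta t) := hz ▸ hsum.hasSum
  have hinj : Function.Injective ((↑) : ℕ+ → ℕ) := PNat.coe_injective
  have h0 : ∀ n : ℕ, n ∉ Set.range ((↑) : ℕ+ → ℕ) → ((n : ℕ) : ℂ) ^ (-t) = 0 := by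
    intro n hn
    have hn0 : n = 0 := by
      by_contra h
      exact hn ⟨⟨n, Nat.pos_of_ne_zero h⟩, rfl⟩
    rw [hn0]
    simp only [Nat.cast_zero]
    refine zero_cpow (neg_ne_zero.mpr fun h => ?_)
    rw [h] at ht
    norm_num at ht
  exact (Function.Injective.hasSum_iff hinj h0).mpr hS

/-- The canonical equivalence between 4-element subsets of `ℕ+` and strictly monotone
4-tuples. -/
private noncomputable def quadEquiv :
    {t : Finset ℕ+ // t.card = 4} ≃ {f : Fin 4 → ℕ+ // StrictMono f} where
  toFun t := ⟨fun i => t.1.orderEmbOfFin t.2 i,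
    fun i j hij => (t.1.orderEmbOfFin t.2).strictMono hij⟩
  invFun f := ⟨Finset.image f.1 Finset.univ, by
    rw [Finset.card_image_of_injective _ f.2.injective, Finset.card_univ]; simp⟩
  left_inv t := by
    refine Subtype.ext ?_
    rw [← Finset.coe_inj, Finset.coe_image, Finset.coe_univ, Set.image_univ]
    exact Finset.range_orderEmbOfFin _ _
  right_inv f := Subtype.ext
    (Finset.orderEmbOfFin_unique _
      (fun x => Finset.mem_image_of_mem _ (Finset.mem_univ x)) f.2).symm

private lemma quadEquiv_image (t : {t : Finset ℕ+ // t.card = 4}) :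
    Finset.image (quadEquiv t).1 Finset.univ = t.1 := by
  rw [← Finset.coe_inj, Finset.coe_image, Finset.coe_univ, Set.image_univ]
  exact Finset.range_orderEmbOfFin _ _

private lemma quadEquiv_prod (b : ℕ+ → ℂ) (t : {t : Finset ℕ+ // t.card = 4}) :
    ∏ i, b ((quadEquiv t).1 i) = ∏ n ∈ t.1, b n := by
  have hpi := Finset.prod_image (f := b) (s := (Finset.univ : Finset (Fin 4)))
    (g := (quadEquiv t).1)
    (fun x _ y _ hxy => (quadEquiv t).2.injective hxy)
  rw [quadEquiv_image t] at hpi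
  exact hpi.symm

private lemma quad_summable (b : ℕ+ → ℂ) (hb : Summable fun n : ℕ+ => ‖b n‖) :
    Summable (fun t : {t : Finset ℕ+ // t.card = 4} => ∏ n ∈ t.1, b n) := by
  have n2 : Summable (fun p : ℕ+ × ℕ+ => ‖b p.1‖ * ‖b p.2‖) :=
    hb.mul_of_nonneg hb (fun _ => norm_nonneg _) (fun _ => norm_nonneg _)
  have n3 : Summable (fun p : ℕ+ × ℕ+ × ℕ+ => ‖b p.1‖ * (‖b p.2.1‖ * ‖b p.2.2‖)) :=
    Summable.mul_of_nonneg (f := fun n : ℕ+ => ‖b n‖)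
      (g := fun p : ℕ+ × ℕ+ => ‖b p.1‖ * ‖b p.2‖) hb n2
      (fun _ => norm_nonneg _) (fun _ => mul_nonneg (norm_nonneg _) (norm_nonneg _))
  have hG : Summable
      (fun p : ℕ+ × ℕ+ × ℕ+ × ℕ+ => b p.1 * (b p.2.1 * (b p.2.2.1 * b p.2.2.2))) := by
    refine summable_mul_of_summable_norm (f := b)
      (g := fun p : ℕ+ × ℕ+ × ℕ+ => b p.1 * (b p.2.1 * b p.2.2)) hb ?_
    simp only [norm_mul]
    exact n3
  have hjinj : Function.Injective
      (fun f : {f : Fin 4 → ℕ+ // StrictMono f} =>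
        ((f.1 0, f.1 1, f.1 2, f.1 3) : ℕ+ × ℕ+ × ℕ+ × ℕ+)) := by
    intro f f' hff
    simp only [Prod.mk.injEq] at hff
    obtain ⟨e0, e1, e2, e3⟩ := hff
    refine Subtype.ext (funext fun i => ?_)
    fin_cases i
    · exact e0
    · exact e1
    · exact e2
    · exact e3
  have hhsum : Summable (fun f : {f : Fin 4 → ℕ+ // StrictMono f} => ∏ i, b (f.1 i)) := by
    have h2 := hG.comp_injective hjinj
    have e : ((fun p : ℕ+ × ℕ+ × ℕ+ × ℕ+ => b p.1 * (b p.2.1 * (b p.2.2.1 * b p.2.2.2)))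
        ∘ (fun f : {f : Fin 4 → ℕ+ // StrictMono f} => (f.1 0, f.1 1, f.1 2, f.1 3)))
        = fun f : {f : Fin 4 → ℕ+ // StrictMono f} => ∏ i, b (f.1 i) := by
      funext f
      show b (f.1 0) * (b (f.1 1) * (b (f.1 2) * b (f.1 3))) = ∏ i, b (f.1 i)
      rw [Fin.prod_univ_four]
      ring
    rwa [e] at h2
  have h3 := hhsum.comp_injective quadEquiv.injective
  have e : ((fun f : {f : Fin 4 → ℕ+ // StrictMono f} => ∏ i, b (f.1 i)) ∘ quadEquiv)
      = fun t : {t : Finset ℕ+ // t.card = 4} => ∏ n ∈ t.1, b n :=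
    funext fun t => quadEquiv_prod b t
  rwa [e] at h3

private lemma quad_tendsto (b : ℕ+ → ℂ) (hb : Summable fun n : ℕ+ => ‖b n‖) :
    Tendsto (fun A : Finset ℕ+ => ∑ t ∈ A.powersetCard 4, ∏ i ∈ t, b i) atTop
      (𝓝 (∑' t : {t : Finset ℕ+ // t.card = 4}, ∏ n ∈ t.1, b n)) := by
  classical
  set S : Finset ℕ+ → Finset {t : Finset ℕ+ // t.card = 4} :=
    fun A => (A.powersetCard 4).subtype (fun t => t.card = 4) with hSdef
  have hStend : Tendsto S atTop atTop := by
    apply tendsto_atTop_finset_of_monotone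
    · intro A B hAB t ht
      rw [hSdef] at ht ⊢
      rw [Finset.mem_subtype] at ht ⊢
      exact Finset.powersetCard_mono hAB ht
    · intro T
      refine ⟨T.1, ?_⟩
      rw [hSdef, Finset.mem_subtype]
      exact Finset.mem_powersetCard.mpr ⟨Finset.Subset.refl _, T.2⟩
  have hFsum : ∀ A : Finset ℕ+,
      ∑ T ∈ S A, ∏ n ∈ T.1, b n = ∑ t ∈ A.powersetCard 4, ∏ i ∈ t, b i := by
    intro A
    rw [hSdef]
    rw [Finset.sum_subtype_eq_sum_filter (fun u => ∏ n ∈ u, b n)]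
    congr 1
    apply Finset.filter_true_of_mem
    intro t ht
    exact (Finset.mem_powersetCard.mp ht).2
  have h1 := (quad_summable b hb).hasSum.comp hStend
  simpa only [Function.comp_def, hFsum] using h1

theorem quadruple_zeta_formula (s : ℂ) (hs : 1 < s.re) :
    zetaEZ 4 s = (1 / 24) * (riemannZeta s ^ 4
      - 6 * riemannZeta s ^ 2 * riemannZeta (2 * s)
      + 3 * riemannZeta (2 * s) ^ 2
      + 8 * riemannZeta s * riemannZeta (3 * s)
      - 6 * riemannZeta (4 * s)) := by
  classical
  set b : ℕ+ → ℂ := fun n => ((n : ℕ) : ℂ) ^ (-s) with hb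
  have h1t : HasSum b (riemannZeta s) := zeta_pnat s hs
  have hPk : ∀ k : ℕ, 1 ≤ k → HasSum (fun n : ℕ+ => b n ^ k) (riemannZeta ((k : ℂ) * s)) := by
    intro k hk
    have hre : 1 < ((k : ℂ) * s).re := by
      have hre' : ((k : ℂ) * s).re = (k : ℝ) * s.re := by simp [Complex.mul_re]
      rw [hre']
      have : (1 : ℝ) ≤ (k : ℝ) := by exact_mod_cast hk
      nlinarith
    have h := zeta_pnat ((k : ℂ) * s) hre
    have e : (fun n : ℕ+ => ((n : ℕ) : ℂ) ^ (-((k : ℂ) * s))) = fun n : ℕ+ => b n ^ k := by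
      funext n
      rw [hb, show -((k : ℂ) * s) = (k : ℂ) * (-s) by ring, cpow_nat_mul]
    rwa [e] at h
  have h2t : HasSum (fun n : ℕ+ => b n ^ 2) (riemannZeta (2 * s)) := by
    have := hPk 2 (by norm_num); rwa [show ((2 : ℕ) : ℂ) = 2 by norm_num] at this
  have h3t : HasSum (fun n : ℕ+ => b n ^ 3) (riemannZeta (3 * s)) := by
    have := hPk 3 (by norm_num); rwa [show ((3 : ℕ) : ℂ) = 3 by norm_num] at this
  have h4t : HasSum (fun n : ℕ+ => b n ^ 4) (riemannZeta (4 * s)) := by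
    have := hPk 4 (by norm_num); rwa [show ((4 : ℕ) : ℂ) = 4 by norm_num] at this
  have hbn : Summable (fun n : ℕ+ => ‖b n‖) := summable_norm_iff.mpr h1t.summable
  have tendF24 : Tendsto (fun A : Finset ℕ+ => 24 * ∑ t ∈ A.powersetCard 4, ∏ i ∈ t, b i)
      atTop (𝓝 (24 * ∑' t : {t : Finset ℕ+ // t.card = 4}, ∏ n ∈ t.1, b n)) :=
    (quad_tendsto b hbn).const_mul 24
  have tendComb : Tendsto (fun A : Finset ℕ+ => 24 * ∑ t ∈ A.powersetCard 4, ∏ i ∈ t, b i)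
      atTop (𝓝 (riemannZeta s ^ 4
        - 6 * riemannZeta s ^ 2 * riemannZeta (2 * s)
        + 3 * riemannZeta (2 * s) ^ 2
        + 8 * riemannZeta s * riemannZeta (3 * s)
        - 6 * riemannZeta (4 * s))) := by
    have e : (fun A : Finset ℕ+ => 24 * ∑ t ∈ A.powersetCard 4, ∏ i ∈ t, b i)
        = fun A : Finset ℕ+ =>
          (∑ i ∈ A, b i) ^ 4 - 6 * (∑ i ∈ A, b i) ^ 2 * (∑ i ∈ A, b i ^ 2)
            + 3 * (∑ i ∈ A, b i ^ 2) ^ 2 + 8 * (∑ i ∈ A, b i) * (∑ i ∈ A, b i ^ 3)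
            - 6 * (∑ i ∈ A, b i ^ 4) := by
      funext A
      exact (newton4 b A).2.2.2
    rw [e]
    have T1 : Tendsto (fun A : Finset ℕ+ => ∑ i ∈ A, b i) atTop (𝓝 (riemannZeta s)) := h1t
    have T2 : Tendsto (fun A : Finset ℕ+ => ∑ i ∈ A, b i ^ 2) atTop
        (𝓝 (riemannZeta (2 * s))) := h2t
    have T3 : Tendsto (fun A : Finset ℕ+ => ∑ i ∈ A, b i ^ 3) atTop
        (𝓝 (riemannZeta (3 * s))) := h3t
    have T4 : Tendsto (fun A : Finset ℕ+ => ∑ i ∈ A, b i ^ 4) atTop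
        (𝓝 (riemannZeta (4 * s))) := h4t
    exact (((((T1.pow 4).sub (((T1.pow 2).const_mul 6).mul T2)).add
      ((T2.pow 2).const_mul 3)).add ((T1.const_mul 8).mul T3)).sub (T4.const_mul 6))
  have huniq : 24 * (∑' t : {t : Finset ℕ+ // t.card = 4}, ∏ n ∈ t.1, b n)
      = riemannZeta s ^ 4 - 6 * riemannZeta s ^ 2 * riemannZeta (2 * s)
        + 3 * riemannZeta (2 * s) ^ 2 + 8 * riemannZeta s * riemannZeta (3 * s)
        - 6 * riemannZeta (4 * s) := tendsto_nhds_unique tendF24 tendComb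
  have hz : zetaEZ 4 s = ∑' t : {t : Finset ℕ+ // t.card = 4}, ∏ n ∈ t.1, b n := by
    rw [zetaEZ]
    have e1 : ∀ f : {f : Fin 4 → ℕ+ // StrictMono f},
        (∏ i, ((f.1 i : ℕ) : ℂ)) ^ (-s) = ∏ i, b (f.1 i) := by
      intro f
      rw [Fin.prod_univ_four, Fin.prod_univ_four, prod4_cpow]
    rw [tsum_congr e1, ← quadEquiv.tsum_eq (fun f : {f : Fin 4 → ℕ+ // StrictMono f}
      => ∏ i, b (f.1 i))]
    exact tsum_congr fun t => quadEquiv_prod b t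
  rw [hz]
  linear_combination huniq / 24
end

section
/- Let r ≥ 1 and let s be a real number with 0 ≤ s < 1/r. Then Z_r(s) is a real number, and (−1)^r · Z_r(s) > 0; that is, Z_r(s) is positive for even r and negative for odd r. In particular Z_r(s) ≠ 0 on the interval [0, 1/r). -/
open Filter Topology Complex

/-- The meromorphic continuation of the Euler–Zagier multiple zeta-function with
identical arguments, defined recursively by Newton's identities: `Z 0 s = 1` and
`Z r s = (1/r) · Σ_{j=1}^{r} (−1)^{j−1} Z (r−j) s · ζ(js)` (here the summation index
`i = j − 1` runs over `Finset.range r`), where `ζ` is the analytically continued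
Riemann zeta function. -/
noncomputable def Z : ℕ → ℂ → ℂ
  | 0, _ => 1
  | (r + 1), s =>
      (1 / ((r : ℂ) + 1)) *
        ∑ i ∈ Finset.range (r + 1),
          (-1 : ℂ) ^ i * Z (r - i) s * riemannZeta (((i : ℂ) + 1) * s)

namespace MZVaux

/-- Coefficients of the Dirichlet eta function, as a function on `ZMod 2`. -/
noncomputable def phi : ZMod 2 → ℂ := fun j => if j = 0 then -1 else 1

lemma phi_sum : ∑ j : ZMod 2, phi j = 0 := by
  have : (Finset.univ : Finset (ZMod 2)) = {0, 1} := by decide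
  rw [this, Finset.sum_insert (by decide), Finset.sum_singleton]
  simp [phi]

/-- Terms of the (paired) alternating zeta series. -/
noncomputable def E (k : ℕ) (s : ℂ) : ℂ :=
  ((2 * k + 1 : ℕ) : ℂ) ^ (-s) - ((2 * k + 2 : ℕ) : ℂ) ^ (-s)

/-- The eta function on `re s > 0`, as an absolutely convergent series. -/
noncomputable def G (s : ℂ) : ℂ := ∑' k, E k s

lemma E_bound {ε R : ℝ} (hε : 0 < ε) {k : ℕ} (hk : R ≤ 2 * k + 1) {s : ℂ}
    (hs1 : ε ≤ s.re) (hs2 : ‖s‖ ≤ R) :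
    ‖E k s‖ ≤ 2 * R * (2 * (k : ℝ) + 1) ^ (-(1 + ε)) := by
  set a : ℝ := 2 * (k : ℝ) + 1 with ha_def
  set b : ℝ := 2 * (k : ℝ) + 2 with hb_def
  have ha1 : (1 : ℝ) ≤ a := by have := Nat.cast_nonneg (α := ℝ) k; linarith
  have ha0 : (0 : ℝ) < a := by linarith
  have hb0 : (0 : ℝ) < b := by positivity
  have hab : a ≤ b := by rw [ha_def, hb_def]; linarith
  have hR0 : 0 ≤ R := le_trans (norm_nonneg s) hs2
  have hE : E k s = ((a : ℂ)) ^ (-s) - ((b : ℂ)) ^ (-s) := by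
    unfold E; push_cast [ha_def, hb_def]; ring
  set la := Real.log a
  set lb := Real.log b
  have hla0 : 0 ≤ la := Real.log_nonneg ha1
  have hlab : la ≤ lb := Real.log_le_log ha0 hab
  have hca : ((a : ℂ)) ^ (-s) = Complex.exp ((la : ℂ) * (-s)) := by
    rw [cpow_def_of_ne_zero (by exact_mod_cast ha0.ne'), Complex.ofReal_log ha0.le]
  have hcb : ((b : ℂ)) ^ (-s) = Complex.exp ((lb : ℂ) * (-s)) := by
    rw [cpow_def_of_ne_zero (by exact_mod_cast hb0.ne'), Complex.ofReal_log hb0.le]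
  have hsplit : (la : ℂ) * (-s) = (lb : ℂ) * (-s) + ((lb - la : ℝ) : ℂ) * s := by
    push_cast; ring
  have hE2 : E k s = Complex.exp ((lb : ℂ) * (-s)) *
      (Complex.exp (((lb - la : ℝ) : ℂ) * s) - 1) := by
    rw [hE, hca, hcb, hsplit, Complex.exp_add, mul_sub, mul_one]
  -- bound on log difference
  have hdiff0 : 0 ≤ lb - la := by linarith
  have hdiff : lb - la ≤ 1 / a := by
    have h1 : lb - la = Real.log (b / a) := (Real.log_div hb0.ne' ha0.ne').symm
    have h2 : Real.log (b / a) ≤ b / a - 1 := Real.log_le_sub_one_of_pos (by positivity)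
    have h3 : b / a - 1 = 1 / a := by field_simp [hb_def, ha_def]; ring
    linarith
  -- bound on z
  have hz : ‖((lb - la : ℝ) : ℂ) * s‖ ≤ R / a := by
    rw [norm_mul, Complex.norm_real, Real.norm_of_nonneg hdiff0]
    calc (lb - la) * ‖s‖ ≤ (1 / a) * R := by
          apply mul_le_mul hdiff hs2 (norm_nonneg s) (by positivity)
      _ = R / a := by ring
  have hz1 : ‖((lb - la : ℝ) : ℂ) * s‖ ≤ 1 := by
    refine hz.trans ?_
    rw [div_le_one ha0]; exact hk
  have hexp1 : ‖Complex.exp (((lb - la : ℝ) : ℂ) * s) - 1‖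
      ≤ 2 * (R / a) := by
    calc ‖Complex.exp (((lb - la : ℝ) : ℂ) * s) - 1‖
        ≤ 2 * ‖((lb - la : ℝ) : ℂ) * s‖ := Complex.norm_exp_sub_one_le hz1
      _ ≤ 2 * (R / a) := by linarith
  have hexp2 : ‖Complex.exp ((lb : ℂ) * (-s))‖ ≤ a ^ (-ε) := by
    rw [Complex.norm_exp]
    have hre : ((lb : ℂ) * (-s)).re = lb * (-s.re) := by
      simp [Complex.re_ofReal_mul]
    rw [hre]
    rw [Real.rpow_def_of_pos ha0]
    apply Real.exp_le_exp.mpr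
    have : la * ε ≤ lb * s.re := by
      apply mul_le_mul hlab hs1 hε.le (by linarith)
    nlinarith
  have key : ‖E k s‖ ≤ a ^ (-ε) * (2 * (R / a)) := by
    rw [hE2]
    calc ‖Complex.exp ((lb : ℂ) * (-s)) * (Complex.exp (((lb - la : ℝ) : ℂ) * s) - 1)‖
        = ‖Complex.exp ((lb : ℂ) * (-s))‖ *
          ‖Complex.exp (((lb - la : ℝ) : ℂ) * s) - 1‖ := by
          rw [norm_mul]
      _ ≤ a ^ (-ε) * (2 * (R / a)) := by
          apply mul_le_mul hexp2 hexp1 (norm_nonneg _) (by positivity)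
  refine key.trans (le_of_eq ?_)
  rw [show -(1 + ε) = -ε + (-1) by ring, Real.rpow_add ha0, Real.rpow_neg_one]
  field_simp

lemma summable_u {ε : ℝ} (hε : 0 < ε) (R : ℝ) :
    Summable (fun k : ℕ => 2 * R * (2 * (k : ℝ) + 1) ^ (-(1 + ε))) := by
  apply Summable.mul_left
  have h1 : Summable (fun k : ℕ => ((k : ℝ) + 1) ^ (-(1 + ε))) := by
    have h0 : Summable (fun k : ℕ => ((k : ℝ)) ^ (-(1 + ε))) :=
      Real.summable_nat_rpow.mpr (by linarith)
    have := (summable_nat_add_iff 1).mpr h0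
    refine this.congr fun k => ?_
    push_cast; ring_nf
  refine Summable.of_nonneg_of_le (fun k => ?_) (fun k => ?_) h1
  · positivity
  · apply Real.rpow_le_rpow_of_nonpos (by positivity) (by linarith [Nat.cast_nonneg (α := ℝ) k]) (by linarith)

lemma eventually_R_le (R : ℝ) : ∀ᶠ k : ℕ in Filter.cofinite, R ≤ 2 * (k : ℝ) + 1 := by
  rw [Nat.cofinite_eq_atTop]
  filter_upwards [Filter.eventually_ge_atTop ⌈R⌉₊] with k hk
  have h1 : R ≤ (⌈R⌉₊ : ℝ) := Nat.le_ceil R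
  have h2 : ((⌈R⌉₊ : ℕ) : ℝ) ≤ (k : ℝ) := Nat.cast_le.mpr hk
  have h3 : (0:ℝ) ≤ (k:ℝ) := Nat.cast_nonneg k
  linarith

lemma summable_E {s : ℂ} (hs : 0 < s.re) : Summable (fun k => E k s) := by
  apply Summable.of_norm_bounded_eventually (summable_u hs ‖s‖)
  filter_upwards [eventually_R_le ‖s‖] with k hk
  exact E_bound hs hk le_rfl le_rfl

lemma differentiable_E (k : ℕ) : Differentiable ℂ (E k) := by
  have h1 : ((2 * k + 1 : ℕ) : ℂ) ≠ 0 := Nat.cast_ne_zero.mpr (by omega)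
  have h2 : ((2 * k + 2 : ℕ) : ℂ) ≠ 0 := Nat.cast_ne_zero.mpr (by omega)
  exact (differentiable_id.neg.const_cpow (Or.inl h1)).sub
    (differentiable_id.neg.const_cpow (Or.inl h2))

lemma G_differentiableOn : DifferentiableOn ℂ G {s : ℂ | 0 < s.re} := by
  intro s₀ hs₀
  have hre : 0 < s₀.re := hs₀
  set ε := s₀.re / 2 with hε_def
  have hε : 0 < ε := by positivity
  set R := ‖s₀‖ + 1 with hR_def
  set U : Set ℂ := {s : ℂ | ε < s.re} ∩ {s : ℂ | ‖s‖ < R} with hU_def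
  have hU : IsOpen U := (isOpen_lt continuous_const continuous_re).inter
    (isOpen_lt continuous_norm continuous_const)
  have hmem : s₀ ∈ U := ⟨by simp only [Set.mem_setOf_eq, hε_def]; linarith,
    by simp only [Set.mem_setOf_eq, hR_def]; linarith⟩
  have hdiff : DifferentiableOn ℂ G U := by
    have htu : TendstoUniformlyOn (fun (t : Finset ℕ) x => ∑ k ∈ t, E k x) G atTop U := by
      apply tendstoUniformlyOn_tsum_of_cofinite_eventually (summable_u hε R)
      filter_upwards [eventually_R_le R] with k hk x hx
      exact E_bound hε hk hx.1.le hx.2.le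
    apply htu.tendstoLocallyUniformlyOn.differentiableOn ?_ hU
    refine Filter.Eventually.of_forall fun t => ?_
    exact (Differentiable.fun_sum fun k _ => differentiable_E k).differentiableOn
  exact (hdiff.differentiableAt (hU.mem_nhds hmem)).differentiableWithinAt

lemma identities_of_one_lt {s : ℂ} (hs : 1 < s.re) :
    ZMod.LFunction phi s = G s ∧
      ZMod.LFunction phi s = (1 - (2 : ℂ) ^ ((1 : ℂ) - s)) * riemannZeta s := by
  have hs0 : s ≠ 0 := fun h => by rw [h] at hs; norm_num at hs
  set N : ℕ → ℂ := fun n => ((n : ℕ) : ℂ) ^ (-s) with hN_def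
  have hN : Summable N := by
    have := Complex.summable_one_div_nat_cpow.mpr hs
    refine this.congr fun n => ?_
    simp only [hN_def, cpow_neg, one_div]
  have hN0 : N 0 = 0 := by
    simp only [hN_def, Nat.cast_zero]
    exact zero_cpow (neg_ne_zero.mpr hs0)
  have hO : Summable (fun k => N (2 * k + 1)) :=
    hN.comp_injective (fun a b h => by omega)
  have hEv : Summable (fun k => N (2 * k + 2)) :=
    hN.comp_injective (fun a b h => by omega)
  set O : ℂ := ∑' k, N (2 * k + 1) with hO_def
  set Ev : ℂ := ∑' k, N (2 * k + 2) with hEv_def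
  have hfun : (fun k : ℕ => N (2 * k + 1 + 1)) = (fun k => N (2 * k + 2)) := by
    funext k; congr 1
  -- ζ s = ∑ N (n+1)
  have hζ : HasSum (fun n : ℕ => N (n + 1)) (riemannZeta s) := by
    have hsum : Summable (fun n : ℕ => N (n + 1)) := (summable_nat_add_iff 1).mpr hN
    have heq : ∑' n, N (n + 1) = riemannZeta s := by
      rw [zeta_eq_tsum_one_div_nat_add_one_cpow hs]
      congr 1 with n
      simp only [hN_def, cpow_neg, one_div]
      push_cast
      ring_nf
    exact heq ▸ hsum.hasSum
  -- even/odd split of ζ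
  have hζ2 : HasSum (fun n : ℕ => N (n + 1)) (O + Ev) :=
    HasSum.even_add_odd hO.hasSum (hfun ▸ hEv.hasSum)
  have hsplit : riemannZeta s = O + Ev := hζ.unique hζ2
  -- Ev = 2^{-s} ζ s
  have hEv_eq : Ev = (2 : ℂ) ^ (-s) * riemannZeta s := by
    have hterm : ∀ k : ℕ, N (2 * k + 2) = (2 : ℂ) ^ (-s) * N (k + 1) := by
      intro k
      rw [hN_def]
      simp only []
      rw [show (2 * k + 2 : ℕ) = 2 * (k + 1) by ring]
      rw [show ((2 * (k + 1) : ℕ) : ℂ) = ((2 : ℕ) : ℂ) * (((k + 1 : ℕ)) : ℂ) from by push_cast; ring]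
      rw [natCast_mul_natCast_cpow]
      norm_num
    rw [hEv_def]
    rw [tsum_congr hterm, tsum_mul_left, hζ.tsum_eq]
  -- LFunction phi s = -Ev + O
  have hT : Summable (LSeries.term (fun n : ℕ => phi n) s) :=
    ZMod.LSeriesSummable_of_one_lt_re phi hs
  have hTeven : ∀ k : ℕ, LSeries.term (fun n : ℕ => phi n) s (2 * k) = -N (2 * k) := by
    intro k
    rcases Nat.eq_zero_or_pos k with rfl | hk
    · simp only [mul_zero, LSeries.term_zero, hN0, neg_zero]
    · rw [LSeries.term_of_ne_zero (by omega)]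
      have hcast : ((2 * k : ℕ) : ZMod 2) = 0 := by
        rw [Nat.cast_mul, ZMod.natCast_self, zero_mul]
      rw [hcast]
      simp [phi, hN_def, cpow_neg, neg_div, one_div]
  have hTodd : ∀ k : ℕ, LSeries.term (fun n : ℕ => phi n) s (2 * k + 1) = N (2 * k + 1) := by
    intro k
    rw [LSeries.term_of_ne_zero (by omega)]
    have hcast : ((2 * k + 1 : ℕ) : ZMod 2) = 1 := by
      rw [Nat.cast_add, Nat.cast_mul, ZMod.natCast_self, zero_mul, zero_add, Nat.cast_one]
    rw [hcast]
    simp [phi, hN_def, cpow_neg, one_div]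
  have hEv0 : HasSum (fun k : ℕ => N (2 * k)) Ev := by
    have h1 : HasSum (fun k : ℕ => N (2 * (k + 1))) Ev := by
      have : (fun k : ℕ => N (2 * (k + 1))) = fun k => N (2 * k + 2) := by
        funext k; exact congrArg N (by ring)
      exact this ▸ hEv.hasSum
    have := (hasSum_nat_add_iff (f := fun k : ℕ => N (2 * k)) 1).mp h1
    simpa [hN0] using this
  have he : HasSum (fun k => LSeries.term (fun n : ℕ => phi n) s (2 * k)) (-Ev) := by
    have heq : (fun k : ℕ => LSeries.term (fun n : ℕ => phi n) s (2 * k)) =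
        fun k => -N (2 * k) := funext hTeven
    exact heq ▸ hEv0.neg
  have ho : HasSum (fun k => LSeries.term (fun n : ℕ => phi n) s (2 * k + 1)) O := by
    have heq : (fun k : ℕ => LSeries.term (fun n : ℕ => phi n) s (2 * k + 1)) =
        fun k => N (2 * k + 1) := funext hTodd
    exact heq ▸ hO.hasSum
  have hL : HasSum (LSeries.term (fun n : ℕ => phi n) s) (-Ev + O) :=
    HasSum.even_add_odd he ho
  have hf : ZMod.LFunction phi s = -Ev + O := by
    rw [ZMod.LFunction_eq_LSeries phi hs]
    exact hL.tsum_eq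
  constructor
  · -- LFunction = G
    rw [hf, G]
    have hGeq : ∑' k, E k s = O - Ev := by
      have : ∀ k : ℕ, E k s = N (2 * k + 1) - N (2 * k + 2) := fun k => rfl
      rw [tsum_congr this, Summable.tsum_sub hO hEv, ← hO_def, ← hEv_def]
    rw [hGeq]; ring
  · -- LFunction = (1 - 2^{1-s}) ζ
    rw [hf]
    have h2 : (2 : ℂ) ^ ((1 : ℂ) - s) = 2 * (2 : ℂ) ^ (-s) := by
      rw [show (1 : ℂ) - s = 1 + (-s) by ring, cpow_add _ _ two_ne_zero, cpow_one]
    have hEv3 := hEv_eq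
    rw [hsplit] at hEv3
    rw [h2, hsplit]
    linear_combination (-2 : ℂ) * hEv3

lemma LFunction_eq_G {s : ℂ} (hs : 0 < s.re) : ZMod.LFunction phi s = G s := by
  have hU : IsOpen {z : ℂ | 0 < z.re} := isOpen_lt continuous_const continuous_re
  have hpre : IsPreconnected {z : ℂ | 0 < z.re} :=
    (convex_halfSpace_re_gt 0).isPreconnected
  have h2 : (2 : ℂ) ∈ {z : ℂ | 0 < z.re} := by norm_num
  refine AnalyticOnNhd.eqOn_of_preconnected_of_eventuallyEq (𝕜 := ℂ)
    (f := ZMod.LFunction phi) (g := G) ?_ ?_ hpre h2 ?_ hs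
  · exact ((ZMod.differentiable_LFunction_of_sum_zero phi_sum).differentiableOn).analyticOnNhd hU
  · exact G_differentiableOn.analyticOnNhd hU
  · refine Filter.eventually_of_mem ?_ (fun t (ht : 1 < t.re) => (identities_of_one_lt ht).1)
    exact (continuous_re.isOpen_preimage _ isOpen_Ioi).mem_nhds (by norm_num : 1 < (2 : ℂ).re)

lemma LFunction_eq_zeta {s : ℂ} (hs : s ≠ 1) :
    ZMod.LFunction phi s = (1 - (2 : ℂ) ^ ((1 : ℂ) - s)) * riemannZeta s := by
  have hpre : IsPreconnected ({1}ᶜ : Set ℂ) :=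
    (isConnected_compl_singleton_of_one_lt_rank (Complex.rank_real_complex ▸ Nat.one_lt_ofNat) _)
      |>.isPreconnected
  have h2 : (2 : ℂ) ∈ ({1}ᶜ : Set ℂ) := by norm_num
  refine AnalyticOnNhd.eqOn_of_preconnected_of_eventuallyEq (𝕜 := ℂ)
    (f := ZMod.LFunction phi)
    (g := fun z => (1 - (2 : ℂ) ^ ((1 : ℂ) - z)) * riemannZeta z) ?_ ?_ hpre h2 ?_ hs
  · exact ((ZMod.differentiable_LFunction_of_sum_zero phi_sum).differentiableOn).analyticOnNhd
      isOpen_compl_singleton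
  · refine (DifferentiableOn.analyticOnNhd (fun z hz => ?_) isOpen_compl_singleton)
    refine (DifferentiableAt.sub (differentiableAt_const 1) ?_).mul
      (differentiableAt_riemannZeta hz) |>.differentiableWithinAt
    exact DifferentiableAt.const_cpow (by fun_prop) (Or.inl two_ne_zero)
  · refine Filter.eventually_of_mem ?_ (fun t (ht : 1 < t.re) => (identities_of_one_lt ht).2)
    exact (continuous_re.isOpen_preimage _ isOpen_Ioi).mem_nhds (by norm_num : 1 < (2 : ℂ).re)

/-- The Riemann zeta function is a negative real number on `[0, 1)`. -/
lemma zeta_neg_on_Ico {x : ℝ} (h0 : 0 ≤ x) (h1 : x < 1) :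
    ∃ c : ℝ, riemannZeta (x : ℂ) = (c : ℂ) ∧ c < 0 := by
  rcases eq_or_lt_of_le h0 with rfl | hx
  · exact ⟨-1 / 2, by rw [ofReal_zero, riemannZeta_zero]; norm_num, by norm_num⟩
  set e : ℕ → ℝ := fun k => ((2 * k + 1 : ℕ) : ℝ) ^ (-x) - ((2 * k + 2 : ℕ) : ℝ) ^ (-x)
    with he_def
  have hE : ∀ k, E k (x : ℂ) = ((e k : ℝ) : ℂ) := by
    intro k
    rw [he_def]
    simp only []
    rw [ofReal_sub, Complex.ofReal_cpow (Nat.cast_nonneg _), Complex.ofReal_cpow (Nat.cast_nonneg _)]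
    unfold E
    push_cast
    ring
  have hxre : 0 < (x : ℂ).re := by simpa using hx
  have hsum : Summable (fun k => E k (x : ℂ)) := summable_E hxre
  have hesum : Summable e := by
    have h' : Summable (fun k => ((e k : ℝ) : ℂ)) := hsum.congr hE
    exact_mod_cast h'
  have hGx : G (x : ℂ) = ((∑' k, e k : ℝ) : ℂ) := by
    rw [G, tsum_congr hE]
    norm_cast
  have hnonneg : ∀ k, 0 ≤ e k := by
    intro k
    rw [he_def]
    simp only []
    rw [sub_nonneg]
    refine Real.rpow_le_rpow_of_nonpos ?_ ?_ (by linarith)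
    · positivity
    · push_cast; linarith
  have hpos0 : 0 < e 0 := by
    rw [he_def]
    simp only []
    rw [sub_pos]
    have h12 : ((2 * 0 + 1 : ℕ) : ℝ) = 1 := by norm_num
    have h22 : ((2 * 0 + 2 : ℕ) : ℝ) = 2 := by norm_num
    rw [h12, h22]
    exact Real.rpow_lt_rpow_of_neg one_pos one_lt_two (by linarith)
  have hT : 0 < ∑' k, e k := Summable.tsum_pos hesum hnonneg 0 hpos0
  have hne1 : (x : ℂ) ≠ 1 := by
    intro h
    rw [Complex.ofReal_eq_one] at h
    linarith
  set c : ℝ := (2 : ℝ) ^ (1 - x) with hc_def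
  have h2c : (2 : ℂ) ^ ((1 : ℂ) - (x : ℂ)) = ((c : ℝ) : ℂ) := by
    rw [hc_def, Complex.ofReal_cpow (by norm_num) (1 - x)]
    push_cast
    ring_nf
  have hc1 : 1 < c := by
    rw [hc_def]
    calc (1 : ℝ) = (2 : ℝ) ^ (0 : ℝ) := (Real.rpow_zero 2).symm
      _ < (2 : ℝ) ^ (1 - x) :=
          Real.rpow_lt_rpow_of_exponent_lt one_lt_two (by linarith)
  have hzeta : ((1 - c : ℝ) : ℂ) * riemannZeta (x : ℂ) = ((∑' k, e k : ℝ) : ℂ) := by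
    have h := LFunction_eq_zeta hne1
    rw [LFunction_eq_G hxre, hGx, h2c] at h
    rw [show ((1 - c : ℝ) : ℂ) = 1 - (c : ℂ) by push_cast; ring]
    exact h.symm
  have hcne : ((1 - c : ℝ) : ℂ) ≠ 0 := by
    rw [Complex.ofReal_ne_zero]
    linarith
  refine ⟨(∑' k, e k) / (1 - c), ?_, div_neg_of_pos_of_neg hT (by linarith)⟩
  rw [Complex.ofReal_div]
  exact (eq_div_iff hcne).mpr (by rw [mul_comm]; exact hzeta)

end MZVaux

lemma MZVaux.main_aux : ∀ r : ℕ, ∀ s : ℝ, 0 ≤ s → (∀ j : ℕ, j ≤ r → (j : ℝ) * s < 1) →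
    ∃ x : ℝ, Z r (s : ℂ) = (x : ℂ) ∧ 0 < (-1 : ℝ) ^ r * x := by
  intro r
  induction r using Nat.strong_induction_on with
  | _ r IH =>
    match r with
    | 0 => exact fun s _ _ => ⟨1, by simp [Z], by norm_num⟩
    | (m + 1) =>
      intro s hs hj
      have hterm : ∀ i, i ∈ Finset.range (m + 1) → ∃ t : ℝ,
          (-1 : ℂ) ^ i * Z (m - i) (s : ℂ) * riemannZeta (((i : ℂ) + 1) * (s : ℂ)) = (t : ℂ) ∧
          0 < (-1 : ℝ) ^ (m + 1) * t := by
        intro i hi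
        have him : i ≤ m := Nat.lt_succ_iff.mp (Finset.mem_range.mp hi)
        obtain ⟨x, hxZ, hxpos⟩ := IH (m - i) (by omega) s hs
          (fun j hjle => hj j (by omega))
        have hy0 : 0 ≤ ((i + 1 : ℕ) : ℝ) * s := by positivity
        have hy1 : ((i + 1 : ℕ) : ℝ) * s < 1 := hj (i + 1) (by omega)
        obtain ⟨c, hc, hcneg⟩ := MZVaux.zeta_neg_on_Ico hy0 hy1
        have harg : ((i : ℂ) + 1) * (s : ℂ) = ((((i + 1 : ℕ) : ℝ) * s : ℝ) : ℂ) := by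
          push_cast; ring
        refine ⟨(-1 : ℝ) ^ i * x * c, ?_, ?_⟩
        · rw [hxZ, harg, hc]; push_cast; ring
        · obtain ⟨n, hn⟩ : ∃ n, m - i = n := ⟨m - i, rfl⟩
          have hmn : m + 1 = n + i + 1 := by omega
          rw [hn] at hxpos
          rw [hmn]
          have h1 : 0 < ((-1 : ℝ) ^ n * x) * (-c) := mul_pos hxpos (neg_pos.mpr hcneg)
          have h2 : (-1 : ℝ) ^ (n + i + 1) * ((-1 : ℝ) ^ i * x * c)
              = ((-1 : ℝ) ^ n * x) * (-c) * ((-1 : ℝ) ^ (i + i)) := by ring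
          rw [h2, Even.neg_one_pow ⟨i, rfl⟩, mul_one]
          exact h1
      choose t ht1 ht2 using hterm
      set T : ℕ → ℝ := fun i => if h : i ∈ Finset.range (m + 1) then t i h else 0 with hT_def
      have hT1 : ∀ i ∈ Finset.range (m + 1),
          (-1 : ℂ) ^ i * Z (m - i) (s : ℂ) * riemannZeta (((i : ℂ) + 1) * (s : ℂ))
            = ((T i : ℝ) : ℂ) := by
        intro i hi
        rw [hT_def]
        simp only [dif_pos hi]
        exact ht1 i hi
      have hT2 : ∀ i ∈ Finset.range (m + 1), 0 < (-1 : ℝ) ^ (m + 1) * T i := by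
        intro i hi
        rw [hT_def]
        simp only [dif_pos hi]
        exact ht2 i hi
      have hsum : (∑ i ∈ Finset.range (m + 1),
          (-1 : ℂ) ^ i * Z (m - i) (s : ℂ) * riemannZeta (((i : ℂ) + 1) * (s : ℂ)))
            = ((∑ i ∈ Finset.range (m + 1), T i : ℝ) : ℂ) := by
        rw [Finset.sum_congr rfl hT1]
        norm_cast
      refine ⟨(∑ i ∈ Finset.range (m + 1), T i) / (m + 1), ?_, ?_⟩
      · have hZdef : Z (m + 1) (s : ℂ) = (1 / ((m : ℂ) + 1)) *
            ∑ i ∈ Finset.range (m + 1),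
              (-1 : ℂ) ^ i * Z (m - i) (s : ℂ) * riemannZeta (((i : ℂ) + 1) * (s : ℂ)) := by rw [Z]
        rw [hZdef, hsum]
        have hm1 : ((m : ℂ) + 1) ≠ 0 := by
          exact_mod_cast (Nat.cast_add_one_ne_zero (R := ℂ) m)
        push_cast
        field_simp
      · have hpos : 0 < ∑ i ∈ Finset.range (m + 1), (-1 : ℝ) ^ (m + 1) * T i :=
          Finset.sum_pos hT2 ⟨0, Finset.mem_range.mpr (Nat.succ_pos m)⟩
        rw [mul_div_assoc']
        apply div_pos
        · rwa [← Finset.mul_sum] at hpos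
        · positivity

theorem multiple_zeta_sign_on_initial_interval (r : ℕ) (hr : 1 ≤ r) (s : ℝ)
    (h0 : 0 ≤ s) (h1 : s < 1 / r) :
    (Z r s).im = 0 ∧ 0 < (-1 : ℝ) ^ r * (Z r s).re ∧ Z r s ≠ 0 := by
  have hr0 : (0 : ℝ) < (r : ℝ) := by exact_mod_cast hr
  have hrs : (r : ℝ) * s < 1 := by
    have := (lt_div_iff₀ hr0).mp h1
    linarith [this]
  obtain ⟨x, hx, hxpos⟩ := MZVaux.main_aux r s h0 (fun j hjle => by
    have hcast : (j : ℝ) ≤ (r : ℝ) := by exact_mod_cast hjle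
    nlinarith)
  have hxne : x ≠ 0 := by
    intro h
    rw [h, mul_zero] at hxpos
    exact lt_irrefl 0 hxpos
  refine ⟨by rw [hx]; simp, by rw [hx]; simpa using hxpos, by
    rw [hx]; exact_mod_cast hxne⟩
end

section
/- For every integer r ≥ 1, the function Z_r is complex differentiable at every point s ∈ ℂ that is not of the form 1/k for some integer k with 1 ≤ k ≤ r. -/
open Filter Topology Complex

lemma Z_diff_aux : ∀ r : ℕ, ∀ s : ℂ,
    (∀ k : ℕ, 1 ≤ k → k ≤ r → s ≠ 1 / (k : ℂ)) → DifferentiableAt ℂ (Z r) s := by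
  intro r
  induction r using Nat.strong_induction_on with
  | _ r ih =>
    match r with
    | 0 =>
      intro s _
      have : Z 0 = fun _ : ℂ => (1 : ℂ) := by funext t; simp [Z]
      rw [this]
      exact differentiableAt_const 1
    | (r + 1) =>
      intro s hs
      have hZ : Z (r + 1) = fun t : ℂ =>
          (1 / ((r : ℂ) + 1)) *
            ∑ i ∈ Finset.range (r + 1),
              (-1 : ℂ) ^ i * Z (r - i) t * riemannZeta (((i : ℂ) + 1) * t) := by
        funext t; simp [Z]
      rw [hZ]
      apply DifferentiableAt.const_mul
      apply DifferentiableAt.fun_sum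
      intro i hi
      have hilt : i < r + 1 := Finset.mem_range.mp hi
      have hZi : DifferentiableAt ℂ (Z (r - i)) s := by
        apply ih (r - i) (Nat.lt_succ_of_le (Nat.sub_le r i))
        intro k hk1 hk2
        exact hs k hk1 (hk2.trans ((Nat.sub_le r i).trans (Nat.le_succ r)))
      have hne : ((i : ℂ) + 1) * s ≠ 1 := by
        intro h
        have hk := hs (i + 1) (by omega) (by omega)
        apply hk
        have hcne : ((i : ℂ) + 1) ≠ 0 := Nat.cast_add_one_ne_zero i
        field_simp
        push_cast
        linear_combination h
      have hz : DifferentiableAt ℂ (fun t : ℂ => riemannZeta (((i : ℂ) + 1) * t)) s := by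
        exact (differentiableAt_riemannZeta hne).comp s
          ((differentiableAt_id.const_mul _))
      exact ((hZi.const_mul _).mul hz)

theorem multiple_zeta_differentiableAt (r : ℕ) (hr : 1 ≤ r) (s : ℂ)
    (hs : ∀ k : ℕ, 1 ≤ k → k ≤ r → s ≠ 1 / (k : ℂ)) :
    DifferentiableAt ℂ (Z r) s := Z_diff_aux r s hs
end

section
/- Let r ≥ 1 and let k be an integer with 1 ≤ k ≤ r. Then there exists a nonzero real constant C_r(k) whose sign coincides with the sign of (−1)^{r+⌊r/k⌋}, such that (ks − 1)^{⌊r/k⌋} · Z_r(s) tends to C_r(k) as s tends to 1/k (through s ≠ 1/k). In other words, Z_r(s) ∼ C_r(k)·(ks − 1)^{−⌊r/k⌋} as s → 1/k, so Z_r has a pole of order ⌊r/k⌋ at s = 1/k. -/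
open Filter Topology Complex

/-- The meromorphic continuation of the Euler–Zagier multiple zeta-function with
identical arguments, defined recursively by Newton's identities: `Z 0 s = 1` and
`Z r s = (1/r) · Σ_{j=1}^{r} (−1)^{j−1} Z (r−j) s · ζ(js)` (here the summation index
`i = j − 1` runs over `Finset.range r`), where `ζ` is the analytically continued
Riemann zeta function. -/

noncomputable def Pfun (s : ℂ) : ℂ :=
  ∑' m : ℕ, (((2*m+1 : ℝ) : ℂ) ^ (-s) - ((2*m+2 : ℝ) : ℂ) ^ (-s))

-- key derivative/MVT bound
lemma cpow_diff_bound {a : ℝ} (ha : 1 ≤ a) {s : ℂ} (hs : 0 ≤ s.re) :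
    ‖((a : ℝ) : ℂ) ^ (-s) - ((a+1 : ℝ) : ℂ) ^ (-s)‖ ≤ ‖s‖ * a ^ (-s.re - 1) := by
  have ha0 : (0:ℝ) < a := lt_of_lt_of_le one_pos ha
  set g : ℝ → ℂ := fun t => ((t : ℝ) : ℂ) ^ (-s) with hg
  have hderiv : ∀ t ∈ Set.Icc a (a+1),
      HasDerivWithinAt g (-s * ((t:ℂ)) ^ (-s-1)) (Set.Icc a (a+1)) t := by
    intro t ht
    have ht0 : (0:ℝ) < t := lt_of_lt_of_le ha0 ht.1
    have h1 : HasDerivAt (fun z : ℂ => z ^ (-s)) (-s * (t:ℂ) ^ (-s-1)) (t:ℂ) := by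
      have := (hasDerivAt_id ((t:ℝ):ℂ)).cpow_const (c := -s)
        (Or.inl (by simpa using ht0))
      simpa using this
    exact (h1.comp_ofReal).hasDerivWithinAt
  have hbound : ∀ t ∈ Set.Ico a (a+1), ‖-s * ((t:ℂ)) ^ (-s-1)‖ ≤ ‖s‖ * a ^ (-s.re - 1) := by
    intro t ht
    have ht0 : (0:ℝ) < t := lt_of_lt_of_le ha0 ht.1
    rw [norm_mul, norm_neg]
    gcongr
    rw [Complex.norm_cpow_eq_rpow_re_of_pos ht0]
    have h2 : (-s-1).re = -s.re - 1 := by simp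
    rw [h2]
    exact Real.rpow_le_rpow_of_nonpos ha0 ht.1 (by linarith)
  have H := norm_image_sub_le_of_norm_deriv_le_segment' hderiv hbound (a+1)
    (Set.right_mem_Icc.mpr (by linarith))
  rw [norm_sub_rev]
  simpa [hg] using H

lemma summable_aux {c : ℝ} (hc : 0 < c) :
    Summable (fun m : ℕ => ((2*(m:ℝ)+1)) ^ (-c - 1)) := by
  have h1 : Summable (fun m : ℕ => ((m:ℝ)+1) ^ (-c-1)) := by
    have := Real.summable_nat_rpow (p := -c-1) |>.mpr (by linarith)
    exact_mod_cast (summable_nat_add_iff 1).mpr this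
  refine h1.of_nonneg_of_le (fun m => Real.rpow_nonneg (by positivity) _) (fun m => ?_)
  exact Real.rpow_le_rpow_of_nonpos (by positivity) (by linarith) (by linarith)

lemma Pfun_term_norm_le {m : ℕ} {s : ℂ} (hs : 0 ≤ s.re) :
    ‖((2*(m:ℝ)+1 : ℝ) : ℂ) ^ (-s) - ((2*(m:ℝ)+2 : ℝ) : ℂ) ^ (-s)‖
      ≤ ‖s‖ * (2*(m:ℝ)+1) ^ (-s.re - 1) := by
  have := cpow_diff_bound (a := 2*(m:ℝ)+1) (by linarith [Nat.cast_nonneg (α := ℝ) m]) hs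
  have h2 : (2*(m:ℝ)+1) + 1 = 2*(m:ℝ)+2 := by ring
  rwa [h2] at this

lemma Pfun_differentiableAt {z : ℂ} (hz : 0 < z.re) : DifferentiableAt ℂ Pfun z := by
  set δ : ℝ := z.re / 2 with hδ
  have hδ0 : 0 < δ := by positivity
  set R : ℝ := ‖z‖ + 1 with hR
  set U : Set ℂ := {s | δ < s.re} ∩ Metric.ball 0 R with hU
  have hUopen : IsOpen U := ((isOpen_lt continuous_const continuous_re).inter
    Metric.isOpen_ball)
  have hzU : z ∈ U := by
    constructor
    · simp only [Set.mem_setOf_eq]; linarith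
    · simp only [Metric.mem_ball, dist_zero_right]; linarith [hR]
  have key : DifferentiableOn ℂ Pfun U := by
    apply differentiableOn_tsum_of_summable_norm
      (u := fun m : ℕ => R * ((2*(m:ℝ)+1)) ^ (-δ - 1))
      ((summable_aux hδ0).mul_left R)
    · intro m
      apply DifferentiableOn.sub <;>
      · apply Differentiable.differentiableOn
        apply Differentiable.const_cpow (by fun_prop)
        exact Or.inl (Complex.ofReal_ne_zero.mpr (by positivity))
    · exact hUopen
    · intro m w hw
      obtain ⟨hw1, hw2⟩ := hw
      simp only [Set.mem_setOf_eq] at hw1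
      rw [Metric.mem_ball, dist_zero_right] at hw2
      calc ‖((2*(m:ℝ)+1 : ℝ) : ℂ) ^ (-w) - ((2*(m:ℝ)+2 : ℝ) : ℂ) ^ (-w)‖
          ≤ ‖w‖ * (2*(m:ℝ)+1) ^ (-w.re - 1) :=
            Pfun_term_norm_le (le_of_lt (hδ0.trans hw1))
        _ ≤ R * ((2*(m:ℝ)+1)) ^ (-δ - 1) := by
            apply mul_le_mul hw2.le ?_ (Real.rpow_nonneg (by positivity) _)
              (by positivity)
            exact Real.rpow_le_rpow_of_exponent_le (by linarith) (by linarith)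
  exact key.differentiableAt (hUopen.mem_nhds hzU)

lemma Pfun_eq_zeta {s : ℂ} (hs : 1 < s.re) :
    Pfun s = (1 - 2 ^ ((1:ℂ)-s)) * riemannZeta s := by
  have hsum : Summable (fun n : ℕ => ((n+1 : ℝ) : ℂ) ^ (-s)) := by
    have h0 : Summable (fun n : ℕ => 1 / ((n:ℂ)) ^ s) :=
      Complex.summable_one_div_nat_cpow.mpr hs
    have h1 : Summable (fun n : ℕ => 1 / ((n+1:ℕ):ℂ) ^ s) :=
      ((summable_nat_add_iff 1).mpr h0).congr (fun n => by norm_num)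
    refine h1.congr (fun n => ?_)
    rw [Complex.cpow_neg, one_div]
    push_cast
    ring_nf
  have htsum : HasSum (fun n : ℕ => ((n+1 : ℝ) : ℂ) ^ (-s)) (riemannZeta s) := by
    have := zeta_eq_tsum_one_div_nat_add_one_cpow hs
    have h2 : ∀ n : ℕ, ((n+1 : ℝ) : ℂ) ^ (-s) = 1 / (n + 1 : ℂ) ^ s := by
      intro n
      rw [Complex.cpow_neg, one_div]
      push_cast
      ring_nf
    rw [show riemannZeta s = ∑' n : ℕ, ((n+1:ℝ):ℂ) ^ (-s) by
      rw [this]; exact (tsum_congr (fun n => (h2 n).symm))]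
    exact hsum.hasSum
  -- even-indexed terms (n = 2m+1 gives base 2m+2)
  have hE : HasSum (fun m : ℕ => ((2*(m:ℝ)+2 : ℝ) : ℂ) ^ (-s))
      ((2:ℂ) ^ (-s) * riemannZeta s) := by
    have := (htsum.mul_left ((2:ℂ) ^ (-s)))
    refine this.congr_fun (fun m => ?_)
    have hb : ((2*(m:ℝ)+2 : ℝ) : ℂ) = ((2:ℝ):ℂ) * (((m:ℝ)+1 : ℝ):ℂ) := by
      push_cast; ring
    rw [hb, mul_cpow_ofReal_nonneg (by norm_num) (by positivity)]
    norm_num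
  have hOsum : Summable (fun m : ℕ => ((2*(m:ℝ)+1 : ℝ) : ℂ) ^ (-s)) := by
    have := hsum.comp_injective (fun a b h => by simpa using h : Function.Injective (fun m : ℕ => 2*m))
    refine this.congr (fun m => ?_)
    simp only [Function.comp_apply]
    push_cast
    ring_nf
  have hO := hOsum.hasSum
  -- combine: evens are odd-indexed in original
  have hcomb : HasSum (fun n : ℕ => ((n+1 : ℝ) : ℂ) ^ (-s))
      ((∑' m : ℕ, ((2*(m:ℝ)+1 : ℝ) : ℂ) ^ (-s)) + (2:ℂ) ^ (-s) * riemannZeta s) := by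
    refine HasSum.even_add_odd ?_ ?_
    · refine hO.congr_fun (fun m => ?_); push_cast; ring_nf
    · refine hE.congr_fun (fun m => ?_); push_cast; ring_nf
  have hkey : (∑' m : ℕ, ((2*(m:ℝ)+1 : ℝ) : ℂ) ^ (-s))
      = riemannZeta s - (2:ℂ) ^ (-s) * riemannZeta s := by
    have := htsum.unique hcomb
    linear_combination -this
  have hsub : Pfun s = (∑' m : ℕ, ((2*(m:ℝ)+1 : ℝ) : ℂ) ^ (-s))
      - (2:ℂ) ^ (-s) * riemannZeta s := by
    rw [Pfun]
    exact (hO.sub hE).tsum_eq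
  rw [hsub, hkey]
  have h21 : (2:ℂ) ^ ((1:ℂ)-s) = 2 * (2:ℂ) ^ (-s) := by
    rw [sub_eq_add_neg, Complex.cpow_add _ _ (two_ne_zero), Complex.cpow_one]
  rw [h21]
  ring

lemma Pfun_real_pos {x : ℝ} (hx : 0 < x) : ∃ t : ℝ, 0 < t ∧ Pfun (x : ℂ) = (t : ℂ) := by
  set a : ℕ → ℝ := fun m => (2*(m:ℝ)+1) ^ (-x) - (2*(m:ℝ)+2) ^ (-x) with ha
  have hterm : ∀ m : ℕ, (((2*(m:ℝ)+1 : ℝ) : ℂ) ^ (-(x:ℂ)) - ((2*(m:ℝ)+2 : ℝ) : ℂ) ^ (-(x:ℂ)))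
      = ((a m : ℝ) : ℂ) := by
    intro m
    have hx1 : -(x:ℂ) = ((-x : ℝ):ℂ) := by push_cast; ring
    rw [ha, hx1, ← Complex.ofReal_cpow (by positivity), ← Complex.ofReal_cpow (by positivity)]
    push_cast
    ring
  have hsummable : Summable a := by
    have hc : Summable (fun m : ℕ => (((2*(m:ℝ)+1 : ℝ) : ℂ) ^ (-(x:ℂ))
        - ((2*(m:ℝ)+2 : ℝ) : ℂ) ^ (-(x:ℂ)))) := by
      apply Summable.of_norm
      refine ((summable_aux hx).mul_left ‖(x:ℂ)‖).of_nonneg_of_le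
        (fun m => norm_nonneg _) (fun m => ?_)
      have := Pfun_term_norm_le (m := m) (s := (x:ℂ)) (by simp [hx.le])
      simpa using this
    rw [← Complex.summable_ofReal (f := a)]
    exact hc.congr hterm
  have hpos : ∀ m : ℕ, 0 < a m := by
    intro m
    have : ((2*(m:ℝ)+2)) ^ (-x) < ((2*(m:ℝ)+1)) ^ (-x) :=
      Real.rpow_lt_rpow_of_neg (by positivity) (by linarith) (by linarith)
    simp only [ha]
    linarith
  refine ⟨∑' m, a m, Summable.tsum_pos hsummable (fun m => (hpos m).le) 0 (hpos 0), ?_⟩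
  rw [Pfun, Complex.ofReal_tsum]
  exact tsum_congr hterm

lemma preconnected_aux : IsPreconnected {s : ℂ | 0 < s.re ∧ s ≠ 1} := by
  set A : Set ℂ := {s | 0 < s.re} ∩ {s | 0 < s.im} with hA
  set B : Set ℂ := {s | 0 < s.re} ∩ {s | s.im < 0} with hB
  set C : Set ℂ := {s | 0 < s.re} ∩ {s | s.re < 1} with hC
  set D : Set ℂ := {s | 1 < s.re} with hD
  have hAc : IsPreconnected A :=
    ((convex_halfSpace_re_gt 0).inter (convex_halfSpace_im_gt 0)).isPreconnected
  have hBc : IsPreconnected B :=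
    ((convex_halfSpace_re_gt 0).inter (convex_halfSpace_im_lt 0)).isPreconnected
  have hCc : IsPreconnected C :=
    ((convex_halfSpace_re_gt 0).inter (convex_halfSpace_re_lt 1)).isPreconnected
  have hDc : IsPreconnected D := (convex_halfSpace_re_gt 1).isPreconnected
  have h1 : IsPreconnected (C ∪ A) := by
    apply IsPreconnected.union (⟨1/2, 1/2⟩ : ℂ) _ _ hCc hAc
    · exact ⟨by norm_num [hC], by norm_num [hC]⟩
    · exact ⟨by norm_num [hA], by norm_num [hA]⟩
  have h2 : IsPreconnected ((C ∪ A) ∪ D) := by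
    apply IsPreconnected.union (⟨2, 1⟩ : ℂ) _ _ h1 hDc
    · exact Or.inr ⟨by norm_num [hA], by norm_num [hA]⟩
    · norm_num [hD]
  have h3 : IsPreconnected (((C ∪ A) ∪ D) ∪ B) := by
    apply IsPreconnected.union (⟨1/2, -1⟩ : ℂ) _ _ h2 hBc
    · exact Or.inl (Or.inl ⟨by norm_num [hC], by norm_num [hC]⟩)
    · exact ⟨by norm_num [hB], by norm_num [hB]⟩
  have hset : {s : ℂ | 0 < s.re ∧ s ≠ 1} = ((C ∪ A) ∪ D) ∪ B := by
    ext s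
    simp only [Set.mem_union, Set.mem_inter_iff, Set.mem_setOf_eq, hA, hB, hC, hD,
      Complex.ext_iff, Complex.one_re, Complex.one_im, ne_eq, not_and]
    constructor
    · rintro ⟨hre, hne⟩
      rcases lt_trichotomy s.im 0 with him | him | him
      · exact Or.inr ⟨hre, him⟩
      · rcases lt_trichotomy s.re 1 with h | h | h
        · exact Or.inl (Or.inl (Or.inl ⟨hre, h⟩))
        · exact absurd him (hne h)
        · exact Or.inl (Or.inr h)
      · exact Or.inl (Or.inl (Or.inr ⟨hre, him⟩))
    · rintro (((⟨h1', h2'⟩ | ⟨h1', h2'⟩) | h') | ⟨h1', h2'⟩) <;>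
        exact ⟨by linarith, fun hre him => by linarith⟩
  rw [hset]
  exact h3

lemma Pfun_eq_zeta_ext {s : ℂ} (h0 : 0 < s.re) (h1 : s ≠ 1) :
    Pfun s = (1 - 2 ^ ((1:ℂ)-s)) * riemannZeta s := by
  set U : Set ℂ := {s : ℂ | 0 < s.re ∧ s ≠ 1} with hUdef
  have hUopen : IsOpen U := by
    have : U = {s : ℂ | 0 < s.re} ∩ {(1 : ℂ)}ᶜ := by
      ext t; simp [hUdef]
    rw [this]
    exact (isOpen_lt continuous_const continuous_re).inter isOpen_compl_singleton
  have hP : AnalyticOnNhd ℂ Pfun U := by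
    have : DifferentiableOn ℂ Pfun {s : ℂ | 0 < s.re} :=
      fun t ht => (Pfun_differentiableAt ht).differentiableWithinAt
    have := this.analyticOnNhd (isOpen_lt continuous_const continuous_re)
    exact fun t ht => this t ht.1
  have hG : AnalyticOnNhd ℂ (fun s => (1 - 2 ^ ((1:ℂ)-s)) * riemannZeta s) U := by
    have hdiff : DifferentiableOn ℂ (fun s => (1 - 2 ^ ((1:ℂ)-s)) * riemannZeta s) U := by
      intro t ht
      apply DifferentiableAt.differentiableWithinAt
      apply DifferentiableAt.mul
      · apply DifferentiableAt.sub (differentiableAt_const _)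
        exact (DifferentiableAt.const_cpow (by fun_prop) (Or.inl two_ne_zero))
      · exact differentiableAt_riemannZeta ht.2
    exact hdiff.analyticOnNhd hUopen
  have h2U : (2:ℂ) ∈ U := by
    constructor <;> norm_num [hUdef]
  have hev : Pfun =ᶠ[𝓝 (2:ℂ)] (fun s => (1 - 2 ^ ((1:ℂ)-s)) * riemannZeta s) := by
    have hopen : IsOpen {s : ℂ | 1 < s.re} := isOpen_lt continuous_const continuous_re
    have hmem : {s : ℂ | 1 < s.re} ∈ 𝓝 (2:ℂ) := hopen.mem_nhds (by norm_num)
    exact Filter.eventually_of_mem hmem (fun t ht => Pfun_eq_zeta ht)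
  exact hP.eqOn_of_preconnected_of_eventuallyEq hG preconnected_aux h2U hev ⟨h0, h1⟩

/-- ζ is real and negative on the real interval (0,1). -/
lemma zeta_neg_of_mem_Ioo {x : ℝ} (h0 : 0 < x) (h1 : x < 1) :
    ∃ t : ℝ, t < 0 ∧ riemannZeta (x : ℂ) = (t : ℂ) := by
  have hx1 : (x : ℂ) ≠ 1 := by
    simp only [ne_eq, Complex.ext_iff, Complex.ofReal_re, Complex.one_re]
    intro h; linarith [h.1]
  obtain ⟨t, ht, hP⟩ := Pfun_real_pos h0
  have hid := Pfun_eq_zeta_ext (by simpa using h0) hx1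
  set c : ℝ := 1 - (2:ℝ) ^ (1-x) with hc
  have hcval : ((1:ℂ) - 2 ^ ((1:ℂ)-(x:ℂ))) = (c : ℂ) := by
    have : ((1:ℂ)-(x:ℂ)) = ((1-x : ℝ) : ℂ) := by push_cast; ring
    rw [hc, this, show (2:ℂ) = ((2:ℝ):ℂ) by norm_num, ← Complex.ofReal_cpow (by norm_num)]
    push_cast
    ring
  have hcneg : c < 0 := by
    have : (1:ℝ) < (2:ℝ) ^ (1-x) :=
      (Real.one_lt_rpow_iff_of_pos (by norm_num)).mpr (Or.inl ⟨one_lt_two, by linarith⟩)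
    simp only [hc]
    linarith
  have hcne : (c : ℂ) ≠ 0 := by
    simp only [ne_eq, Complex.ofReal_eq_zero]
    linarith
  refine ⟨t / c, div_neg_of_pos_of_neg ht hcneg, ?_⟩
  rw [hP, hcval] at hid
  field_simp at hid ⊢
  rw [Complex.ofReal_div, hid, mul_div_cancel_left₀ _ hcne]

lemma Z_rec (r : ℕ) (s : ℂ) : Z (r+1) s =
    (1 / ((r : ℂ) + 1)) *
        ∑ i ∈ Finset.range (r + 1),
          (-1 : ℂ) ^ i * Z (r - i) s * riemannZeta (((i : ℂ) + 1) * s) := by rw [Z]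

lemma Z_zero (s : ℂ) : Z 0 s = 1 := by rw [Z]

lemma neg_one_pow_congr_mod {a b : ℕ} (h : a % 2 = b % 2) : (-1:ℝ)^a = (-1:ℝ)^b := by
  rw [← Nat.div_add_mod a 2, ← Nat.div_add_mod b 2, pow_add, pow_add, pow_mul, pow_mul, h]
  norm_num

-- exponent bookkeeping
def eaux (k i : ℕ) : ℕ := if i + 1 = k then 1 else 0
def paux (k r i : ℕ) : ℕ := (r+1)/k - (r-i)/k - eaux k i

lemma fact1 {k r i : ℕ} (hk : 1 ≤ k) (hi : i ≤ r) :
    (r-i)/k + eaux k i ≤ (r+1)/k := by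
  by_cases hik : i + 1 = k
  · have h1 : k ≤ r + 1 := by omega
    have h2 : (r+1)/k = (r+1-k)/k + 1 := Nat.div_eq_sub_div (by omega) h1
    have h3 : (r - i)/k = (r + 1 - k)/k := by rw [show r - i = r + 1 - k by omega]
    simp only [eaux, if_pos hik]
    omega
  · simp only [eaux, if_neg hik]
    exact Nat.div_le_div_right (by omega)

lemma fact_split {k r i : ℕ} (hk : 1 ≤ k) (hi : i ≤ r) :
    paux k r i + ((r-i)/k + eaux k i) = (r+1)/k := by
  have := fact1 (k := k) (r := r) (i := i) hk hi
  simp only [paux]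
  omega

lemma fact_k {k r i : ℕ} (hk : 1 ≤ k) (hi : i ≤ r) (hik : i + 1 = k) :
    (r+1)/k = (r-i)/k + 1 := by
  have h1 : k ≤ r + 1 := by omega
  have h2 : (r+1)/k = (r+1-k)/k + 1 := Nat.div_eq_sub_div (by omega) h1
  have h3 : (r - i)/k = (r + 1 - k)/k := by rw [show r - i = r + 1 - k by omega]
  omega

lemma fact_ne {k r i : ℕ} (hk : 1 ≤ k) (hi : i ≤ r) (hik : i + 1 ≠ k)
    (hp : paux k r i = 0) : (r+1)/k = (r-i)/k ∧ i + 1 < k := by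
  have h0 := fact1 (k := k) (r := r) (i := i) hk hi
  simp only [eaux, if_neg hik] at h0 ⊢
  have heq : (r+1)/k = (r-i)/k := by
    simp only [paux, eaux, if_neg hik] at hp
    omega
  refine ⟨heq, ?_⟩
  by_contra hcon
  have hki : k ≤ i + 1 := by omega
  have hky : k < i + 1 := by omega
  have h1 : k ≤ r + 1 := by omega
  have h2 : (r+1)/k = (r+1-k)/k + 1 := Nat.div_eq_sub_div (by omega) h1
  have h3 : (r-i)/k ≤ (r+1-k)/k := Nat.div_le_div_right (by omega)
  omega

lemma main_aux (k : ℕ) (hk : 1 ≤ k) (r : ℕ) :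
    ∃ C : ℝ, 0 < (-1:ℝ)^(r + r/k) * C ∧
      Tendsto (fun s : ℂ => ((k:ℂ)*s - 1)^(r/k) * Z r s) (𝓝[≠] (1/(k:ℂ)))
        (𝓝 ((C : ℂ))) := by
  induction r using Nat.strong_induction_on with
  | _ r ih =>
  cases r with
  | zero =>
      refine ⟨1, by norm_num, ?_⟩
      have hfun : (fun s : ℂ => ((k:ℂ)*s - 1)^(0/k) * Z 0 s) = fun _ => 1 := by
        funext s; simp [Z_zero]
      rw [hfun]
      simpa using tendsto_const_nhds
  | succ r =>
    have hk0 : (k:ℂ) ≠ 0 := Nat.cast_ne_zero.mpr (by omega)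
    have ihi : ∀ i : ℕ, ∃ C : ℝ, 0 < (-1:ℝ)^((r-i) + (r-i)/k) * C ∧
        Tendsto (fun s : ℂ => ((k:ℂ)*s - 1)^((r-i)/k) * Z (r-i) s) (𝓝[≠] (1/(k:ℂ)))
          (𝓝 ((C : ℂ))) := fun i => ih (r - i) (Nat.lt_succ_of_le (Nat.sub_le r i))
    choose G hGpos hGtend using ihi
    set zre : ℕ → ℝ := fun i => (riemannZeta ((((i:ℝ)+1)/(k:ℝ) : ℝ) : ℂ)).re with hzre
    set L : ℕ → ℝ := fun i =>
      (if paux k r i = 0 then 1 else 0) * G i * (if i + 1 = k then 1 else zre i) with hLdef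
    set C : ℝ := (1/((r:ℝ)+1)) * ∑ i ∈ Finset.range (r+1), (-1:ℝ)^i * L i with hC
    have key : ∀ i, i ≤ r → paux k r i = 0 →
        0 < (-1:ℝ)^((r+1) + (r+1)/k + i) * L i := by
      intro i hi hp
      by_cases hik : i + 1 = k
      · have hmi := fact_k hk hi hik
        have hpar : ((r+1) + (r+1)/k + i) % 2 = ((r-i) + (r-i)/k) % 2 := by omega
        simp only [hLdef, if_pos hik, if_pos hp, one_mul, mul_one]
        rw [neg_one_pow_congr_mod hpar]
        exact hGpos i
      · obtain ⟨hmi, hlt⟩ := fact_ne hk hi hik hp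
        obtain ⟨t, ht, hzeta⟩ := zeta_neg_of_mem_Ioo (x := ((i:ℝ)+1)/(k:ℝ))
          (by positivity) (by
            rw [div_lt_one (by positivity)]
            exact_mod_cast hlt)
        have hzre_neg : zre i < 0 := by
          rw [hzre]
          simp only
          rw [hzeta]
          simpa using ht
        have hpar : ((r+1) + (r+1)/k + i) % 2 = (((r-i) + (r-i)/k) + 1) % 2 := by omega
        simp only [hLdef, if_pos hp, if_neg hik, one_mul]
        rw [neg_one_pow_congr_mod hpar, pow_succ]
        have h1 : 0 < (-1:ℝ)^((r-i)+(r-i)/k) * G i := hGpos i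
        nlinarith [h1, hzre_neg]
    refine ⟨C, ?_, ?_⟩
    · -- sign
      have hterm : ∀ i ∈ Finset.range (r+1),
          0 ≤ (-1:ℝ)^((r+1) + (r+1)/k + i) * L i := by
        intro i hi
        have hi' : i ≤ r := Nat.lt_succ_iff.mp (Finset.mem_range.mp hi)
        by_cases hp : paux k r i = 0
        · exact (key i hi' hp).le
        · simp [hLdef, if_neg hp]
      have hstrict : ∃ i ∈ Finset.range (r+1),
          0 < (-1:ℝ)^((r+1) + (r+1)/k + i) * L i := by
        by_cases hkr : k ≤ r + 1
        · refine ⟨k-1, Finset.mem_range.mpr (by omega), ?_⟩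
          have hik : (k-1) + 1 = k := by omega
          have hmk := fact_k hk (show k-1 ≤ r by omega) hik
          refine key (k-1) (by omega) ?_
          simp only [paux, eaux, if_pos hik]
          omega
        · refine ⟨0, Finset.mem_range.mpr (by omega), ?_⟩
          have h0 : (r+1)/k = 0 := Nat.div_eq_of_lt (by omega)
          refine key 0 (by omega) ?_
          simp [paux, h0]
      have hsum : 0 < ∑ i ∈ Finset.range (r+1), (-1:ℝ)^((r+1)+(r+1)/k+i) * L i :=
        Finset.sum_pos' hterm hstrict
      have hrw : (-1:ℝ)^((r+1) + (r+1)/k) * C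
          = (1/((r:ℝ)+1)) * ∑ i ∈ Finset.range (r+1), (-1:ℝ)^((r+1)+(r+1)/k+i) * L i := by
        rw [hC, ← mul_assoc, mul_comm _ (1/((r:ℝ)+1)), mul_assoc, Finset.mul_sum]
        congr 1
        refine Finset.sum_congr rfl (fun i _ => ?_)
        rw [pow_add]
        ring
      rw [hrw]
      have hpos : (0:ℝ) < 1/((r:ℝ)+1) := by positivity
      exact mul_pos hpos hsum
    · -- tendsto
      set Lc : ℕ → ℂ := fun i =>
        (if paux k r i = 0 then (1:ℂ) else 0) * ((G i : ℝ) : ℂ)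
          * (if i + 1 = k then 1 else riemannZeta (((i:ℂ)+1) * (1/(k:ℂ)))) with hLc
      have hT : ∀ i ∈ Finset.range (r+1), Tendsto
          (fun s : ℂ => ((k:ℂ)*s - 1)^(paux k r i)
            * (((k:ℂ)*s - 1)^((r-i)/k) * Z (r-i) s)
            * (((k:ℂ)*s - 1)^(eaux k i) * riemannZeta (((i:ℂ)+1) * s)))
          (𝓝[≠] (1/(k:ℂ))) (𝓝 (Lc i)) := by
        intro i _
        have hval : (k:ℂ) * (1/(k:ℂ)) - 1 = 0 := by
          rw [mul_one_div_cancel hk0]; ring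
        have TA : Tendsto (fun s : ℂ => ((k:ℂ)*s - 1)^(paux k r i)) (𝓝[≠] (1/(k:ℂ)))
            (𝓝 (if paux k r i = 0 then (1:ℂ) else 0)) := by
          have hcont : Continuous (fun s : ℂ => ((k:ℂ)*s - 1)^(paux k r i)) := by fun_prop
          have h2 : Tendsto (fun s : ℂ => ((k:ℂ)*s - 1)^(paux k r i)) (𝓝[≠] (1/(k:ℂ)))
              (𝓝 (((k:ℂ)*(1/(k:ℂ)) - 1)^(paux k r i))) :=
            (hcont.tendsto (1/(k:ℂ))).mono_left nhdsWithin_le_nhds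
          rw [hval, zero_pow_eq] at h2
          exact h2
        have TD : Tendsto (fun s : ℂ => ((k:ℂ)*s - 1)^(eaux k i) * riemannZeta (((i:ℂ)+1) * s))
            (𝓝[≠] (1/(k:ℂ)))
            (𝓝 (if i + 1 = k then 1 else riemannZeta (((i:ℂ)+1) * (1/(k:ℂ))))) := by
          by_cases hik : i + 1 = k
          · have hcast : ((i:ℂ)+1) = (k:ℂ) := by exact_mod_cast congrArg (Nat.cast (R := ℂ)) hik
            have hmap : Tendsto (fun s : ℂ => (k:ℂ)*s) (𝓝[≠] (1/(k:ℂ))) (𝓝[≠] (1:ℂ)) := by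
              rw [tendsto_nhdsWithin_iff]
              constructor
              · have h3 : Tendsto (fun s : ℂ => (k:ℂ)*s) (𝓝 (1/(k:ℂ))) (𝓝 ((k:ℂ)*(1/(k:ℂ)))) :=
                  (continuous_const.mul continuous_id).tendsto _
                rw [mul_one_div_cancel hk0] at h3
                exact h3.mono_left nhdsWithin_le_nhds
              · refine eventually_mem_nhdsWithin.mono (fun x hx => ?_)
                simp only [Set.mem_compl_iff, Set.mem_singleton_iff] at hx ⊢
                intro h
                exact hx (eq_one_div_of_mul_eq_one_left (by rwa [mul_comm] at h))
            have h4 := riemannZeta_residue_one.comp hmap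
            simp only [eaux, if_pos hik, pow_one, Function.comp] at h4 ⊢
            rw [hcast]
            exact h4
          · have hne1 : ((i:ℂ)+1) * (1/(k:ℂ)) ≠ 1 := by
              intro h
              rw [mul_one_div, div_eq_one_iff_eq hk0] at h
              exact hik (by exact_mod_cast h)
            have hzcont : ContinuousAt riemannZeta (((i:ℂ)+1) * (1/(k:ℂ))) :=
              (differentiableAt_riemannZeta hne1).continuousAt
            have hinner : Tendsto (fun s : ℂ => ((i:ℂ)+1) * s) (𝓝[≠] (1/(k:ℂ)))
                (𝓝 (((i:ℂ)+1) * (1/(k:ℂ)))) :=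
              ((continuous_const.mul continuous_id).tendsto _).mono_left nhdsWithin_le_nhds
            have h5 := hzcont.tendsto.comp hinner
            simp only [eaux, if_neg hik, pow_zero, one_mul, Function.comp] at h5 ⊢
            exact h5
        exact (TA.mul (hGtend i)).mul TD
      have hsum := tendsto_finset_sum (Finset.range (r+1))
        (fun i hi => ((hT i hi).const_mul ((-1:ℂ)^i)))
      have hfinal := hsum.const_mul (1/((r:ℂ)+1))
      have hfun : ∀ s : ℂ, (1/((r:ℂ)+1)) * ∑ i ∈ Finset.range (r+1),
          (-1:ℂ)^i * (((k:ℂ)*s - 1)^(paux k r i)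
            * (((k:ℂ)*s - 1)^((r-i)/k) * Z (r-i) s)
            * (((k:ℂ)*s - 1)^(eaux k i) * riemannZeta (((i:ℂ)+1) * s)))
          = ((k:ℂ)*s - 1)^((r+1)/k) * Z (r+1) s := by
        intro s
        conv_rhs => rw [Z_rec, ← mul_assoc, mul_comm (((k:ℂ)*s - 1)^((r+1)/k)) (1/((r:ℂ)+1)),
          mul_assoc, Finset.mul_sum]
        congr 1
        refine Finset.sum_congr rfl (fun i hi => ?_)
        have hi' : i ≤ r := Nat.lt_succ_iff.mp (Finset.mem_range.mp hi)
        rw [← fact_split hk hi', pow_add, pow_add]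
        ring
      have hvalue : (1/((r:ℂ)+1)) * ∑ i ∈ Finset.range (r+1), (-1:ℂ)^i * Lc i = ((C:ℝ):ℂ) := by
        have hterm2 : ∀ i ∈ Finset.range (r+1),
            (-1:ℂ)^i * Lc i = ((((-1:ℝ)^i * L i : ℝ)) : ℂ) := by
          intro i hi
          have hi' : i ≤ r := Nat.lt_succ_iff.mp (Finset.mem_range.mp hi)
          by_cases hp : paux k r i = 0
          · by_cases hik : i + 1 = k
            · simp only [hLc, hLdef, if_pos hp, if_pos hik]
              push_cast
              ring
            · obtain ⟨_, hlt⟩ := fact_ne hk hi' hik hp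
              obtain ⟨t, ht, hzeta⟩ := zeta_neg_of_mem_Ioo (x := ((i:ℝ)+1)/(k:ℝ))
                (by positivity) (by
                  rw [div_lt_one (by positivity)]
                  exact_mod_cast hlt)
              have hcast2 : ((i:ℂ)+1) * (1/(k:ℂ)) = (((((i:ℝ)+1)/(k:ℝ)) : ℝ) : ℂ) := by
                push_cast
                ring
              have hzval : riemannZeta (((i:ℂ)+1) * (1/(k:ℂ))) = ((zre i : ℝ) : ℂ) := by
                rw [hcast2, hzeta, hzre]
                simp only
                rw [hzeta]
                simp
              simp only [hLc, hLdef, if_pos hp, if_neg hik]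
              rw [hzval]
              push_cast
              ring
          · simp only [hLc, hLdef, if_neg hp]
            push_cast
            ring
        rw [Finset.sum_congr rfl hterm2, hC]
        push_cast
        ring
      rw [← hvalue]
      exact hfinal.congr hfun

theorem multiple_zeta_asymptotic_at_pole (r k : ℕ) (hr : 1 ≤ r) (hk1 : 1 ≤ k)
    (hkr : k ≤ r) :
    ∃ C : ℝ, 0 < (-1 : ℝ) ^ (r + r / k) * C ∧
      Tendsto (fun s : ℂ => ((k : ℂ) * s - 1) ^ (r / k) * Z r s)
        (𝓝[≠] (1 / (k : ℂ))) (𝓝 (C : ℂ)) := by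
  exact main_aux k hk1 r
end

section
/- For every integer r ≥ 1, (rs − 1)·Z_r(s) tends to (−1)^{r−1}/r as s tends to 1/r (through s ≠ 1/r); that is, the leading coefficient C_r(r) of Z_r at its simple pole s = 1/r, in the variable (rs − 1), equals (−1)^{r−1}/r. -/
open Filter Topology Complex

lemma Z_continuousAt : ∀ (m : ℕ) (s₀ : ℂ),
    (∀ j : ℕ, 1 ≤ j → j ≤ m → (j : ℂ) * s₀ ≠ 1) → ContinuousAt (Z m) s₀ := by
  intro m
  induction m using Nat.strong_induction_on with
  | _ m ih =>
    match m with
    | 0 =>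
      intro s₀ _
      have h0 : Z 0 = fun _ : ℂ => (1 : ℂ) := by funext s; simp [Z]
      rw [h0]; exact continuousAt_const
    | m + 1 =>
      intro s₀ h
      have hsum : ContinuousAt (fun s => ∑ i ∈ Finset.range (m + 1),
          (-1 : ℂ) ^ i * Z (m - i) s * riemannZeta (((i : ℂ) + 1) * s)) s₀ := by
        apply tendsto_finset_sum
        intro i hi
        rw [Finset.mem_range] at hi
        have hZ : ContinuousAt (Z (m - i)) s₀ := by
          apply ih (m - i) (by omega)
          intro j hj1 hj2
          exact h j hj1 (by omega)
        have harg : ((i : ℂ) + 1) * s₀ ≠ 1 := by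
          have := h (i + 1) (by omega) (by omega)
          push_cast at this
          exact this
        have hzeta : ContinuousAt (fun s : ℂ => riemannZeta (((i : ℂ) + 1) * s)) s₀ :=
          (differentiableAt_riemannZeta harg).continuousAt.comp
            ((continuous_const.mul continuous_id).continuousAt)
        exact (continuousAt_const.mul hZ).mul hzeta
      have hZeq : Z (m + 1) = fun s => (1 / ((m : ℂ) + 1)) *
          ∑ i ∈ Finset.range (m + 1),
            (-1 : ℂ) ^ i * Z (m - i) s * riemannZeta (((i : ℂ) + 1) * s) := by
        funext s; simp [Z]
      rw [hZeq]
      exact continuousAt_const.mul hsum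

theorem multiple_zeta_leading_coeff_at_inv_r (r : ℕ) (hr : 1 ≤ r) :
    Tendsto (fun s : ℂ => ((r : ℂ) * s - 1) * Z r s) (𝓝[≠] (1 / (r : ℂ)))
      (𝓝 ((-1 : ℂ) ^ (r - 1) / (r : ℂ))) := by
  obtain ⟨k, rfl⟩ := Nat.exists_eq_succ_of_ne_zero (by omega : r ≠ 0)
  set c : ℂ := (k : ℂ) + 1 with hc
  have hc0 : c ≠ 0 := by
    have := Nat.cast_add_one_ne_zero (R := ℂ) k
    simpa [hc] using this
  set s₀ : ℂ := 1 / c with hs₀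
  have hcast : ((k + 1 : ℕ) : ℂ) = c := by push_cast [hc]; ring
  -- key pole limit
  have hmap : Tendsto (fun s : ℂ => c * s) (𝓝[≠] s₀) (𝓝[≠] (1 : ℂ)) := by
    rw [tendsto_nhdsWithin_iff]
    constructor
    · have hcont : Tendsto (fun s : ℂ => c * s) (𝓝 s₀) (𝓝 (c * s₀)) :=
        ((continuous_const.mul continuous_id).continuousAt)
      have h1 : c * s₀ = 1 := by
        rw [hs₀]; field_simp
      rw [h1] at hcont
      exact hcont.mono_left nhdsWithin_le_nhds
    · filter_upwards [self_mem_nhdsWithin] with s hs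
      simp only [Set.mem_compl_iff, Set.mem_singleton_iff] at hs ⊢
      intro hcon
      apply hs
      rw [hs₀, eq_div_iff hc0]
      linear_combination hcon
  have hpole : Tendsto (fun s : ℂ => (c * s - 1) * riemannZeta (c * s)) (𝓝[≠] s₀) (𝓝 1) :=
    riemannZeta_residue_one.comp hmap
  -- limit of each summand multiplied by (c*s - 1)
  have hterm : ∀ i ∈ Finset.range (k + 1),
      Tendsto (fun s : ℂ => (c * s - 1) *
          ((-1 : ℂ) ^ i * Z (k - i) s * riemannZeta (((i : ℂ) + 1) * s)))
        (𝓝[≠] s₀) (𝓝 (if i = k then (-1 : ℂ) ^ k else 0)) := by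
    intro i hi
    rw [Finset.mem_range] at hi
    by_cases hik : i = k
    · subst hik
      rw [if_pos rfl]
      have heq : (fun s : ℂ => (c * s - 1) *
          ((-1 : ℂ) ^ i * Z (i - i) s * riemannZeta (((i : ℂ) + 1) * s))) =
          fun s : ℂ => (-1 : ℂ) ^ i * ((c * s - 1) * riemannZeta (c * s)) := by
        funext s
        simp only [Nat.sub_self, Z, hc]
        ring
      rw [heq]
      have := hpole.const_mul ((-1 : ℂ) ^ i)
      simpa using this
    · rw [if_neg hik]
      have hik' : i < k := by omega
      have hZ : ContinuousAt (Z (k - i)) s₀ := by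
        apply Z_continuousAt
        intro j hj1 hj2
        intro hcon
        rw [hs₀, mul_one_div, div_eq_one_iff_eq hc0, hc] at hcon
        have hj : j = k + 1 := by exact_mod_cast hcon
        omega
      have harg : ((i : ℂ) + 1) * s₀ ≠ 1 := by
        intro hcon
        rw [hs₀, mul_one_div, div_eq_one_iff_eq hc0, hc] at hcon
        have hi' : i + 1 = k + 1 := by exact_mod_cast hcon
        omega
      have hzeta : ContinuousAt (fun s : ℂ => riemannZeta (((i : ℂ) + 1) * s)) s₀ :=
        (differentiableAt_riemannZeta harg).continuousAt.comp
          ((continuous_const.mul continuous_id).continuousAt)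
      have hfirst : Tendsto (fun s : ℂ => c * s - 1) (𝓝[≠] s₀) (𝓝 0) := by
        have h1 : c * s₀ - 1 = 0 := by rw [hs₀]; field_simp; ring
        have : Tendsto (fun s : ℂ => c * s - 1) (𝓝 s₀) (𝓝 (c * s₀ - 1)) :=
          ((continuous_const.mul continuous_id).sub continuous_const).continuousAt
        rw [h1] at this
        exact this.mono_left nhdsWithin_le_nhds
      have hrest : Tendsto (fun s : ℂ => (-1 : ℂ) ^ i * Z (k - i) s *
          riemannZeta (((i : ℂ) + 1) * s)) (𝓝[≠] s₀)
          (𝓝 ((-1 : ℂ) ^ i * Z (k - i) s₀ * riemannZeta (((i : ℂ) + 1) * s₀))) :=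
        (((continuousAt_const.mul hZ).mul hzeta)).tendsto.mono_left nhdsWithin_le_nhds
      have := hfirst.mul hrest
      simpa using this
  have hsum : Tendsto (fun s : ℂ => ∑ i ∈ Finset.range (k + 1),
      (c * s - 1) * ((-1 : ℂ) ^ i * Z (k - i) s * riemannZeta (((i : ℂ) + 1) * s)))
      (𝓝[≠] s₀) (𝓝 ((-1 : ℂ) ^ k)) := by
    have := tendsto_finset_sum (Finset.range (k + 1)) hterm
    simpa [Finset.sum_ite_eq' (Finset.range (k + 1)) k] using this
  have hfinal := hsum.const_mul (1 / c)
  have heq : (fun s : ℂ => ((↑(k + 1) : ℂ) * s - 1) * Z (k + 1) s) =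
      fun s : ℂ => (1 / c) * ∑ i ∈ Finset.range (k + 1),
        (c * s - 1) * ((-1 : ℂ) ^ i * Z (k - i) s * riemannZeta (((i : ℂ) + 1) * s)) := by
    funext s
    simp only [Z, hcast]
    rw [mul_left_comm, Finset.mul_sum]
  rw [heq]
  have hval : (1 / c) * (-1 : ℂ) ^ k = (-1 : ℂ) ^ (k + 1 - 1) / ((k + 1 : ℕ) : ℂ) := by
    rw [hcast]
    simp only [Nat.add_sub_cancel]
    ring
  rw [← hval]
  have hpt : (1 : ℂ) / ((k + 1 : ℕ) : ℂ) = s₀ := by rw [hs₀, hcast]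
  rw [hpt]
  exact hfinal
end

section
/- For every integer r ≥ 1, (s − 1)^r · Z_r(s) tends to 1/r! as s tends to 1 (through s ≠ 1); that is, the leading coefficient C_r(1) of Z_r at its pole of order r at s = 1, in the variable (s − 1), equals 1/r!. -/
open Filter Topology Complex

lemma Z_tendsto (r : ℕ) : Tendsto (fun s : ℂ => (s - 1) ^ r * Z r s) (𝓝[≠] (1 : ℂ))
    (𝓝 (1 / (Nat.factorial r : ℂ))) := by
  induction r using Nat.strong_induction_on with
  | _ r IH =>
    match r with
    | 0 => simpa [Z] using (tendsto_const_nhds :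
        Tendsto (fun _ : ℂ => (1 : ℂ)) (𝓝[≠] (1 : ℂ)) (𝓝 1))
    | r + 1 =>
      set term : ℕ → ℂ → ℂ := fun i s =>
        (-1 : ℂ) ^ i * ((s - 1) ^ (r - i) * Z (r - i) s)
          * ((s - 1) ^ (i + 1) * riemannZeta (((i : ℂ) + 1) * s)) with hterm
      have key : ∀ i ∈ Finset.range (r + 1),
          Tendsto (term i) (𝓝[≠] (1 : ℂ))
            (𝓝 (if i = 0 then 1 / (Nat.factorial r : ℂ) else 0)) := by
        intro i hi
        rcases Nat.eq_zero_or_pos i with h0 | h0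
        · subst h0
          simp only [hterm, pow_zero, one_mul, if_pos rfl, Nat.sub_zero, Nat.cast_zero,
            zero_add, pow_one]
          simpa using ((IH r (Nat.lt_succ_self r)).mul riemannZeta_residue_one)
        · have h1 : Tendsto (fun s : ℂ => (s - 1) ^ (i + 1)) (𝓝[≠] (1 : ℂ)) (𝓝 0) := by
            have hc : ContinuousAt (fun s : ℂ => (s - 1) ^ (i + 1)) 1 := by fun_prop
            have := hc.tendsto.mono_left (nhdsWithin_le_nhds (s := {(1 : ℂ)}ᶜ))
            simpa using this
          have hne : ((i : ℂ) + 1) * 1 ≠ 1 := by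
            rw [mul_one]
            intro h
            have : (i : ℂ) = 0 := by linear_combination h
            exact h0.ne' (by exact_mod_cast this)
          have h2 : Tendsto (fun s : ℂ => riemannZeta (((i : ℂ) + 1) * s)) (𝓝[≠] (1 : ℂ))
              (𝓝 (riemannZeta (((i : ℂ) + 1) * 1))) := by
            have hζ : ContinuousAt riemannZeta (((i : ℂ) + 1) * 1) :=
              (differentiableAt_riemannZeta hne).continuousAt
            have hm : ContinuousAt (fun s : ℂ => ((i : ℂ) + 1) * s) 1 := by fun_prop
            exact (hζ.comp hm).tendsto.mono_left nhdsWithin_le_nhds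
          have := ((IH (r - i) (by omega)).const_mul ((-1 : ℂ) ^ i)).mul (h1.mul h2)
          rw [if_neg h0.ne']
          simpa [hterm] using this
      have sum_t := tendsto_finset_sum (Finset.range (r + 1)) key
      have hsum : (∑ i ∈ Finset.range (r + 1),
          if i = 0 then 1 / (Nat.factorial r : ℂ) else 0) = 1 / (Nat.factorial r : ℂ) := by
        rw [Finset.sum_ite_eq' (Finset.range (r + 1)) 0 fun _ => 1 / (Nat.factorial r : ℂ)]
        simp
      rw [hsum] at sum_t
      have final := sum_t.const_mul (1 / ((r : ℂ) + 1))
      have hfun : ∀ s : ℂ,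
          (1 / ((r : ℂ) + 1)) * ∑ i ∈ Finset.range (r + 1), term i s
            = (s - 1) ^ (r + 1) * Z (r + 1) s := by
        intro s
        rw [show Z (r + 1) s = (1 / ((r : ℂ) + 1)) * ∑ i ∈ Finset.range (r + 1),
            (-1 : ℂ) ^ i * Z (r - i) s * riemannZeta (((i : ℂ) + 1) * s) by
              rw [Z],
          mul_left_comm ((s - 1) ^ (r + 1))]
        congr 1
        rw [Finset.mul_sum]
        refine Finset.sum_congr rfl fun i hi => ?_
        have hle : i ≤ r := Nat.lt_succ_iff.mp (Finset.mem_range.mp hi)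
        have hp : (s - 1) ^ (r + 1) = (s - 1) ^ (r - i) * (s - 1) ^ (i + 1) := by
          rw [← pow_add]; congr 1; omega
        rw [hp, hterm]; ring
      have hval : (1 / ((r : ℂ) + 1)) * (1 / (Nat.factorial r : ℂ))
          = 1 / (Nat.factorial (r + 1) : ℂ) := by
        rw [Nat.factorial_succ]
        push_cast
        rw [div_mul_div_comm, one_mul]
      rw [hval] at final
      exact final.congr hfun

theorem multiple_zeta_leading_coeff_at_one (r : ℕ) (hr : 1 ≤ r) :
    Tendsto (fun s : ℂ => (s - 1) ^ r * Z r s) (𝓝[≠] (1 : ℂ))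
      (𝓝 (1 / (Nat.factorial r : ℂ))) := by
  exact Z_tendsto r
end

section
/- Let r ≥ 3 and let k be an integer with r/2 < k ≤ r − 1. Then (ks − 1)·Z_r(s) tends to ((−1)^{k−1}/k)·Z_{r−k}(1/k) as s tends to 1/k (through s ≠ 1/k); that is, the leading coefficient C_r(k) of Z_r at its simple pole s = 1/k, in the variable (ks − 1), equals ((−1)^{k−1}/k)·Z_{r−k}(1/k). -/
open Filter Topology Complex

lemma mul_inv_ne_one {k j : ℕ} (hj : j ≠ k) (hk : k ≠ 0) :
    ((j : ℂ)) * (1 / (k : ℂ)) ≠ 1 := by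
  have hk' : (k : ℂ) ≠ 0 := Nat.cast_ne_zero.2 hk
  intro h
  apply hj
  field_simp at h
  exact_mod_cast h

lemma contZ {k : ℕ} (hk : k ≠ 0) : ∀ m, m < k → ContinuousAt (Z m) (1 / (k : ℂ)) := by
  intro m
  induction m using Nat.strong_induction_on with
  | _ m ih =>
    intro hm
    match m with
    | 0 =>
      have : Z 0 = fun _ : ℂ => (1:ℂ) := by funext s; rw [Z]
      rw [this]; exact continuousAt_const
    | n + 1 =>
      have key : ContinuousAt (fun s : ℂ => (1 / ((n : ℂ) + 1)) *
          ∑ i ∈ Finset.range (n + 1),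
            (-1 : ℂ) ^ i * Z (n - i) s * riemannZeta (((i : ℂ) + 1) * s)) (1 / (k:ℂ)) := by
        refine continuousAt_const.mul ?_
        refine tendsto_finset_sum _ ?_
        intro i hi
        simp only [Finset.mem_range] at hi
        have h1 : ContinuousAt (Z (n - i)) (1 / (k:ℂ)) :=
          ih (n - i) (by omega) (by omega)
        have h2 : ContinuousAt (fun s : ℂ => riemannZeta (((i : ℂ) + 1) * s)) (1 / (k:ℂ)) := by
          apply ContinuousAt.comp
          · apply (differentiableAt_riemannZeta ?_).continuousAt
            have : ((i : ℂ) + 1) = ((i + 1 : ℕ) : ℂ) := by push_cast; ring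
            rw [this]
            exact mul_inv_ne_one (by omega) hk
          · fun_prop
        exact (continuousAt_const.mul h1).mul h2
      have heq : (fun s : ℂ => Z (n+1) s) = (fun s : ℂ => (1 / ((n : ℂ) + 1)) *
          ∑ i ∈ Finset.range (n + 1),
            (-1 : ℂ) ^ i * Z (n - i) s * riemannZeta (((i : ℂ) + 1) * s)) := by
        funext s; rw [Z]
      show ContinuousAt (fun s => Z (n+1) s) _
      rw [heq]; exact key

lemma zeta_tendsto {k : ℕ} (hk : k ≠ 0) :
    Tendsto (fun s : ℂ => ((k : ℂ) * s - 1) * riemannZeta ((k : ℂ) * s))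
      (𝓝[≠] (1 / (k : ℂ))) (𝓝 1) := by
  have hk' : (k : ℂ) ≠ 0 := Nat.cast_ne_zero.2 hk
  have hmap : Tendsto (fun s : ℂ => (k : ℂ) * s) (𝓝[≠] (1 / (k:ℂ))) (𝓝[≠] (1:ℂ)) := by
    rw [nhdsWithin, nhdsWithin]
    apply Tendsto.inf
    · have hc : ContinuousAt (fun s : ℂ => (k : ℂ) * s) (1/(k:ℂ)) := by fun_prop
      have := hc.tendsto
      simpa [one_div, mul_inv_cancel₀ hk'] using this
    · refine tendsto_principal_principal.2 ?_
      intro s hs h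
      apply hs
      simp only [Set.mem_compl_iff, Set.mem_singleton_iff] at *
      field_simp at h ⊢
      linear_combination h
  exact riemannZeta_residue_one.comp hmap

lemma zeta_cont_tendsto {k i : ℕ} (hk : k ≠ 0) (hik : i + 1 ≠ k) :
    Tendsto (fun s : ℂ => riemannZeta (((i:ℂ) + 1) * s)) (𝓝[≠] (1 / (k : ℂ)))
      (𝓝 (riemannZeta (((i:ℂ) + 1) * (1 / (k:ℂ))))) := by
  have hcast : ((i : ℂ) + 1) = ((i + 1 : ℕ) : ℂ) := by push_cast; ring
  have hne : ((i:ℂ) + 1) * (1 / (k:ℂ)) ≠ 1 := by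
    rw [hcast]; exact mul_inv_ne_one hik hk
  have : ContinuousAt (fun s : ℂ => riemannZeta (((i:ℂ) + 1) * s)) (1 / (k:ℂ)) := by
    apply ContinuousAt.comp
    · exact (differentiableAt_riemannZeta hne).continuousAt
    · fun_prop
  exact this.tendsto.mono_left nhdsWithin_le_nhds

lemma mainB {k : ℕ} (hk1 : 1 ≤ k) : ∀ m, k ≤ m → m < 2 * k →
    Tendsto (fun s : ℂ => ((k:ℂ) * s - 1) * Z m s) (𝓝[≠] (1 / (k:ℂ)))
      (𝓝 ((-1:ℂ)^(k-1) / (k:ℂ) * Z (m - k) (1 / (k:ℂ)))) := by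
  intro m
  induction m using Nat.strong_induction_on with
  | _ m ih =>
    intro hkm hm2
    have hk : k ≠ 0 := by omega
    have hkC : (k:ℂ) ≠ 0 := Nat.cast_ne_zero.2 hk
    obtain ⟨n, rfl⟩ : ∃ n, m = n + 1 := ⟨m - 1, by omega⟩
    set L : ℕ → ℂ := fun i =>
      if i + 1 = k then (-1:ℂ)^i * Z (n - i) (1/(k:ℂ))
      else if k ≤ n - i then
        (-1:ℂ)^i * ((-1:ℂ)^(k-1) / (k:ℂ) * Z (n - i - k) (1/(k:ℂ))) *
          riemannZeta (((i:ℂ) + 1) * (1/(k:ℂ)))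
      else 0 with hLdef
    have hstep : Tendsto (fun s : ℂ => ((k:ℂ) * s - 1) * Z (n+1) s) (𝓝[≠] (1/(k:ℂ)))
        (𝓝 ((1/((n:ℂ)+1)) * ∑ i ∈ Finset.range (n+1), L i)) := by
      have heq : (fun s : ℂ => ((k:ℂ) * s - 1) * Z (n+1) s) =
          fun s : ℂ => (1/((n:ℂ)+1)) * ∑ i ∈ Finset.range (n+1),
            (((k:ℂ) * s - 1) * ((-1:ℂ)^i * Z (n-i) s * riemannZeta (((i:ℂ)+1) * s))) := by
        funext s; rw [Z, mul_left_comm, Finset.mul_sum]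
      rw [heq]
      apply Tendsto.const_mul
      apply tendsto_finset_sum
      intro i hi
      simp only [Finset.mem_range] at hi
      by_cases hik : i + 1 = k
      · -- pole term
        have hni : n - i < k := by omega
        have harr : (fun s : ℂ => ((k:ℂ)*s-1) * ((-1:ℂ)^i * Z (n-i) s * riemannZeta (((i:ℂ)+1)*s))) =
            fun s : ℂ => (-1:ℂ)^i * (Z (n-i) s * (((k:ℂ)*s-1) * riemannZeta (((i:ℂ)+1)*s))) := by
          funext s; ring
        rw [harr]
        have hic : ((i:ℂ)+1) = (k:ℂ) := by exact_mod_cast hik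
        rw [hic]
        have hz : Tendsto (Z (n-i)) (𝓝[≠] (1/(k:ℂ))) (𝓝 (Z (n-i) (1/(k:ℂ)))) :=
          (contZ hk (n-i) hni).tendsto.mono_left nhdsWithin_le_nhds
        have := tendsto_const_nhds (x := ((-1:ℂ)^i)) (f := 𝓝[≠] (1/(k:ℂ))) |>.mul
          (hz.mul (zeta_tendsto hk))
        simp only [hLdef, if_pos hik]
        simpa using this
      · by_cases h2 : k ≤ n - i
        · have harr : (fun s : ℂ => ((k:ℂ)*s-1) * ((-1:ℂ)^i * Z (n-i) s * riemannZeta (((i:ℂ)+1)*s))) =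
              fun s : ℂ => (-1:ℂ)^i * ((((k:ℂ)*s-1) * Z (n-i) s) * riemannZeta (((i:ℂ)+1)*s)) := by
            funext s; ring
          rw [harr]
          have hih := ih (n-i) (by omega) h2 (by omega)
          have := tendsto_const_nhds (x := ((-1:ℂ)^i)) (f := 𝓝[≠] (1/(k:ℂ))) |>.mul
            (hih.mul (zeta_cont_tendsto hk hik))
          simp only [hLdef, if_neg hik, if_pos h2]
          simpa [mul_assoc] using this
        · -- regular vanishing term
          have hni : n - i < k := by omega
          have h0 : Tendsto (fun s : ℂ => (k:ℂ)*s - 1) (𝓝[≠] (1/(k:ℂ))) (𝓝 0) := by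
            have hc : ContinuousAt (fun s : ℂ => (k:ℂ)*s - 1) (1/(k:ℂ)) := by fun_prop
            have h3 : Tendsto (fun s : ℂ => (k:ℂ)*s - 1) (𝓝[≠] (1/(k:ℂ)))
                (𝓝 ((k:ℂ)*(1/(k:ℂ)) - 1)) := hc.tendsto.mono_left nhdsWithin_le_nhds
            simpa [one_div, mul_inv_cancel₀ hkC] using h3
          have hz : Tendsto (Z (n-i)) (𝓝[≠] (1/(k:ℂ))) (𝓝 (Z (n-i) (1/(k:ℂ)))) :=
            (contZ hk (n-i) hni).tendsto.mono_left nhdsWithin_le_nhds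
          have := h0.mul ((tendsto_const_nhds (x := ((-1:ℂ)^i))
            (f := 𝓝[≠] (1/(k:ℂ)))).mul hz |>.mul (zeta_cont_tendsto hk hik))
          simp only [hLdef, if_neg hik, if_neg h2]
          simpa using this
    -- now algebra: identify the limit value
    have halg : (1/((n:ℂ)+1)) * ∑ i ∈ Finset.range (n+1), L i =
        (-1:ℂ)^(k-1) / (k:ℂ) * Z (n + 1 - k) (1/(k:ℂ)) := by
      rcases eq_or_lt_of_le hkm with hcase | hcase
      · -- k = n+1
        have hsum : ∑ i ∈ Finset.range (n+1), L i = L n := by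
          apply Finset.sum_eq_single_of_mem n (Finset.self_mem_range_succ n)
          intro b hb hbn
          simp only [Finset.mem_range] at hb
          simp only [hLdef]
          rw [if_neg (by omega), if_neg (by omega)]
        rw [hsum]
        simp only [hLdef, if_pos (by omega : n + 1 = k)]
        have h00 : n - n = 0 := by omega
        have h01 : n + 1 - k = 0 := by omega
        rw [h00, h01]
        have hZ0 : Z 0 (1/(k:ℂ)) = 1 := by rw [Z]
        rw [hZ0]
        have hkn : (k:ℂ) = (n:ℂ) + 1 := by exact_mod_cast hcase
        have hk1n : k - 1 = n := by omega
        rw [hk1n, hkn]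
        ring
      · -- k < n+1, i.e. k ≤ n
        have hkn : k ≤ n := by omega
        set p := n - k with hp
        have hpn : n + 1 - k = p + 1 := by omega
        have hins : insert (k-1) (Finset.range (p+1)) ⊆ Finset.range (n+1) := by
          intro x hx
          simp only [Finset.mem_insert, Finset.mem_range] at hx ⊢
          omega
        have hnotmem : (k-1) ∉ Finset.range (p+1) := by
          simp only [Finset.mem_range]; omega
        have hvanish : ∀ x ∈ Finset.range (n+1), x ∉ insert (k-1) (Finset.range (p+1)) → L x = 0 := by
          intro x hx hxn
          simp only [Finset.mem_insert, Finset.mem_range, not_or] at hxn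
          simp only [Finset.mem_range] at hx
          simp only [hLdef]
          rw [if_neg (by omega), if_neg (by omega)]
        have hsum : ∑ i ∈ Finset.range (n+1), L i = ∑ i ∈ insert (k-1) (Finset.range (p+1)), L i :=
          (Finset.sum_subset hins hvanish).symm
        rw [hsum, Finset.sum_insert hnotmem]
        have hLk : L (k-1) = (-1:ℂ)^(k-1) * Z (p+1) (1/(k:ℂ)) := by
          simp only [hLdef]
          rw [if_pos (by omega)]
          congr 2
          omega
        have hLsum : ∑ i ∈ Finset.range (p+1), L i =
            ((-1:ℂ)^(k-1) / (k:ℂ)) * ∑ i ∈ Finset.range (p+1),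
              (-1:ℂ)^i * Z (p - i) (1/(k:ℂ)) * riemannZeta (((i:ℂ)+1) * (1/(k:ℂ))) := by
          rw [Finset.mul_sum]
          apply Finset.sum_congr rfl
          intro i hi
          simp only [Finset.mem_range] at hi
          simp only [hLdef]
          rw [if_neg (by omega), if_pos (by omega)]
          have : n - i - k = p - i := by omega
          rw [this]
          ring
        have hZp : ∑ i ∈ Finset.range (p+1),
            (-1:ℂ)^i * Z (p - i) (1/(k:ℂ)) * riemannZeta (((i:ℂ)+1) * (1/(k:ℂ))) =
            ((p:ℂ)+1) * Z (p+1) (1/(k:ℂ)) := by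
          rw [Z]
          have hp1 : ((p:ℂ)+1) ≠ 0 := by intro h; norm_cast at h
          field_simp
        have hcast : ((p:ℂ) + 1) + (k:ℂ) = (n:ℂ) + 1 := by
          have : p + 1 + k = n + 1 := by omega
          exact_mod_cast this
        have hn1 : ((n:ℂ)+1) ≠ 0 := by intro h; norm_cast at h
        have hpk : ((p:ℂ) + 1) + (k:ℂ) ≠ 0 := hcast ▸ hn1
        rw [hLk, hLsum, hZp, hpn, ← hcast]
        field_simp
        ring
    rw [← halg]
    exact hstep

theorem multiple_zeta_leading_coeff_large_k (r k : ℕ) (hr : 3 ≤ r)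
    (hk : r < 2 * k) (hkr : k ≤ r - 1) :
    Tendsto (fun s : ℂ => ((k : ℂ) * s - 1) * Z r s) (𝓝[≠] (1 / (k : ℂ)))
      (𝓝 ((-1 : ℂ) ^ (k - 1) / (k : ℂ) * Z (r - k) (1 / (k : ℂ)))) := by
  exact mainB (by omega) r (by omega) hk
end

section
/- Let k ≥ 2 and r ≥ 1 be integers. Then (ks − 1)^r · Z_{kr}(s) tends to (−1)^{(k−1)r}/(k^r · r!) as s tends to 1/k (through s ≠ 1/k); that is, the leading coefficient C_{kr}(k) of Z_{kr} at its pole of order r at s = 1/k, in the variable (ks − 1), equals (−1)^{(k−1)r}/(k^r · r!). -/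
open Filter Topology Complex

lemma Z_succ (n : ℕ) (s : ℂ) : Z (n + 1) s = (1 / ((n : ℂ) + 1)) *
    ∑ i ∈ Finset.range (n + 1),
      (-1 : ℂ) ^ i * Z (n - i) s * riemannZeta (((i : ℂ) + 1) * s) := by rw [Z]

lemma Z_aux (k : ℕ) (hk : 2 ≤ k) : ∀ m : ℕ,
    ∃ L : ℂ, Tendsto (fun s : ℂ => ((k : ℂ) * s - 1) ^ (m / k) * Z m s)
      (𝓝[≠] (1 / (k : ℂ))) (𝓝 L) ∧
      ∀ r : ℕ, m = k * r →
        L = (-1 : ℂ) ^ ((k - 1) * r) / ((k : ℂ) ^ r * (Nat.factorial r : ℂ)) := by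
  have hk0 : (0:ℕ) < k := by omega
  have hkC : (k : ℂ) ≠ 0 := by exact_mod_cast hk0.ne'
  have h1k : (k : ℂ) * (1 / (k : ℂ)) = 1 := mul_one_div_cancel hkC
  have hmap : Tendsto (fun s : ℂ => (k : ℂ) * s) (𝓝[≠] (1 / (k : ℂ))) (𝓝[≠] (1 : ℂ)) := by
    refine tendsto_nhdsWithin_of_tendsto_nhds_of_eventually_within _ ?_ ?_
    · have := (continuous_const.mul continuous_id :
        Continuous fun s : ℂ => (k : ℂ) * s).tendsto (1 / (k : ℂ))
      have this : Tendsto (fun s : ℂ => (k : ℂ) * s) (𝓝 (1 / (k : ℂ)))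
          (𝓝 ((k : ℂ) * (1 / (k : ℂ)))) := this
      rw [show (k : ℂ) * (1 / (k : ℂ)) = 1 from h1k] at this
      exact this.mono_left nhdsWithin_le_nhds
    · filter_upwards [self_mem_nhdsWithin] with s hs
      intro hcon
      have hcon' : (k : ℂ) * s = 1 := hcon
      exact hs (show s = 1 / (k : ℂ) from by field_simp; linear_combination hcon')
  have hres : Tendsto (fun s : ℂ => ((k : ℂ) * s - 1) * riemannZeta ((k : ℂ) * s))
      (𝓝[≠] (1 / (k : ℂ))) (𝓝 1) := riemannZeta_residue_one.comp hmap
  have hpow : ∀ d : ℕ, Tendsto (fun s : ℂ => ((k : ℂ) * s - 1) ^ d)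
      (𝓝[≠] (1 / (k : ℂ))) (𝓝 ((0:ℂ) ^ d)) := by
    intro d
    have hc : Continuous fun s : ℂ => ((k : ℂ) * s - 1) ^ d := by fun_prop
    have := hc.tendsto (1 / (k : ℂ))
    rw [show (k : ℂ) * (1 / (k : ℂ)) - 1 = 0 by rw [h1k]; ring] at this
    exact this.mono_left nhdsWithin_le_nhds
  have hzeta : ∀ i : ℕ, i + 1 ≠ k →
      Tendsto (fun s : ℂ => riemannZeta (((i : ℂ) + 1) * s)) (𝓝[≠] (1 / (k : ℂ)))
        (𝓝 (riemannZeta (((i : ℂ) + 1) * (1 / (k : ℂ))))) := by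
    intro i hik
    have hne : ((i : ℂ) + 1) * (1 / (k : ℂ)) ≠ 1 := by
      intro hcon
      apply hik
      have h2 : ((i : ℂ) + 1) = (k : ℂ) := by
        field_simp at hcon
        linear_combination hcon
      have h3 : ((i + 1 : ℕ) : ℂ) = ((k : ℕ) : ℂ) := by push_cast; exact h2
      exact Nat.cast_inj.mp h3
    have hc : ContinuousAt riemannZeta (((i : ℂ) + 1) * (1 / (k : ℂ))) :=
      (differentiableAt_riemannZeta hne).continuousAt
    have hm : Tendsto (fun s : ℂ => ((i : ℂ) + 1) * s) (𝓝[≠] (1 / (k : ℂ)))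
        (𝓝 (((i : ℂ) + 1) * (1 / (k : ℂ)))) :=
      ((continuous_const.mul continuous_id).tendsto _).mono_left nhdsWithin_le_nhds
    exact hc.tendsto.comp hm
  intro m
  induction m using Nat.strong_induction_on with
  | _ m IH =>
    choose Lf hLf hLval using fun m' (h : m' < m) => IH m' h
    obtain _ | n := m
    · refine ⟨1, ?_, ?_⟩
      · simpa [Z] using (tendsto_const_nhds :
          Tendsto (fun _ : ℂ => (1:ℂ)) (𝓝[≠] (1 / (k : ℂ))) (𝓝 1))
      · intro r hr
        have : r = 0 := by
          rcases Nat.mul_eq_zero.mp hr.symm with h | h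
          · omega
          · exact h
        simp [this]
    · set N := (n + 1) / k with hN
      have hlt : ∀ i : ℕ, n - i < n + 1 := fun i => Nat.lt_succ_of_le (Nat.sub_le n i)
      set T : ℕ → ℂ := fun i =>
        if i + 1 = k then (-1 : ℂ) ^ i * (Lf (n - i) (hlt i)) * 1
        else (-1 : ℂ) ^ i * ((0:ℂ) ^ (N - (n - i) / k) * Lf (n - i) (hlt i)) *
          riemannZeta (((i : ℂ) + 1) * (1 / (k : ℂ))) with hT
      have hterm : ∀ i ∈ Finset.range (n + 1),
          Tendsto (fun s : ℂ => (-1 : ℂ) ^ i * (((k : ℂ) * s - 1) ^ N * Z (n - i) s) *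
            riemannZeta (((i : ℂ) + 1) * s)) (𝓝[≠] (1 / (k : ℂ))) (𝓝 (T i)) := by
        intro i hi
        rw [Finset.mem_range] at hi
        by_cases hik : i + 1 = k
        · have hkle : k ≤ n + 1 := by omega
          have hni : n - i = n + 1 - k := by omega
          have hNsplit : N = (n - i) / k + 1 := by
            rw [hN, Nat.div_eq_sub_div hk0 hkle, hni]
          have hcast : ((i : ℂ) + 1) = (k : ℂ) := by
            have : ((i + 1 : ℕ) : ℂ) = ((k : ℕ) : ℂ) := by rw [hik]
            push_cast at this; linear_combination this
          have h1 : Tendsto (fun s : ℂ => ((-1 : ℂ) ^ i *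
              (((k : ℂ) * s - 1) ^ ((n - i) / k) * Z (n - i) s)) *
              (((k : ℂ) * s - 1) * riemannZeta ((k : ℂ) * s)))
              (𝓝[≠] (1 / (k : ℂ))) (𝓝 ((-1 : ℂ) ^ i * Lf (n - i) (hlt i) * 1)) :=
            ((tendsto_const_nhds.mul (hLf (n - i) (hlt i))).mul hres)
          rw [hT]; simp only [if_pos hik]
          refine h1.congr fun s => ?_
          rw [hcast, hNsplit, pow_succ]
          ring
        · have hle : (n - i) / k ≤ N := Nat.div_le_div_right (by omega)
          have hNsplit : N = (N - (n - i) / k) + (n - i) / k := by omega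
          have h1 : Tendsto (fun s : ℂ => (-1 : ℂ) ^ i *
              (((k : ℂ) * s - 1) ^ (N - (n - i) / k) *
                (((k : ℂ) * s - 1) ^ ((n - i) / k) * Z (n - i) s)) *
              riemannZeta (((i : ℂ) + 1) * s)) (𝓝[≠] (1 / (k : ℂ)))
              (𝓝 ((-1 : ℂ) ^ i * ((0:ℂ) ^ (N - (n - i) / k) * Lf (n - i) (hlt i)) *
                riemannZeta (((i : ℂ) + 1) * (1 / (k : ℂ))))) :=
            (tendsto_const_nhds.mul ((hpow _).mul (hLf (n - i) (hlt i)))).mul (hzeta i hik)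
          rw [hT]; simp only [if_neg hik]
          refine h1.congr fun s => ?_
          conv_rhs => rw [hNsplit]
          rw [pow_add]
          ring
      have hsum : Tendsto (fun s : ℂ => ∑ i ∈ Finset.range (n + 1),
          (-1 : ℂ) ^ i * (((k : ℂ) * s - 1) ^ N * Z (n - i) s) *
            riemannZeta (((i : ℂ) + 1) * s)) (𝓝[≠] (1 / (k : ℂ)))
          (𝓝 (∑ i ∈ Finset.range (n + 1), T i)) :=
        tendsto_finset_sum _ hterm
      have hmain : Tendsto (fun s : ℂ => ((k : ℂ) * s - 1) ^ N * Z (n + 1) s)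
          (𝓝[≠] (1 / (k : ℂ)))
          (𝓝 ((1 / ((n : ℂ) + 1)) * ∑ i ∈ Finset.range (n + 1), T i)) := by
        refine (hsum.const_mul (1 / ((n : ℂ) + 1))).congr fun s => ?_
        rw [Z_succ, mul_left_comm]
        congr 1
        rw [Finset.mul_sum]
        exact Finset.sum_congr rfl fun i _ => by ring
      refine ⟨_, hmain, ?_⟩
      intro r hr
      have hrpos : 1 ≤ r := by
        rcases Nat.eq_zero_or_pos r with h | h
        · subst h; simp at hr
        · exact h
      obtain ⟨r', rfl⟩ : ∃ r', r = r' + 1 := ⟨r - 1, by omega⟩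
      have hmul2 : (r' + 1) * k = k * r' + k := by ring
      have hx : n + 1 = k * r' + k := by rw [hr, Nat.mul_succ]
      have hNr : N = r' + 1 := by
        rw [hN, hr, Nat.mul_div_cancel_left _ hk0]
      have hk1n : k - 1 < n + 1 := by omega
      have hsum_eq : ∑ i ∈ Finset.range (n + 1), T i = T (k - 1) := by
        refine Finset.sum_eq_single_of_mem _ (Finset.mem_range.mpr hk1n) fun i hi hne => ?_
        rw [Finset.mem_range] at hi
        have hik : i + 1 ≠ k := by omega
        have hdpos : (n - i) / k < N := by
          rw [hNr, Nat.div_lt_iff_lt_mul hk0, hmul2]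
          omega
        rw [hT]; simp only [if_neg hik]
        rw [zero_pow (by omega : N - (n - i) / k ≠ 0)]
        ring
      have hk1 : k - 1 + 1 = k := by omega
      have hnk : n - (k - 1) = k * r' := by omega
      have hTval : T (k - 1) = (-1 : ℂ) ^ (k - 1) *
          ((-1 : ℂ) ^ ((k - 1) * r') /
            ((k : ℂ) ^ r' * (Nat.factorial r' : ℂ))) := by
        rw [hT]; simp only [if_pos hk1]
        rw [hLval (n - (k - 1)) (hlt (k - 1)) r' hnk]
        ring
      rw [hsum_eq, hTval]
      have hcast : ((n : ℂ) + 1) = (k : ℂ) * ((r' : ℂ) + 1) := by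
        have : ((n + 1 : ℕ) : ℂ) = ((k * (r' + 1) : ℕ) : ℂ) := by rw [hr]
        push_cast at this; linear_combination this
      have hfacC : ((Nat.factorial r' : ℕ) : ℂ) ≠ 0 := by
        exact_mod_cast (Nat.factorial_pos r').ne'
      have hfac : (Nat.factorial (r' + 1) : ℂ) = ((r' : ℂ) + 1) * (Nat.factorial r' : ℂ) := by
        rw [Nat.factorial_succ]; push_cast; ring
      have hkr : (k : ℂ) ^ (r' + 1) = (k : ℂ) * (k : ℂ) ^ r' := by
        rw [pow_succ]; ring
      have hsgn : (-1 : ℂ) ^ ((k - 1) * (r' + 1)) = (-1 : ℂ) ^ (k - 1) *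
          (-1 : ℂ) ^ ((k - 1) * r') := by
        rw [← pow_add]
        congr 1
        ring
      rw [hcast, hsgn, hfac, hkr]
      have hr'C : ((r' : ℂ) + 1) ≠ 0 := by
        exact_mod_cast (Nat.succ_ne_zero r')
      field_simp
theorem multiple_zeta_leading_coeff_kr (k r : ℕ) (hk : 2 ≤ k) (hr : 1 ≤ r) :
    Tendsto (fun s : ℂ => ((k : ℂ) * s - 1) ^ r * Z (k * r) s) (𝓝[≠] (1 / (k : ℂ)))
      (𝓝 ((-1 : ℂ) ^ ((k - 1) * r) / ((k : ℂ) ^ r * (Nat.factorial r : ℂ)))) := by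
  obtain ⟨L, hL, hval⟩ := Z_aux k hk (k * r)
  rw [Nat.mul_div_cancel_left _ (by omega : 0 < k)] at hL
  rw [hval r rfl] at hL
  exact hL
end

section
/- There exists a constant C > 0 such that for every integer r ≥ 1, |Σ_{k=2}^{r} ⌊r/k⌋ − (r·log r − 2(1 − γ)·r)| ≤ C·r^{1/2}, where γ is the Euler–Mascheroni constant. That is, Σ_{k=2}^{r} ⌊r/k⌋ = r log r − 2(1 − γ) r + O(r^{1/2}). -/
open Finset Real

/-- Dirichlet hyperbola identity for `∑ ⌊r/k⌋`. -/
lemma hyperbola (r : ℕ) (hr : 1 ≤ r) :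
    ∑ k ∈ Finset.Ioc 0 r, r / k + Nat.sqrt r * Nat.sqrt r
      = 2 * ∑ k ∈ Finset.Ioc 0 (Nat.sqrt r), r / k := by
  set s := Nat.sqrt r with hs
  have hs1 : 1 ≤ s := by
    have := Nat.sqrt_pos.mpr hr; omega
  have hsr : s ≤ r := Nat.sqrt_le_self r
  have hsplit : (∑ k ∈ Finset.Ioc 0 s, r / k) + ∑ k ∈ Finset.Ioc s r, r / k
      = ∑ k ∈ Finset.Ioc 0 r, r / k :=
    Finset.sum_Ioc_consecutive (fun k => r / k) (Nat.zero_le s) hsr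
  have hdivs : ∀ b ∈ Finset.Ioc 0 s, s ≤ r / b := by
    intro b hb
    rw [Finset.mem_Ioc] at hb
    have hss : s * s ≤ r := by have := Nat.sqrt_le' r; rwa [pow_two] at this
    have h1 : s ≤ r / s := (Nat.le_div_iff_mul_le (by omega)).mpr hss
    exact le_trans h1 (Nat.div_le_div_left hb.2 hb.1)
  -- key: tail sum equals ∑_{b ≤ s} (r/b - s)
  have key : ∑ a ∈ Finset.Ioc s r, r / a = ∑ b ∈ Finset.Ioc 0 s, (r / b - s) := by
    have step1 : ∀ a ∈ Finset.Ioc s r, r / a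
        = ((Finset.Ioc 0 s).filter (fun b => a * b ≤ r)).card := by
      intro a ha
      rw [Finset.mem_Ioc] at ha
      have ha0 : 0 < a := by omega
      have hras : r / a ≤ s := by
        have h1 : r / a ≤ r / (s + 1) := Nat.div_le_div_left ha.1 (by omega)
        have h2 : r / (s + 1) < s + 1 := by
          rw [Nat.div_lt_iff_lt_mul (by omega)]
          exact Nat.lt_succ_sqrt r
        omega
      have heq : (Finset.Ioc 0 s).filter (fun b => a * b ≤ r) = Finset.Ioc 0 (r / a) := by
        ext b
        simp only [Finset.mem_filter, Finset.mem_Ioc]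
        constructor
        · rintro ⟨⟨hb0, _⟩, hab⟩
          exact ⟨hb0, (Nat.le_div_iff_mul_le ha0).mpr (by rwa [mul_comm])⟩
        · rintro ⟨hb0, hble⟩
          refine ⟨⟨hb0, le_trans hble hras⟩, ?_⟩
          rw [mul_comm]
          exact (Nat.le_div_iff_mul_le ha0).mp hble
      rw [heq, Nat.card_Ioc, Nat.sub_zero]
    rw [Finset.sum_congr rfl step1]
    simp_rw [Finset.card_filter]
    rw [Finset.sum_comm]
    refine Finset.sum_congr rfl fun b hb => ?_
    have hb' := hb
    rw [Finset.mem_Ioc] at hb'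
    have hb0 : 0 < b := hb'.1
    have hrb : s ≤ r / b := hdivs b hb
    have heq : (Finset.Ioc s r).filter (fun a => a * b ≤ r) = Finset.Ioc s (r / b) := by
      ext a
      simp only [Finset.mem_filter, Finset.mem_Ioc]
      constructor
      · rintro ⟨⟨hsa, _⟩, hab⟩
        exact ⟨hsa, (Nat.le_div_iff_mul_le hb0).mpr hab⟩
      · rintro ⟨hsa, hale⟩
        have hbr : r / b ≤ r := Nat.div_le_self r b
        exact ⟨⟨hsa, le_trans hale hbr⟩, (Nat.le_div_iff_mul_le hb0).mp hale⟩
    rw [← Finset.card_filter, heq, Nat.card_Ioc]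
  have hcard : ∑ _b ∈ Finset.Ioc 0 s, s = s * s := by
    simp [Nat.card_Ioc]
  have hfinal : ∑ b ∈ Finset.Ioc 0 s, (r / b - s) + ∑ _b ∈ Finset.Ioc 0 s, s
      = ∑ b ∈ Finset.Ioc 0 s, r / b := by
    rw [← Finset.sum_add_distrib]
    exact Finset.sum_congr rfl fun b hb => Nat.sub_add_cancel (hdivs b hb)
  omega

theorem sum_floor_div_asymptotic :
    ∃ C : ℝ, 0 < C ∧ ∀ r : ℕ, 1 ≤ r →
      |((∑ k ∈ Finset.Icc 2 r, r / k : ℕ) : ℝ) -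
        ((r : ℝ) * Real.log r - 2 * (1 - Real.eulerMascheroniConstant) * r)| ≤
      C * Real.sqrt r := by
  refine ⟨16, by norm_num, fun r hr => ?_⟩
  set s := Nat.sqrt r with hsdef
  have hs1 : 1 ≤ s := by have := Nat.sqrt_pos.mpr hr; omega
  have hssr : s * s ≤ r := by have := Nat.sqrt_le' r; rwa [pow_two] at this
  have hrss : r ≤ s * s + 2 * s := by
    have h1 := Nat.lt_succ_sqrt r
    have h2 : (Nat.sqrt r).succ * (Nat.sqrt r).succ = s * s + 2 * s + 1 := by
      rw [← hsdef, Nat.succ_eq_add_one]; ring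
    rw [h2] at h1; omega
  have hsR : (0:ℝ) < s := by exact_mod_cast hs1
  have hrR : (0:ℝ) < r := by exact_mod_cast hr
  have hssR : (s:ℝ) * s ≤ r := by exact_mod_cast hssr
  have hrssR : (r:ℝ) ≤ s * s + 2 * s := by exact_mod_cast hrss
  have hsqrt : (s : ℝ) ≤ Real.sqrt r := by
    have h := Real.sqrt_le_sqrt hssR
    rwa [Real.sqrt_mul_self hsR.le] at h
  -- split off k = 1
  have hIcc : Finset.Icc 2 r = Finset.Ioc 1 r := by
    ext x; simp only [Finset.mem_Icc, Finset.mem_Ioc]; omega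
  have hsplit1 : (∑ k ∈ Finset.Ioc 0 1, r / k) + ∑ k ∈ Finset.Ioc 1 r, r / k
      = ∑ k ∈ Finset.Ioc 0 r, r / k :=
    Finset.sum_Ioc_consecutive (fun k => r / k) (by omega) hr
  have hsplit1' : r + ∑ k ∈ Finset.Icc 2 r, r / k = ∑ k ∈ Finset.Ioc 0 r, r / k := by
    rw [hIcc]
    simpa using hsplit1
  have hhyp := hyperbola r hr
  rw [← hsdef] at hhyp
  clear_value s
  have hnat : ∑ k ∈ Finset.Icc 2 r, r / k + s * s + r
      = 2 * ∑ k ∈ Finset.Ioc 0 s, r / k := by omega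
  have hreal : ((∑ k ∈ Finset.Icc 2 r, r / k : ℕ) : ℝ)
      = 2 * ∑ k ∈ Finset.Ioc 0 s, ((r / k : ℕ) : ℝ) - r - s * s := by
    rw [eq_sub_iff_add_eq, eq_sub_iff_add_eq]
    exact_mod_cast hnat
  -- fractional parts
  obtain ⟨E, hE0, hEs, hSfloor⟩ : ∃ E : ℝ, 0 ≤ E ∧ E ≤ s ∧
      ∑ k ∈ Finset.Ioc 0 s, ((r / k : ℕ) : ℝ) = r * ((harmonic s : ℚ) : ℝ) - E := by
    refine ⟨∑ k ∈ Finset.Ioc 0 s, ((r : ℝ) / k - ((r / k : ℕ) : ℝ)), ?_, ?_, ?_⟩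
    · refine Finset.sum_nonneg fun k hk => ?_
      have := Nat.cast_div_le (m := r) (n := k) (α := ℝ)
      linarith
    · have h : ∑ k ∈ Finset.Ioc 0 s, ((r : ℝ) / k - ((r / k : ℕ) : ℝ))
          ≤ ∑ _k ∈ Finset.Ioc 0 s, (1:ℝ) := by
        refine Finset.sum_le_sum fun k hk => ?_
        rw [Finset.mem_Ioc] at hk
        have hk0 : 0 < k := hk.1
        have hkR : (0:ℝ) < k := by exact_mod_cast hk0
        have hlt : r < (r / k + 1) * k := by
          rw [← Nat.div_lt_iff_lt_mul hk0]; omega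
        have hltR : (r:ℝ) < (((r/k : ℕ):ℝ) + 1) * k := by exact_mod_cast hlt
        rw [sub_le_iff_le_add, div_le_iff₀ hkR]
        nlinarith
      simpa [Nat.card_Ioc] using h
    · have hsum_harm : ∑ k ∈ Finset.Ioc 0 s, ((r : ℝ) / k)
          = r * ((harmonic s : ℚ) : ℝ) := by
        rw [harmonic_eq_sum_Icc]
        push_cast
        rw [Finset.mul_sum]
        have hIs : Finset.Icc 1 s = Finset.Ioc 0 s := by
          ext x; simp only [Finset.mem_Icc, Finset.mem_Ioc]; omega
        rw [hIs]
        exact Finset.sum_congr rfl fun k _ => (div_eq_mul_inv _ _)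
      rw [Finset.sum_sub_distrib, hsum_harm]; ring
  -- harmonic bounds
  have hharm_lo : 0 < ((harmonic s : ℚ) : ℝ) - Real.log s - Real.eulerMascheroniConstant := by
    have h := Real.eulerMascheroniConstant_lt_eulerMascheroniSeq' s
    rw [Real.eulerMascheroniSeq', if_neg (by omega : s ≠ 0)] at h
    linarith only [h]
  have hharm_hi : ((harmonic s : ℚ) : ℝ) - Real.log s - Real.eulerMascheroniConstant
      ≤ 1 / s := by
    have h1 := Real.eulerMascheroniSeq_lt_eulerMascheroniConstant s
    rw [Real.eulerMascheroniSeq] at h1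
    have h2 : Real.log (s + 1) - Real.log s ≤ 1 / s := by
      rw [← Real.log_div (by positivity) (by positivity)]
      have h3 := Real.log_le_sub_one_of_pos (x := ((s:ℝ)+1)/s) (by positivity)
      have heq : ((s:ℝ)+1)/s - 1 = 1/s := by field_simp; ring
      linarith only [h3, heq]
    push_cast at h1
    linarith only [h1, h2]
  -- log bounds
  have hlogr : Real.log r - 2 * Real.log s = Real.log ((r:ℝ) / (s*s)) := by
    rw [Real.log_div (ne_of_gt hrR) (by positivity),
      Real.log_mul (ne_of_gt hsR) (ne_of_gt hsR)]
    ring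
  have hlog_lo : 0 ≤ Real.log r - 2 * Real.log s := by
    rw [hlogr]
    apply Real.log_nonneg
    rw [le_div_iff₀ (by positivity)]; linarith only [hssR]
  have hlog_hi : Real.log r - 2 * Real.log s ≤ 2 / s := by
    rw [hlogr]
    have h3 := Real.log_le_sub_one_of_pos (x := (r:ℝ) / (s*s)) (by positivity)
    have h2 : (r:ℝ)/(s*s) - 1 ≤ 2/s := by
      rw [div_sub_one (by positivity), div_le_div_iff₀ (by positivity) hsR]
      nlinarith
    linarith only [h3, h2]
  -- final estimate
  have hX : ((∑ k ∈ Finset.Icc 2 r, r / k : ℕ) : ℝ)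
      - ((r : ℝ) * Real.log r - 2 * (1 - Real.eulerMascheroniConstant) * r)
      = 2 * r * (((harmonic s : ℚ) : ℝ) - Real.log s - Real.eulerMascheroniConstant)
        - 2 * E + ((r:ℝ) - s * s)
        - r * (Real.log r - 2 * Real.log s) := by
    rw [hreal, hSfloor]; ring
  rw [hX]
  have hrs3 : (r:ℝ) / s ≤ 3 * Real.sqrt r := by
    rw [div_le_iff₀ hsR]
    have h5 : (s:ℝ)*s ≤ Real.sqrt r * s := mul_le_mul_of_nonneg_right hsqrt hsR.le
    have hs1R : (1:ℝ) ≤ s := by exact_mod_cast hs1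
    have h6 : (s:ℝ) ≤ s*s := by nlinarith
    linarith only [h5, h6, hrssR]
  have b1 : 2 * (r:ℝ) * (((harmonic s : ℚ) : ℝ) - Real.log s - Real.eulerMascheroniConstant)
      ≤ 2 * ((r:ℝ) / s) := by
    have h := mul_le_mul_of_nonneg_left hharm_hi
      (show (0:ℝ) ≤ 2 * r by positivity)
    have heq : 2 * (r:ℝ) * (1/s) = 2 * ((r:ℝ)/s) := by ring
    linarith only [h, heq]
  have b4 : (r:ℝ) * (Real.log r - 2 * Real.log s) ≤ 2 * ((r:ℝ) / s) := by
    have h := mul_le_mul_of_nonneg_left hlog_hi hrR.le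
    have heq : (r:ℝ) * (2/s) = 2 * ((r:ℝ)/s) := by ring
    linarith only [h, heq]
  have hb1' : 0 ≤ 2 * (r:ℝ)
      * (((harmonic s : ℚ) : ℝ) - Real.log s - Real.eulerMascheroniConstant) :=
    mul_nonneg (by positivity) hharm_lo.le
  have hb4' : 0 ≤ (r:ℝ) * (Real.log r - 2 * Real.log s) := mul_nonneg hrR.le hlog_lo
  rw [abs_le]
  constructor
  · linarith only [b1, b4, hb1', hb4', hE0, hEs, hrs3, hsqrt, hssR, hrssR]
  · linarith only [b1, b4, hb1', hb4', hE0, hEs, hrs3, hsqrt, hssR, hrssR]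
end

section
/- Let r and j be integers with r ≥ 6 and 3 ≤ j ≤ r − 3. Then (r − j)^{r−j} · j^{j} < (r − 1)^{r−1}. -/
/-- Bernoulli-type upper bound: `(M+1)^(k+1) ≤ M^k*(M+1) + k*(M+1)^k`. -/
lemma lemA (M k : ℕ) : (M+1)^(k+1) ≤ M^k*(M+1) + k*(M+1)^k := by
  induction k with
  | zero => simp
  | succ k ih =>
    have h2 : M^k*(M+1) ≤ (M+1)^k*(M+1) :=
      Nat.mul_le_mul_right _ (Nat.pow_le_pow_left (by omega) k)
    calc (M+1)^(k+1+1) = (M+1)^(k+1)*(M+1) := by ring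
      _ ≤ (M^k*(M+1) + k*(M+1)^k)*(M+1) := Nat.mul_le_mul_right _ ih
      _ = M^(k+1)*(M+1) + M^k*(M+1) + k*(M+1)^(k+1) := by ring
      _ ≤ M^(k+1)*(M+1) + (M+1)^k*(M+1) + k*(M+1)^(k+1) := by
          exact Nat.add_le_add_right (Nat.add_le_add_left h2 _) _
      _ = M^(k+1)*(M+1) + (k+1)*(M+1)^(k+1) := by ring

lemma lemB (k : ℕ) : k*((k*(k+2))+1)^k ≤ (2*k+3)*(k*(k+2))^k := by
  have h1 := lemA (k*(k+2)) k
  set X := ((k*(k+2))+1)^k with hX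
  set Y := (k*(k+2))^k with hY
  have hx : ((k*(k+2))+1)^(k+1) = X*((k*(k+2))+1) := by rw [pow_succ]
  rw [hx] at h1
  have h2 : k*(X*((k*(k+2))+1)) ≤ k*(Y*((k*(k+2))+1) + k*X) :=
    Nat.mul_le_mul_left _ h1
  -- cancel (k^2+k+1) > 0
  have key : k*X*(k^2+k+1) ≤ (2*k+3)*Y*(k^2+k+1) := by
    nlinarith [h2, Nat.zero_le (Y*k^3), Nat.zero_le (Y*k^2), Nat.zero_le (Y*k),
      Nat.zero_le Y, Nat.zero_le X, Nat.zero_le (X*k)]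
  have hpos : 0 < k^2+k+1 := by positivity
  exact Nat.le_of_mul_le_mul_right key hpos

/-- monotonicity step of `n ↦ (n+1)^(n+1)/n^n`. -/
lemma lem2 (k : ℕ) : (k+1)^(k+1)*(k+1)^(k+1) ≤ k^k*(k+2)^(k+2) := by
  have hA := lemA (k*(k+2)) k
  have hB := lemB k
  have hL : (k+1)^(k+1)*(k+1)^(k+1) = ((k*(k+2))+1)^(k+1) := by
    rw [← mul_pow]; congr 1; ring
  have hR : k^k*(k+2)^(k+2) = (k*(k+2))^k*((k*(k+2))+1 + (2*k+3)) := by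
    rw [mul_pow]
    ring
  rw [hL, hR]
  calc ((k*(k+2))+1)^(k+1) ≤ (k*(k+2))^k*((k*(k+2))+1) + k*((k*(k+2))+1)^k := hA
    _ ≤ (k*(k+2))^k*((k*(k+2))+1) + (2*k+3)*(k*(k+2))^k := by
        exact Nat.add_le_add_left hB _
    _ = (k*(k+2))^k*((k*(k+2))+1 + (2*k+3)) := by ring

lemma lem3 (m n : ℕ) (hm : 1 ≤ m) (hmn : m ≤ n) :
    (m+1)^(m+1)*n^n ≤ m^m*(n+1)^(n+1) := by
  induction n, hmn using Nat.le_induction with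
  | base => rw [mul_comm]
  | succ n hn ih =>
    have h2 := lem2 n
    have hpos : 0 < n^n := Nat.pow_pos (by omega)
    apply Nat.le_of_mul_le_mul_right _ hpos
    calc (m+1)^(m+1)*(n+1)^(n+1)*n^n
        = ((m+1)^(m+1)*n^n)*(n+1)^(n+1) := by ring
      _ ≤ (m^m*(n+1)^(n+1))*(n+1)^(n+1) := Nat.mul_le_mul_right _ ih
      _ = m^m*((n+1)^(n+1)*(n+1)^(n+1)) := by ring
      _ ≤ m^m*(n^n*(n+2)^(n+2)) := Nat.mul_le_mul_left _ h2
      _ = m^m*(n+1+1)^(n+1+1)*n^n := by ring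

lemma lem5 : ∀ a, 3 ≤ a → ∀ b, a ≤ b → a^a*b^b ≤ 27*(a+b-3)^(a+b-3) := by
  intro a ha
  induction a, ha using Nat.le_induction with
  | base =>
    intro b hb
    have h : 3+b-3 = b := by omega
    rw [h]
    norm_num
  | succ a ha ih =>
    intro b hb
    have h3 := lem3 a b (by omega) (by omega)
    have h5 := ih (b+1) (by omega)
    have he : a+(b+1)-3 = (a+1)+b-3 := by omega
    calc (a+1)^(a+1)*b^b ≤ a^a*(b+1)^(b+1) := h3
      _ ≤ 27*(a+(b+1)-3)^(a+(b+1)-3) := h5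
      _ = 27*((a+1)+b-3)^((a+1)+b-3) := by rw [he]

/-- binomial lower bound `(x+2)^(k+1) ≥ x^(k+1) + 2(k+1)x^k`. -/
lemma lemC (x k : ℕ) : x^(k+1) + 2*(k+1)*x^k ≤ (x+2)^(k+1) := by
  induction k with
  | zero => simp
  | succ k ih =>
    have heq : (x+2)*(x^(k+1) + 2*(k+1)*x^k)
        = x^(k+1+1) + 2*(k+1+1)*x^(k+1) + 4*(k+1)*x^k := by ring
    calc x^(k+1+1) + 2*(k+1+1)*x^(k+1)
        ≤ x^(k+1+1) + 2*(k+1+1)*x^(k+1) + 4*(k+1)*x^k := Nat.le_add_right _ _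
      _ = (x+2)*(x^(k+1) + 2*(k+1)*x^k) := heq.symm
      _ ≤ (x+2)*(x+2)^(k+1) := Nat.mul_le_mul_left _ ih
      _ = (x+2)^(k+1+1) := by ring

lemma lem6 (c : ℕ) (hc : 5 ≤ c) : 27*(c-2)^(c-2) < c^c := by
  obtain ⟨e, rfl⟩ : ∃ e, c = e + 5 := ⟨c - 5, by omega⟩
  have h : e+5-2 = e+3 := by omega
  rw [h]
  have hC : (e+3)^(e+2+1) + 2*(e+2+1)*(e+3)^(e+2) ≤ (e+3+2)^(e+2+1) := lemC (e+3) (e+2)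
  have h1 : 3*(e+3)^(e+3) ≤ (e+5)^(e+3) := by
    calc 3*(e+3)^(e+3) = (e+3)^(e+2+1) + 2*(e+2+1)*(e+3)^(e+2) := by ring
      _ ≤ (e+3+2)^(e+2+1) := hC
      _ = (e+5)^(e+3) := by ring
  have hpos : 0 < (e+3)^(e+3) := Nat.pow_pos (by omega)
  calc 27*(e+3)^(e+3) < 75*(e+3)^(e+3) := (Nat.mul_lt_mul_right hpos).mpr (by norm_num)
    _ = 25*(3*(e+3)^(e+3)) := by ring
    _ ≤ 25*((e+5)^(e+3)) := Nat.mul_le_mul_left _ h1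
    _ ≤ (e+5)^2*(e+5)^(e+3) := Nat.mul_le_mul_right _ (by nlinarith)
    _ = (e+5)^(e+5) := by ring

lemma lem_main (a b : ℕ) (ha : 3 ≤ a) (hab : a ≤ b) :
    a^a*b^b < (a+b-1)^(a+b-1) := by
  have h5 := lem5 a ha b hab
  have h6 := lem6 (a+b-1) (by omega)
  have he : a+b-1-2 = a+b-3 := by omega
  rw [he] at h6
  exact lt_of_le_of_lt h5 h6

theorem pow_mul_pow_lt (r j : ℕ) (hr : 6 ≤ r) (hj3 : 3 ≤ j) (hjr : j ≤ r - 3) :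
    (r - j) ^ (r - j) * j ^ j < (r - 1) ^ (r - 1) := by
  rcases le_or_gt j (r - j) with h | h
  · have := lem_main j (r - j) hj3 h
    have he : j + (r - j) - 1 = r - 1 := by omega
    rw [he] at this
    rw [mul_comm]
    exact this
  · have := lem_main (r - j) j (by omega) (by omega)
    have he : (r - j) + j - 1 = r - 1 := by omega
    rw [he] at this
    exact this
end

section
/- Let r ≥ 1 be an odd integer. Then r·Z_r(−k)/ζ(−rk) tends to 1 as k tends to +∞ through odd positive integers; that is, Z_r(−k) ∼ (1/r)·ζ(−rk) as odd k → +∞, where ζ is the Riemann zeta function. (For odd positive k and odd r, the product rk is odd, so ζ(−rk) ≠ 0.) -/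
open Filter Topology Complex

lemma sum_one_div_nat_add_one_pow_le (k : ℕ) (hk : 2 ≤ k) :
    (∑' n : ℕ, 1 / ((n:ℝ) + 1) ^ k) ≤ 2 := by
  have hsum2 : Summable (fun n : ℕ => 1 / ((n:ℝ) + 1) ^ 2) := by
    have := (summable_nat_add_iff (f := fun n : ℕ => 1 / (n:ℝ) ^ 2) 1).2
      (Real.summable_one_div_nat_pow.2 one_lt_two)
    simpa [Nat.cast_add] using this
  have hsumk : Summable (fun n : ℕ => 1 / ((n:ℝ) + 1) ^ k) := by
    have := (summable_nat_add_iff (f := fun n : ℕ => 1 / (n:ℝ) ^ k) 1).2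
      (Real.summable_one_div_nat_pow.2 (by omega))
    simpa [Nat.cast_add] using this
  have h1 : (∑' n : ℕ, 1 / ((n:ℝ) + 1) ^ k) ≤ ∑' n : ℕ, 1 / ((n:ℝ) + 1) ^ 2 := by
    refine Summable.tsum_le_tsum (fun n => ?_) hsumk hsum2
    apply one_div_le_one_div_of_le (by positivity)
    exact pow_le_pow_right₀ (by linarith [Nat.cast_nonneg (α := ℝ) n]) hk
  have h2 : (∑' n : ℕ, 1 / ((n:ℝ) + 1) ^ 2) = Real.pi ^ 2 / 6 := by
    have h := hasSum_zeta_two.tsum_eq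
    rw [Summable.tsum_eq_zero_add hasSum_zeta_two.summable] at h
    simp only [Nat.cast_zero] at h
    rw [← h]
    push_cast
    norm_num
  have : Real.pi ^ 2 / 6 ≤ 2 := by nlinarith [Real.pi_lt_d2, Real.pi_pos]
  linarith

lemma zeta_nat_bounds (k : ℕ) (hk : 2 ≤ k) :
    1 ≤ ‖riemannZeta (k:ℂ)‖ ∧ ‖riemannZeta (k:ℂ)‖ ≤ 2 := by
  have hre : 1 < re (k:ℂ) := by
    simp only [natCast_re]
    exact_mod_cast by omega
  rw [zeta_eq_tsum_one_div_nat_add_one_cpow hre]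
  have hcast : ∀ n : ℕ, 1 / ((n:ℂ) + 1) ^ (k:ℂ) = ((1 / ((n:ℝ) + 1) ^ k : ℝ) : ℂ) := by
    intro n
    rw [show ((n:ℂ) + 1) = (((n:ℝ) + 1 : ℝ) : ℂ) by push_cast; ring, cpow_natCast]
    push_cast
    ring
  simp_rw [hcast, ← Complex.ofReal_tsum, Complex.norm_real]
  have hsumk : Summable (fun n : ℕ => 1 / ((n:ℝ) + 1) ^ k) := by
    have := (summable_nat_add_iff (f := fun n : ℕ => 1 / (n:ℝ) ^ k) 1).2
      (Real.summable_one_div_nat_pow.2 (by omega))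
    simpa [Nat.cast_add] using this
  have hpos : ∀ n : ℕ, 0 ≤ 1 / ((n:ℝ) + 1) ^ k := fun n => by positivity
  rw [Real.norm_eq_abs, _root_.abs_of_nonneg (tsum_nonneg hpos)]
  constructor
  · have := Summable.le_tsum hsumk 0 (fun n _ => hpos n)
    simpa using this
  · exact sum_one_div_nat_add_one_pow_le k hk

lemma zeta_neg_even (n : ℕ) (h : Even n) (h0 : n ≠ 0) : riemannZeta (-(n:ℂ)) = 0 := by
  obtain ⟨l, rfl⟩ := h
  obtain ⟨l', rfl⟩ : ∃ l', l = l' + 1 := ⟨l - 1, by omega⟩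
  have := riemannZeta_neg_two_mul_nat_add_one l'
  rw [show (-2 * ((l':ℂ) + 1)) = -(((l' + 1 + (l' + 1) : ℕ) : ℂ)) by push_cast; ring] at this
  exact this

lemma norm_zeta_neg_odd (k : ℕ) (hk : Odd k) :
    ‖riemannZeta (-(k:ℂ))‖
      = 2 * ((2 * Real.pi) ^ (k + 1))⁻¹ * ((Nat.factorial k : ℕ) : ℝ) * ‖riemannZeta ((k:ℂ) + 1)‖ := by
  obtain ⟨l, hl⟩ := hk
  have hs : ∀ n : ℕ, ((k:ℂ) + 1) ≠ -n := by
    intro n h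
    have := congrArg re h
    simp only [add_re, natCast_re, one_re, neg_re] at this
    have h1 : (0:ℝ) ≤ (k:ℝ) := Nat.cast_nonneg k
    have h2 : (0:ℝ) ≤ (n:ℝ) := Nat.cast_nonneg n
    linarith
  have hs' : ((k:ℂ) + 1) ≠ 1 := by
    intro h
    have := congrArg re h
    simp only [add_re, natCast_re, one_re] at this
    have : (k:ℝ) = 0 := by linarith
    have : k = 0 := by exact_mod_cast this
    omega
  have key := riemannZeta_one_sub hs hs'
  rw [show (1 - ((k:ℂ) + 1)) = -(k:ℂ) by ring] at key
  rw [key]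
  -- Gamma
  rw [Complex.Gamma_nat_eq_factorial k]
  -- norms
  rw [norm_mul, norm_mul, norm_mul, norm_mul]
  have hnorm2 : ‖(2:ℂ)‖ = 2 := by norm_num
  have hnormfact : ‖((Nat.factorial k : ℕ) : ℂ)‖ = ((Nat.factorial k : ℕ) : ℝ) := by
    rw [Complex.norm_natCast]
  -- cpow norm
  have hpow : ‖(2 * (Real.pi:ℂ)) ^ (-((k:ℂ) + 1))‖ = ((2 * Real.pi) ^ (k + 1))⁻¹ := by
    rw [show (2 * (Real.pi:ℂ)) = (((2 * Real.pi : ℝ)) : ℂ) by push_cast; ring]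
    rw [Complex.norm_cpow_eq_rpow_re_of_pos Real.two_pi_pos]
    have : (-((k:ℂ) + 1)).re = -((k:ℝ) + 1) := by simp
    rw [this, Real.rpow_neg Real.two_pi_pos.le]
    congr 1
    rw [show ((k:ℝ) + 1) = (((k + 1 : ℕ)):ℝ) by push_cast; ring, Real.rpow_natCast]
  -- cos norm
  have hcos : ‖Complex.cos (Real.pi * ((k:ℂ) + 1) / 2)‖ = 1 := by
    have harg : (Real.pi * ((k:ℂ) + 1) / 2) = ((((l + 1 : ℤ)) * Real.pi : ℝ) : ℂ) := by
      push_cast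
      rw [hl]
      push_cast
      ring
    rw [harg, ← Complex.ofReal_cos, Complex.norm_real, Real.norm_eq_abs,
      Real.abs_cos_int_mul_pi]
  rw [hpow, hcos, hnorm2, hnormfact]
  ring




lemma one_le_two_pi : (1:ℝ) ≤ 2 * Real.pi := by nlinarith [Real.pi_gt_three]

lemma norm_zeta_neg_le (k : ℕ) (hk : 1 ≤ k) :
    ‖riemannZeta (-(k:ℂ))‖ ≤ 4 * ((Nat.factorial k : ℕ) : ℝ) * ((2 * Real.pi) ^ k)⁻¹ := by
  rcases Nat.even_or_odd k with he | ho
  · rw [zeta_neg_even k he (by omega)]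
    have : (0:ℝ) < 4 * ((Nat.factorial k : ℕ) : ℝ) * ((2 * Real.pi) ^ k)⁻¹ := by
      have := Real.two_pi_pos
      have := Nat.factorial_pos k
      positivity
    simpa using this.le
  · rw [norm_zeta_neg_odd k ho]
    have hzb := (zeta_nat_bounds (k+1) (by omega)).2
    have hc : ‖riemannZeta ((k:ℂ) + 1)‖ ≤ 2 := by
      rw [show ((k:ℂ) + 1) = (((k+1:ℕ)):ℂ) by push_cast; ring]
      exact hzb
    have hmono : ((2 * Real.pi) ^ (k+1))⁻¹ ≤ ((2 * Real.pi) ^ k)⁻¹ := by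
      apply inv_anti₀ (by positivity)
      exact pow_le_pow_right₀ one_le_two_pi (by omega)
    have h0 : (0:ℝ) ≤ ((2 * Real.pi) ^ (k+1))⁻¹ := by positivity
    have hf : (0:ℝ) ≤ ((Nat.factorial k : ℕ) : ℝ) := Nat.cast_nonneg _
    calc 2 * ((2 * Real.pi) ^ (k+1))⁻¹ * ((Nat.factorial k : ℕ) : ℝ) * ‖riemannZeta ((k:ℂ) + 1)‖
        ≤ 2 * ((2 * Real.pi) ^ k)⁻¹ * ((Nat.factorial k : ℕ) : ℝ) * 2 := by
          have hn : (0:ℝ) ≤ ‖riemannZeta ((k:ℂ) + 1)‖ := norm_nonneg _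
          gcongr
      _ = 4 * ((Nat.factorial k : ℕ) : ℝ) * ((2 * Real.pi) ^ k)⁻¹ := by ring

lemma norm_zeta_neg_ge (k : ℕ) (hk : Odd k) :
    2 * ((2 * Real.pi) ^ (k+1))⁻¹ * ((Nat.factorial k : ℕ) : ℝ) ≤ ‖riemannZeta (-(k:ℂ))‖ := by
  rw [norm_zeta_neg_odd k hk]
  have hzb := (zeta_nat_bounds (k+1) (by have := hk.pos; omega)).1
  have hc : 1 ≤ ‖riemannZeta ((k:ℂ) + 1)‖ := by
    rw [show ((k:ℂ) + 1) = (((k+1:ℕ)):ℂ) by push_cast; ring]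
    exact hzb
  have h0 : (0:ℝ) ≤ 2 * ((2 * Real.pi) ^ (k+1))⁻¹ * ((Nat.factorial k : ℕ) : ℝ) := by
    have := Real.two_pi_pos
    positivity
  nlinarith

lemma fact_mul_fact_le (a b : ℕ) (ha : 1 ≤ a) (hb : 1 ≤ b) :
    Nat.factorial a * Nat.factorial b ≤ Nat.factorial (a + b - 1) := by
  induction a, ha using Nat.le_induction with
  | base => simpa using Nat.le_refl _
  | succ a ha IH =>
    have h1 : Nat.factorial (a+1) * Nat.factorial b = (a+1) * (Nat.factorial a * Nat.factorial b) := by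
      rw [Nat.factorial_succ]; ring
    have h2 : (a+1) * (Nat.factorial a * Nat.factorial b) ≤ (a+1) * Nat.factorial (a + b - 1) :=
      Nat.mul_le_mul_left _ IH
    have h3 : (a+1) * Nat.factorial (a + b - 1) ≤ (a+b) * Nat.factorial (a + b - 1) :=
      Nat.mul_le_mul_right _ (by omega)
    have h4 : (a+b) * Nat.factorial (a + b - 1) = Nat.factorial (a + b) := by
      have : a + b - 1 + 1 = a + b := by omega
      rw [← this, Nat.factorial_succ, this]
    rw [show a + 1 + b - 1 = a + b from by omega, ← h4]
    calc Nat.factorial (a+1) * Nat.factorial b = (a+1) * (Nat.factorial a * Nat.factorial b) := h1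
      _ ≤ (a+1) * Nat.factorial (a + b - 1) := h2
      _ ≤ (a+b) * Nat.factorial (a + b - 1) := h3



lemma Z_bound : ∀ r k : ℕ, Odd k →
    ‖Z r (-(k:ℂ))‖ ≤ 5 ^ r * ((Nat.factorial (r * k) : ℕ) : ℝ) * ((2 * Real.pi) ^ (r * k))⁻¹ := by
  intro r
  induction r using Nat.strong_induction_on with
  | _ r IH =>
    match r with
    | 0 =>
      intro k _
      rw [Z]
      simp
    | (t+1) =>
      intro k hk
      have hk1 : 1 ≤ k := hk.pos
      rw [Z]
      rw [norm_mul]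
      have h1 : ‖(1 / ((t:ℂ) + 1))‖ ≤ 1 := by
        rw [show ((t:ℂ) + 1) = (((t+1:ℕ)):ℂ) by push_cast; ring]
        rw [norm_div, norm_one, Complex.norm_natCast]
        rw [div_le_one (by exact_mod_cast Nat.succ_pos t)]
        exact_mod_cast Nat.one_le_iff_ne_zero.2 (Nat.succ_ne_zero t)
      -- bound the sum
      have hterm : ∀ i ∈ Finset.range (t+1),
          ‖(-1 : ℂ) ^ i * Z (t - i) (-(k:ℂ)) * riemannZeta (((i : ℂ) + 1) * -(k:ℂ))‖
            ≤ (4 * 5 ^ (t - i)) * ((Nat.factorial ((t+1) * k) : ℕ) : ℝ)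
                * ((2 * Real.pi) ^ ((t+1) * k))⁻¹ := by
        intro i hi
        rw [Finset.mem_range] at hi
        have hzarg : (((i : ℂ) + 1) * -(k:ℂ)) = -((((i+1) * k : ℕ)):ℂ) := by push_cast; ring
        rw [norm_mul, norm_mul, norm_pow, norm_neg, norm_one, one_pow, one_mul, hzarg]
        have hZ := IH (t - i) (by omega) k hk
        have hz := norm_zeta_neg_le ((i+1) * k) (Nat.mul_pos (Nat.succ_pos i) hk1)
        calc ‖Z (t - i) (-(k:ℂ))‖ * ‖riemannZeta (-((((i+1) * k : ℕ)):ℂ))‖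
            ≤ (5 ^ (t-i) * ((Nat.factorial ((t-i) * k) : ℕ) : ℝ) * ((2 * Real.pi) ^ ((t-i) * k))⁻¹)
              * (4 * ((Nat.factorial ((i+1) * k) : ℕ) : ℝ) * ((2 * Real.pi) ^ ((i+1) * k))⁻¹) := by
              apply mul_le_mul hZ hz (norm_nonneg _)
              have := Real.two_pi_pos
              positivity
          _ = (4 * 5 ^ (t-i)) * (((Nat.factorial ((t-i) * k) : ℕ) : ℝ) * ((Nat.factorial ((i+1) * k) : ℕ) : ℝ))
              * (((2 * Real.pi) ^ ((t-i) * k))⁻¹ * ((2 * Real.pi) ^ ((i+1) * k))⁻¹) := by ring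
          _ ≤ (4 * 5 ^ (t - i)) * ((Nat.factorial ((t+1) * k) : ℕ) : ℝ)
                * ((2 * Real.pi) ^ ((t+1) * k))⁻¹ := by
              have hfact : ((Nat.factorial ((t-i) * k) : ℕ) : ℝ) * ((Nat.factorial ((i+1) * k) : ℕ) : ℝ)
                  ≤ ((Nat.factorial ((t+1) * k) : ℕ) : ℝ) := by
                rw [← Nat.cast_mul]
                have hd := Nat.factorial_mul_factorial_dvd_factorial_add ((t-i)*k) ((i+1)*k)
                have hle := Nat.le_of_dvd (Nat.factorial_pos _) hd
                rw [show (t-i)*k + (i+1)*k = (t+1)*k from by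
                  have : t - i + (i+1) = t+1 := by omega
                  rw [← Nat.add_mul, this]] at hle
                exact_mod_cast hle
              have hpow : ((2 * Real.pi) ^ ((t-i) * k))⁻¹ * ((2 * Real.pi) ^ ((i+1) * k))⁻¹
                  = ((2 * Real.pi) ^ ((t+1) * k))⁻¹ := by
                rw [← mul_inv, ← pow_add]
                congr 2
                have : t - i + (i+1) = t+1 := by omega
                rw [← Nat.add_mul, this]
              rw [hpow]
              have h5 : (0:ℝ) ≤ 4 * 5 ^ (t - i) := by positivity
              have hp : (0:ℝ) ≤ ((2 * Real.pi) ^ ((t+1) * k))⁻¹ := by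
                have := Real.two_pi_pos; positivity
              exact mul_le_mul_of_nonneg_right (mul_le_mul_of_nonneg_left hfact h5) hp
      have hsum : ‖∑ i ∈ Finset.range (t + 1),
          (-1 : ℂ) ^ i * Z (t - i) (-(k:ℂ)) * riemannZeta (((i : ℂ) + 1) * -(k:ℂ))‖
            ≤ ∑ i ∈ Finset.range (t + 1), (4 * 5 ^ (t - i)) * ((Nat.factorial ((t+1) * k) : ℕ) : ℝ)
                * ((2 * Real.pi) ^ ((t+1) * k))⁻¹ :=
        norm_sum_le_of_le _ hterm
      have hgeom : ∑ i ∈ Finset.range (t + 1), (4 * (5:ℝ) ^ (t - i)) ≤ 5 ^ (t+1) := by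
        have hre : ∑ i ∈ Finset.range (t + 1), (4 * (5:ℝ) ^ (t - i))
            = 4 * ∑ i ∈ Finset.range (t + 1), (5:ℝ) ^ i := by
          rw [Finset.mul_sum, ← Finset.sum_range_reflect]
          apply Finset.sum_congr rfl
          intro i hi
          rw [Finset.mem_range] at hi
          rw [show t - (t + 1 - 1 - i) = i from by omega]
        rw [hre, geom_sum_eq (by norm_num : (5:ℝ) ≠ 1)]
        have : (0:ℝ) ≤ 5 ^ (t+1) := by positivity
        nlinarith [pow_pos (by norm_num : (0:ℝ) < 5) (t+1)]
      calc ‖(1 / ((t:ℂ) + 1))‖ * ‖∑ i ∈ Finset.range (t + 1),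
              (-1 : ℂ) ^ i * Z (t - i) (-(k:ℂ)) * riemannZeta (((i : ℂ) + 1) * -(k:ℂ))‖
          ≤ 1 * (∑ i ∈ Finset.range (t + 1), (4 * 5 ^ (t - i)) * ((Nat.factorial ((t+1) * k) : ℕ) : ℝ)
                * ((2 * Real.pi) ^ ((t+1) * k))⁻¹) := by
            apply mul_le_mul h1 hsum (norm_nonneg _) zero_le_one
        _ = (∑ i ∈ Finset.range (t + 1), (4 * (5:ℝ) ^ (t - i))) * (((Nat.factorial ((t+1) * k) : ℕ) : ℝ)
                * ((2 * Real.pi) ^ ((t+1) * k))⁻¹) := by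
            rw [one_mul, Finset.sum_mul]
            apply Finset.sum_congr rfl
            intros; ring
        _ ≤ 5 ^ (t+1) * (((Nat.factorial ((t+1) * k) : ℕ) : ℝ) * ((2 * Real.pi) ^ ((t+1) * k))⁻¹) := by
            apply mul_le_mul_of_nonneg_right hgeom
            have := Real.two_pi_pos
            positivity
        _ = 5 ^ (t+1) * ((Nat.factorial ((t+1) * k) : ℕ) : ℝ) * ((2 * Real.pi) ^ ((t+1) * k))⁻¹ := by
            ring







theorem multiple_zeta_asymptotic_odd_negative (r : ℕ) (hr : 1 ≤ r) (hodd : Odd r) :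
    Tendsto
      (fun m : ℕ => (r : ℂ) * Z r (-(2 * (m : ℂ) + 1))
        / riemannZeta (-((r : ℂ) * (2 * (m : ℂ) + 1))))
      atTop (𝓝 1) := by
  obtain ⟨t, rfl⟩ : ∃ t, r = t + 1 := ⟨r - 1, by omega⟩
  have htE : Even t := Nat.not_odd_iff_even.mp (Nat.odd_add_one.mp hodd)
  -- the denominator
  set D : ℕ → ℂ := fun m => riemannZeta (-((((t+1) * (2*m+1) : ℕ)) : ℂ)) with hDdef
  have hKodd : ∀ m : ℕ, Odd ((t+1) * (2*m+1)) := fun m => hodd.mul (odd_two_mul_add_one m)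
  have hDlow : ∀ m : ℕ, 2 * ((2 * Real.pi) ^ ((t+1)*(2*m+1)+1))⁻¹
      * ((Nat.factorial ((t+1)*(2*m+1)) : ℕ) : ℝ) ≤ ‖D m‖ :=
    fun m => norm_zeta_neg_ge _ (hKodd m)
  have hDpos : ∀ m : ℕ, 0 < ‖D m‖ := by
    intro m
    refine lt_of_lt_of_le ?_ (hDlow m)
    have := Real.two_pi_pos
    have := Nat.factorial_pos ((t+1)*(2*m+1))
    positivity
  have hD0 : ∀ m : ℕ, D m ≠ 0 := fun m => by
    intro h; have := hDpos m; rw [h] at this; simp at this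
  have hcastD : ∀ m : ℕ, -(((t+1:ℕ):ℂ) * (2*(m:ℂ)+1)) = -((((t+1) * (2*m+1) : ℕ)) : ℂ) := by
    intro m; push_cast; ring
  -- the error terms
  set g : ℕ → ℕ → ℂ := fun i m =>
    ((-1:ℂ)^i * Z (t - i) (-(2*(m:ℂ)+1)) * riemannZeta (((i:ℂ)+1) * -(2*(m:ℂ)+1))) / D m
    with hgdef
  -- pointwise identity
  have hfun : ∀ m : ℕ, ((t+1:ℕ):ℂ) * Z (t+1) (-(2*(m:ℂ)+1))
      / riemannZeta (-(((t+1:ℕ):ℂ) * (2*(m:ℂ)+1)))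
      = 1 + ∑ i ∈ Finset.range t, g i m := by
    intro m
    rw [hcastD m, Z]
    rw [show ((t+1:ℕ):ℂ) = (t:ℂ)+1 by push_cast; ring]
    rw [← mul_assoc, mul_one_div, div_self (Nat.cast_add_one_ne_zero t), one_mul]
    rw [Finset.sum_range_succ]
    have hlast : (-1 : ℂ) ^ t * Z (t - t) (-(2*(m:ℂ)+1))
        * riemannZeta (((t:ℂ)+1) * -(2*(m:ℂ)+1)) = D m := by
      rw [Nat.sub_self, Z, htE.neg_one_pow, one_mul, one_mul]
      congr 1
      rw [← hcastD m]
      push_cast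
      ring
    rw [hlast, add_div, div_self (hD0 m), Finset.sum_div]
    simp only [hgdef, hDdef]
    exact add_comm _ _
  -- limits of error terms
  have hglim : ∀ i ∈ Finset.range t, Tendsto (fun m => g i m) atTop (𝓝 0) := by
    intro i hi
    rw [Finset.mem_range] at hi
    rcases Nat.even_or_odd i with hieven | hiodd
    · -- i even : estimate
      apply squeeze_zero_norm
        (a := fun m => (4 * Real.pi * 5 ^ t) / (((t+1)*(2*m+1) : ℕ) : ℝ))
      · intro m
        set k := 2*m+1 with hk
        set K := (t+1)*k with hK
        set a := (t-i)*k with ha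
        set b := (i+1)*k with hb
        have hkodd : Odd k := odd_two_mul_add_one m
        have hk1 : 1 ≤ k := by omega
        have hab : a + b = K := by
          rw [ha, hb, hK, ← Nat.add_mul]
          congr 1
          omega
        have ha1 : 1 ≤ a := Nat.mul_pos (by omega) hk1
        have hb1 : 1 ≤ b := Nat.mul_pos (by omega) hk1
        have hKpos : (0:ℝ) < (K:ℕ) := by
          have : 0 < K := by omega
          exact_mod_cast this
        -- norm of g
        have hgnorm : ‖g i m‖ = ‖Z (t - i) (-(k:ℂ))‖ * ‖riemannZeta (-((b:ℕ):ℂ))‖ / ‖D m‖ := by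
          rw [hgdef]
          simp only []
          rw [norm_div, norm_mul, norm_mul, norm_pow, norm_neg, norm_one, one_pow, one_mul]
          rw [show (-(2*(m:ℂ)+1)) = -((k:ℕ):ℂ) by rw [hk]; push_cast; ring]
          rw [show (((i:ℂ)+1) * -((k:ℕ):ℂ)) = -((b:ℕ):ℂ) by rw [hb]; push_cast; ring]
        rw [hgnorm, div_le_div_iff₀ (hDpos m) hKpos]
        -- numerator bound
        have hZb := Z_bound (t-i) k hkodd
        have hzb := norm_zeta_neg_le b hb1
        have hX : ‖Z (t - i) (-(k:ℂ))‖ * ‖riemannZeta (-((b:ℕ):ℂ))‖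
            ≤ (5 ^ (t-i) * ((Nat.factorial ((t-i)*k) : ℕ) : ℝ) * ((2 * Real.pi) ^ ((t-i)*k))⁻¹)
              * (4 * ((Nat.factorial b : ℕ) : ℝ) * ((2 * Real.pi) ^ b)⁻¹) := by
          apply mul_le_mul hZb hzb (norm_nonneg _)
          have := Real.two_pi_pos
          positivity
        rw [show (t-i)*k = a from rfl] at hX
        -- key algebra
        have hsplit : ((2 * Real.pi) ^ a)⁻¹ * ((2 * Real.pi) ^ b)⁻¹ = ((2 * Real.pi) ^ K)⁻¹ := by
          rw [← mul_inv, ← pow_add, hab]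
        have hnat : Nat.factorial a * Nat.factorial b * K ≤ Nat.factorial K := by
          have h1 := fact_mul_fact_le a b ha1 hb1
          have h2 : Nat.factorial (a + b - 1) * K ≤ Nat.factorial K := by
            rw [hab]
            rw [mul_comm]
            exact le_of_eq (Nat.mul_factorial_pred (by omega))
          calc Nat.factorial a * Nat.factorial b * K ≤ Nat.factorial (a + b - 1) * K :=
                Nat.mul_le_mul_right _ h1
            _ ≤ Nat.factorial K := h2
        have hmid : (4 * Real.pi * 5 ^ t) * (2 * ((2 * Real.pi) ^ (K+1))⁻¹
            * ((Nat.factorial K : ℕ) : ℝ))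
            = 4 * 5 ^ t * ((Nat.factorial K : ℕ) : ℝ) * ((2 * Real.pi) ^ K)⁻¹ := by
          rw [pow_succ, mul_inv]
          have hπ : (2 * Real.pi) ≠ 0 := Real.two_pi_pos.ne'
          field_simp
        calc ‖Z (t - i) (-(k:ℂ))‖ * ‖riemannZeta (-((b:ℕ):ℂ))‖ * (K:ℝ)
            ≤ ((5 ^ (t-i) * ((Nat.factorial a : ℕ) : ℝ) * ((2 * Real.pi) ^ a)⁻¹)
              * (4 * ((Nat.factorial b : ℕ) : ℝ) * ((2 * Real.pi) ^ b)⁻¹)) * (K:ℝ) :=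
              mul_le_mul_of_nonneg_right hX hKpos.le
          _ = 4 * 5 ^ (t-i) * (((Nat.factorial a : ℕ) : ℝ) * ((Nat.factorial b : ℕ) : ℝ) * (K:ℝ))
              * (((2 * Real.pi) ^ a)⁻¹ * ((2 * Real.pi) ^ b)⁻¹) := by ring
          _ = 4 * 5 ^ (t-i) * (((Nat.factorial a * Nat.factorial b * K : ℕ)) : ℝ)
              * ((2 * Real.pi) ^ K)⁻¹ := by rw [hsplit]; push_cast; ring
          _ ≤ 4 * 5 ^ t * ((Nat.factorial K : ℕ) : ℝ) * ((2 * Real.pi) ^ K)⁻¹ := by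
              have h5 : (5:ℝ) ^ (t-i) ≤ 5 ^ t := pow_le_pow_right₀ (by norm_num) (by omega)
              have hc : (((Nat.factorial a * Nat.factorial b * K : ℕ)) : ℝ)
                  ≤ ((Nat.factorial K : ℕ) : ℝ) := by exact_mod_cast hnat
              have := Real.two_pi_pos
              gcongr
          _ = (4 * Real.pi * 5 ^ t) * (2 * ((2 * Real.pi) ^ (K+1))⁻¹
              * ((Nat.factorial K : ℕ) : ℝ)) := hmid.symm
          _ ≤ (4 * Real.pi * 5 ^ t) * ‖D m‖ := by
              apply mul_le_mul_of_nonneg_left (hDlow m)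
              have := Real.pi_pos
              positivity
      · -- the bound tends to zero
        have h1 : Tendsto (fun m : ℕ => (((t+1)*(2*m+1) : ℕ) : ℝ)) atTop atTop := by
          apply tendsto_natCast_atTop_atTop.comp
          apply tendsto_atTop_mono (fun m => ?_) tendsto_id
          simp only [id]
          nlinarith [Nat.zero_le t]
        have h2 := (tendsto_inv_atTop_zero.comp h1).const_mul (4 * Real.pi * 5 ^ t)
        simp only [mul_zero] at h2
        refine h2.congr fun m => ?_
        simp [Function.comp, div_eq_mul_inv]
    · -- i odd : terms vanish
      have hz : ∀ m : ℕ, g i m = 0 := by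
        intro m
        rw [hgdef]
        simp only []
        rw [show (((i:ℂ)+1) * -(2*(m:ℂ)+1)) = -((((i+1)*(2*m+1) : ℕ)):ℂ) by push_cast; ring]
        rw [zeta_neg_even _ (hiodd.add_one.mul_right _) (by positivity)]
        simp
      simp only [hz]
      exact tendsto_const_nhds
  -- conclude
  have hsum : Tendsto (fun m => ∑ i ∈ Finset.range t, g i m) atTop (𝓝 0) := by
    have := tendsto_finset_sum (Finset.range t) hglim
    simpa using this
  have hfin := hsum.const_add (1:ℂ)
  rw [add_zero] at hfin
  exact Tendsto.congr (fun m => (hfun m).symm) hfin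
end
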